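/- arXiv:1006.5693 — 7 statements merged into one kernel-verified Lean document; each statement's English description precedes it below -/
import Mathlib

section
/- The α-Lüroth map L_α preserves Lebesgue measure: for every Borel set B ⊆ [0,1], λ(L_α^{-1}(B)) = λ(B). -/
open MeasureTheory Set Filter Topology
open scoped Pointwise

/-- The α-Lüroth map preserves Lebesgue measure on `[0,1]`. -/
theorem stmt4 (a t : ℕ → ℝ) (L : ℝ → ℝ)
    (hpos : ∀ n ≥ 1, 0 < a n)
    (hsummable : Summable (fun n => a (n + 1)))
    (hsum : ∑' n, a (n + 1) = 1)
    (ht : ∀ n, t n = ∑' k, a (n + k))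
    (hL0 : L 0 = 0)
    (hL : ∀ n ≥ 1, ∀ x ∈ Set.Ioc (t (n + 1)) (t n), L x = (t n - x) / a n) :
    ∀ B : Set ℝ, MeasurableSet B → B ⊆ Set.Icc 0 1 →
      MeasureTheory.volume (Set.Icc (0 : ℝ) 1 ∩ L ⁻¹' B) = MeasureTheory.volume B := by
  intro B hB hBsub
  -- tail summability
  have hsumtail : ∀ n : ℕ, Summable (fun k => a (n + 1 + k)) := by
    intro n
    have h1 : Summable (fun k => a (k + n + 1)) := by
      have := (summable_nat_add_iff (f := fun m => a (m + 1)) n).2 hsummable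
      simpa using this
    have h2 : (fun k => a (n + 1 + k)) = (fun k => a (k + n + 1)) := by
      funext k; congr 1; omega
    rw [h2]; exact h1
  -- t (n+1) ≥ 0
  have htnonneg : ∀ n : ℕ, 0 ≤ t (n + 1) := by
    intro n
    rw [ht (n + 1)]
    exact tsum_nonneg fun k => (hpos (n + 1 + k) (by omega)).le
  -- step: t n = a n + t (n+1) for n ≥ 1
  have hstep : ∀ n ≥ 1, t n = a n + t (n + 1) := by
    intro n hn
    obtain ⟨m, rfl⟩ : ∃ m, n = m + 1 := ⟨n - 1, by omega⟩
    rw [ht (m + 1), ht (m + 2)]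
    have hS : Summable (fun k => a (m + 1 + k)) := hsumtail m
    rw [Summable.tsum_eq_zero_add hS]
    congr 1
    all_goals first
      | rfl
      | (apply tsum_congr; intro k; congr 1; omega)
  -- t 1 = 1
  have ht1 : t 1 = 1 := by
    rw [ht 1, ← hsum]
    apply tsum_congr; intro k; congr 1; omega
  -- t m ≤ 1 for m ≥ 1
  have hle1 : ∀ m ≥ 1, t m ≤ 1 := by
    intro m hm
    induction m with
    | zero => omega
    | succ k ih =>
      rcases Nat.eq_or_lt_of_le hm with h | h
      · rw [← h, ht1]
      · have hk : 1 ≤ k := by omega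
        have := hstep k hk
        have hak := hpos k hk
        have := ih hk
        linarith [hstep k hk, hpos k hk, ih hk]
  -- antitone on indices ≥ 1
  have hanti : ∀ i j : ℕ, 1 ≤ i → i ≤ j → t j ≤ t i := by
    intro i j hi hij
    induction j with
    | zero => omega
    | succ k ih =>
      rcases Nat.eq_or_lt_of_le hij with h | h
      · rw [h]
      · have hk : i ≤ k := by omega
        have h1 : 1 ≤ k := by omega
        have := hstep k h1
        have := hpos k h1
        have := ih hk
        linarith
  -- t (n+1) → 0
  have htend : Tendsto (fun n => t (n + 1)) atTop (𝓝 0) := by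
    have h := tendsto_sum_nat_add (fun j => a (j + 1))
    have heq : (fun n => t (n + 1)) = fun i => ∑' k, a (k + i + 1) := by
      funext n
      rw [ht (n + 1)]
      apply tsum_congr; intro k; congr 1; omega
    rw [heq]; exact h
  set B' : Set ℝ := B ∩ Ico 0 1 with hB'def
  have hB'meas : MeasurableSet B' := hB.inter measurableSet_Ico
  have hvolB' : volume B' = volume B := by
    apply le_antisymm (measure_mono inter_subset_left)
    have hsub : B ⊆ B' ∪ {1} := by
      intro x hx
      rcases eq_or_lt_of_le (hBsub hx).2 with h | h
      · exact Or.inr (by simp [h])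
      · exact Or.inl ⟨hx, (hBsub hx).1, h⟩
    calc volume B ≤ volume (B' ∪ {1}) := measure_mono hsub
      _ ≤ volume B' + volume ({1} : Set ℝ) := measure_union_le _ _
      _ = volume B' := by simp
  set S : ℕ → Set ℝ := fun n => Ioc (t (n + 1)) (t n) ∩ L ⁻¹' B with hSdef
  -- S n as an affine image of B'
  have hSimg : ∀ n ≥ 1, S n = (fun y => t n - a n * y) '' B' := by
    intro n hn
    have han := hpos n hn
    have hstepn := hstep n hn
    ext x
    constructor
    · rintro ⟨hx, hxB⟩
      rw [mem_preimage, hL n hn x hx] at hxB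
      refine ⟨(t n - x) / a n, ⟨hxB, ?_, ?_⟩, ?_⟩
      · exact div_nonneg (by linarith [hx.2]) han.le
      · rw [div_lt_one han]; linarith [hx.1]
      · field_simp; ring
    · rintro ⟨y, ⟨hyB, hy0, hy1⟩, rfl⟩
      have hx1 : t (n + 1) < t n - a n * y := by nlinarith
      have hx2 : t n - a n * y ≤ t n := by nlinarith
      refine ⟨⟨hx1, hx2⟩, ?_⟩
      rw [mem_preimage, hL n hn _ ⟨hx1, hx2⟩]
      have : (t n - (t n - a n * y)) / a n = y := by field_simp; ring
      rw [this]; exact hyB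
  -- measurability of S n (for n ≥ 1)
  have hSmeas : ∀ n ≥ 1, MeasurableSet (S n) := by
    intro n hn
    have : S n = Ioc (t (n + 1)) (t n) ∩ (fun x => (t n - x) / a n) ⁻¹' B := by
      ext x
      simp only [hSdef, mem_inter_iff, mem_preimage, and_congr_right_iff]
      intro hx
      rw [hL n hn x hx]
    rw [this]
    exact measurableSet_Ioc.inter
      (((continuous_const.sub continuous_id).div_const _).measurable hB)
  -- volume of S n
  have hSvol : ∀ n ≥ 1, volume (S n) = ENNReal.ofReal (a n) * volume B' := by
    intro n hn
    have han := hpos n hn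
    rw [hSimg n hn]
    have himg : (fun y => t n - a n * y) '' B'
        = t n +ᵥ ((-(a n)) • B') := by
      rw [← Set.image_smul, ← Set.image_vadd, ← Set.image_comp]
      apply congrArg (· '' B')
      funext y
      simp [Function.comp]
      ring
    rw [himg, measure_vadd, Measure.addHaar_smul]
    congr 1
    simp [abs_of_pos han]
  -- the union
  set U : Set ℝ := ⋃ n, S (n + 1) with hUdef
  have hUmeas : MeasurableSet U := MeasurableSet.iUnion fun n => hSmeas (n + 1) (by omega)
  have hdisj : Pairwise (Function.onFun Disjoint fun n => S (n + 1)) := by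
    have key : ∀ i j : ℕ, i < j → Disjoint (S (i + 1)) (S (j + 1)) := by
      intro i j h
      refine Set.disjoint_left.2 ?_
      rintro x ⟨hx1, -⟩ ⟨hx2, -⟩
      have hcmp : t (j + 1) ≤ t (i + 2) := hanti (i + 2) (j + 1) (by omega) (by omega)
      have h3 := hx2.2  -- x ≤ t (j+1)
      have h4 := hx1.1  -- t (i+2) < x
      linarith
    intro i j hij
    rcases hij.lt_or_gt with h | h
    · exact key i j h
    · exact (key j i h).symm
  have hUC : U ⊆ Icc (0:ℝ) 1 ∩ L ⁻¹' B := by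
    intro x hx
    obtain ⟨n, hxn⟩ := mem_iUnion.1 hx
    obtain ⟨⟨hx1, hx2⟩, hx3⟩ := hxn
    exact ⟨⟨le_of_lt (lt_of_le_of_lt (htnonneg (n + 1)) hx1),
      le_trans hx2 (hle1 (n + 1) (by omega))⟩, hx3⟩
  have hCU : Icc (0:ℝ) 1 ∩ L ⁻¹' B ⊆ {(0:ℝ)} ∪ U := by
    rintro x ⟨⟨hx0, hx1⟩, hxB⟩
    rcases eq_or_lt_of_le hx0 with h | h
    · exact Or.inl (by simp [← h])
    · right
      -- find minimal m with t (m+1) < x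
      have hex : ∃ m, t (m + 1) < x := (htend.eventually (gt_mem_nhds h)).exists
      classical
      set m := Nat.find hex with hmdef
      have hm : t (m + 1) < x := Nat.find_spec hex
      have hm1 : 1 ≤ m := by
        by_contra hcon
        have : m = 0 := by omega
        rw [this] at hm
        rw [ht1] at hm
        linarith
      have hxle : x ≤ t m := by
        have := Nat.find_min hex (m := m - 1) (by omega)
        have heq : m - 1 + 1 = m := by omega
        rw [heq] at this
        linarith [not_lt.1 this]
      refine mem_iUnion.2 ⟨m - 1, ?_⟩
      have heq : m - 1 + 1 = m := by omega
      rw [heq]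
      exact ⟨⟨hm, hxle⟩, hxB⟩
  -- volume of the target equals volume U
  have hCvol : volume (Icc (0:ℝ) 1 ∩ L ⁻¹' B) = volume U := by
    apply le_antisymm
    · calc volume (Icc (0:ℝ) 1 ∩ L ⁻¹' B) ≤ volume ({(0:ℝ)} ∪ U) := measure_mono hCU
        _ ≤ volume ({(0:ℝ)} : Set ℝ) + volume U := measure_union_le _ _
        _ = volume U := by simp
    · exact measure_mono hUC
  rw [hCvol, hUdef, measure_iUnion hdisj (fun n => hSmeas (n + 1) (by omega))]
  have : ∀ n : ℕ, volume (S (n + 1)) = ENNReal.ofReal (a (n + 1)) * volume B' :=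
    fun n => hSvol (n + 1) (by omega)
  simp_rw [this]
  rw [ENNReal.tsum_mul_right, ← ENNReal.ofReal_tsum_of_nonneg
    (fun n => (hpos (n + 1) (by omega)).le) hsummable, hsum]
  simp [hvolB']
end

section
/- The α-Lüroth map is exact with respect to Lebesgue measure: for every Borel set B belonging to ⋂_{n∈ℕ} L_α^{-n}(𝓑), either λ(B) = 0 or λ([0,1] \ B) = 0. -/
open MeasureTheory Set Filter

namespace LurothAux

def cyl (t : ℕ → ℝ) (L : ℝ → ℝ) : List ℕ → Set ℝ
  | [] => Set.Icc 0 1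
  | n :: w => Set.Ioc (t (n+1)) (t n) ∩ L ⁻¹' (cyl t L w)

def bad (a t : ℕ → ℝ) : ℕ → Set ℝ
  | 0 => ∅
  | k+1 => (t '' {n | 1 ≤ n}) ∪ ⋃ n : ℕ, (fun y => t (n+1) - a (n+1) * y) '' (bad a t k)

def ok (w : List ℕ) : Prop := ∀ n ∈ w, 1 ≤ n

theorem summable_shift (a : ℕ → ℝ) (hsummable : Summable (fun n => a (n + 1)))
    (n : ℕ) (hn : 1 ≤ n) : Summable (fun k => a (n + k)) := by
  have h2 := (summable_nat_add_iff (f := fun j => a (j+1)) (n-1)).2 hsummable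
  have : (fun k => a (n + k)) = fun k => a ((k + (n-1)) + 1) := funext fun k => by congr 1; omega
  rw [this]; exact h2

theorem t_succ (a t : ℕ → ℝ) (hsummable : Summable (fun n => a (n + 1)))
    (ht : ∀ n, t n = ∑' k, a (n + k)) (n : ℕ) (hn : 1 ≤ n) : t n = a n + t (n+1) := by
  have hs := summable_shift a hsummable n hn
  rw [ht n, ht (n+1), Summable.tsum_eq_zero_add hs]
  congr 1
  exact tsum_congr fun k => by congr 1; omega

theorem t_nonneg (a t : ℕ → ℝ) (hpos : ∀ n ≥ 1, 0 < a n)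
    (ht : ∀ n, t n = ∑' k, a (n + k)) (n : ℕ) (hn : 1 ≤ n) : 0 ≤ t n := by
  rw [ht n]; exact tsum_nonneg fun k => (hpos (n+k) (by omega)).le

theorem t_one (a t : ℕ → ℝ) (hsum : ∑' n, a (n + 1) = 1)
    (ht : ∀ n, t n = ∑' k, a (n + k)) : t 1 = 1 := by
  rw [ht 1, ← hsum]; exact tsum_congr fun k => by congr 1; omega

theorem t_anti (a t : ℕ → ℝ) (hpos : ∀ n ≥ 1, 0 < a n)
    (hsummable : Summable (fun n => a (n + 1))) (ht : ∀ n, t n = ∑' k, a (n + k))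
    (i j : ℕ) (hi : 1 ≤ i) (hij : i ≤ j) : t j ≤ t i := by
  induction j, hij using Nat.le_induction with
  | base => exact le_rfl
  | succ j hj ihj =>
      have h1 : t (j+1) ≤ t j := by
        have := t_succ a t hsummable ht j (by omega)
        have := hpos j (by omega)
        linarith
      exact h1.trans ihj

theorem t_le_one (a t : ℕ → ℝ) (hpos : ∀ n ≥ 1, 0 < a n)
    (hsummable : Summable (fun n => a (n + 1))) (hsum : ∑' n, a (n + 1) = 1)
    (ht : ∀ n, t n = ∑' k, a (n + k)) (n : ℕ) (hn : 1 ≤ n) : t n ≤ 1 := by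
  rw [← t_one a t hsum ht]; exact t_anti a t hpos hsummable ht 1 n le_rfl hn

theorem exists_idx (a t : ℕ → ℝ) (hpos : ∀ n ≥ 1, 0 < a n)
    (hsummable : Summable (fun n => a (n + 1))) (hsum : ∑' n, a (n + 1) = 1)
    (ht : ∀ n, t n = ∑' k, a (n + k)) (x : ℝ) (hx0 : 0 < x) (hx1 : x ≤ 1) :
    ∃ n, 1 ≤ n ∧ t (n+1) < x ∧ x ≤ t n := by
  have htail : Tendsto (fun m => t (m+1)) atTop (nhds 0) := by
    have h1 := tendsto_sum_nat_add (fun j => a (j+1))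
    have h2 : (fun m => t (m+1)) = fun i => ∑' k, a ((k + i) + 1) :=
      funext fun m => by rw [ht]; exact tsum_congr fun k => by congr 1; omega
    rw [h2]; exact h1
  have hev : ∃ m, t (m+1) < x := (htail.eventually_lt_const hx0).exists
  classical
  let n := Nat.find hev
  have hspec : t (n+1) < x := Nat.find_spec hev
  have hn1 : 1 ≤ n := by
    by_contra h
    have hn0 : n = 0 := by omega
    have := hspec
    rw [hn0] at this
    rw [t_one a t hsum ht] at this
    linarith
  refine ⟨n, hn1, hspec, ?_⟩
  have hmin : ¬ t ((n-1)+1) < x := Nat.find_min hev (by omega)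
  have : n - 1 + 1 = n := by omega
  rw [this] at hmin
  linarith

theorem pair_le (a : ℕ → ℝ) (hpos : ∀ n ≥ 1, 0 < a n)
    (hsummable : Summable (fun n => a (n + 1))) (hsum : ∑' n, a (n + 1) = 1)
    (i j : ℕ) (hi : 1 ≤ i) (hj : 1 ≤ j) (hij : i ≠ j) : a i + a j ≤ 1 := by
  have hne : i - 1 ≠ j - 1 := by omega
  have hsumle := Summable.sum_le_tsum ({i-1, j-1} : Finset ℕ)
    (fun k _ => (hpos (k+1) (by omega)).le) hsummable
  rw [Finset.sum_pair hne] at hsumle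
  have h1 : i - 1 + 1 = i := by omega
  have h2 : j - 1 + 1 = j := by omega
  rw [h1, h2, hsum] at hsumle
  exact hsumle

theorem a_le_c0 (a : ℕ → ℝ) (hpos : ∀ n ≥ 1, 0 < a n)
    (hsummable : Summable (fun n => a (n + 1))) (hsum : ∑' n, a (n + 1) = 1)
    (n : ℕ) (hn : 1 ≤ n) : a n ≤ max (1 - a 1) (1 - a 2) := by
  by_cases h : n = 1
  · subst h
    have := pair_le a hpos hsummable hsum 1 2 le_rfl (by omega) (by omega)
    exact le_max_of_le_right (by linarith)
  · have := pair_le a hpos hsummable hsum n 1 hn le_rfl (by omega)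
    exact le_max_of_le_left (by linarith)

theorem affine_vol (d c : ℝ) (hc : 0 < c) (S : Set ℝ) :
    volume ((fun x => (d - x)/c) ⁻¹' S) = ENNReal.ofReal c * volume S := by
  have hc' : c ≠ 0 := hc.ne'
  have h : (fun x : ℝ => (d - x)/c) = (fun y : ℝ => y * c⁻¹) ∘ (fun y : ℝ => -y) ∘ (fun x : ℝ => -d + x) := by
    funext x; simp only [Function.comp_apply]; ring
  rw [h, Set.preimage_comp, Set.preimage_comp, MeasureTheory.measure_preimage_add]
  have hneg : ((fun y : ℝ => -y) ⁻¹' ((fun y : ℝ => y * c⁻¹) ⁻¹' S)) = -((fun y : ℝ => y * c⁻¹) ⁻¹' S) := rfl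
  rw [hneg, MeasureTheory.Measure.measure_neg, Real.volume_preimage_mul_right (inv_ne_zero hc')]
  rw [inv_inv, abs_of_pos hc]

theorem volIco (X : Set ℝ) (hX : X ⊆ Set.Icc 0 1) :
    volume (X ∩ Set.Ico 0 1) = volume X := by
  refine le_antisymm (measure_mono inter_subset_left) ?_
  calc volume X ≤ volume ((X ∩ Set.Ico 0 1) ∪ {1}) := by
        apply measure_mono
        intro x hx
        rcases lt_or_eq_of_le (hX hx).2 with h | h
        · exact Or.inl ⟨hx, (hX hx).1, h⟩
        · exact Or.inr (by simp [h])
    _ ≤ volume (X ∩ Set.Ico 0 1) + volume ({1} : Set ℝ) := measure_union_le _ _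
    _ = volume (X ∩ Set.Ico 0 1) := by simp

end LurothAux
namespace LurothAux
section
variable (a t : ℕ → ℝ) (L : ℝ → ℝ)

theorem fiber (hpos : ∀ n ≥ 1, 0 < a n) (hsummable : Summable (fun n => a (n + 1)))
    (ht : ∀ n, t n = ∑' k, a (n + k))
    (hL : ∀ n ≥ 1, ∀ x ∈ Set.Ioc (t (n + 1)) (t n), L x = (t n - x) / a n)
    (n : ℕ) (hn : 1 ≤ n) (S : Set ℝ) :
    Set.Ioc (t (n+1)) (t n) ∩ L ⁻¹' S = (fun x => (t n - x)/a n) ⁻¹' (S ∩ Set.Ico 0 1) := by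
  have ha := hpos n hn
  have hts := t_succ a t hsummable ht n hn
  ext x
  simp only [Set.mem_inter_iff, Set.mem_preimage, Set.mem_Ioc, Set.mem_Ico]
  constructor
  · rintro ⟨⟨hx1, hx2⟩, hS⟩
    have hLx := hL n hn x ⟨hx1, hx2⟩
    refine ⟨by rw [← hLx]; exact hS, div_nonneg (by linarith) ha.le, ?_⟩
    rw [div_lt_one ha]; linarith
  · rintro ⟨hS, h0, h1⟩
    rw [div_lt_one ha] at h1
    have h0' : x ≤ t n := by
      have := (div_nonneg_iff.mp h0)
      rcases this with ⟨h, _⟩ | ⟨_, h⟩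
      · linarith
      · linarith
    have hx : x ∈ Set.Ioc (t (n+1)) (t n) := ⟨by linarith, h0'⟩
    exact ⟨hx, by rw [hL n hn x hx]; exact hS⟩

theorem gIoc (hpos : ∀ n ≥ 1, 0 < a n) (hsummable : Summable (fun n => a (n + 1)))
    (ht : ∀ n, t n = ∑' k, a (n + k))
    (hL : ∀ n ≥ 1, ∀ x ∈ Set.Ioc (t (n + 1)) (t n), L x = (t n - x) / a n)
    (n : ℕ) (hn : 1 ≤ n) :
    (fun x => (t n - x)/a n) ⁻¹' (Set.Ico 0 1) = Set.Ioc (t (n+1)) (t n) := by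
  have := fiber a t L hpos hsummable ht hL n hn Set.univ
  simpa using this.symm

theorem Ioc_disj (hpos : ∀ n ≥ 1, 0 < a n) (hsummable : Summable (fun n => a (n + 1)))
    (ht : ∀ n, t n = ∑' k, a (n + k)) (n m : ℕ) (hn : 1 ≤ n) (hm : 1 ≤ m) (hnm : n ≠ m) :
    Disjoint (Set.Ioc (t (n+1)) (t n)) (Set.Ioc (t (m+1)) (t m)) := by
  have key : ∀ i j : ℕ, 1 ≤ i → i < j →
      Disjoint (Set.Ioc (t (i+1)) (t i)) (Set.Ioc (t (j+1)) (t j)) := by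
    intro i j hi hij
    rw [Set.Ioc_disjoint_Ioc]
    have : t j ≤ t (i+1) := t_anti a t hpos hsummable ht (i+1) j (by omega) (by omega)
    exact le_trans (min_le_right _ _) (le_trans this (le_max_left _ _))
  rcases lt_or_gt_of_ne hnm with h | h
  · exact key n m hn h
  · exact (key m n hm h).symm

theorem cyl_subset (hpos : ∀ n ≥ 1, 0 < a n) (hsummable : Summable (fun n => a (n + 1)))
    (hsum : ∑' n, a (n + 1) = 1) (ht : ∀ n, t n = ∑' k, a (n + k))
    (w : List ℕ) (hw : ok w) : cyl t L w ⊆ Set.Icc 0 1 := by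
  cases w with
  | nil => exact subset_rfl
  | cons n w =>
      intro x hx
      have hn : 1 ≤ n := hw n (by simp)
      have hx' : x ∈ Set.Ioc (t (n+1)) (t n) := hx.1
      have h0 : 0 ≤ t (n+1) := t_nonneg a t hpos ht (n+1) (by omega)
      have h1 : t n ≤ 1 := t_le_one a t hpos hsummable hsum ht n hn
      exact ⟨by linarith [hx'.1], le_trans hx'.2 h1⟩

theorem cyl_meas (hpos : ∀ n ≥ 1, 0 < a n) (hsummable : Summable (fun n => a (n + 1)))
    (ht : ∀ n, t n = ∑' k, a (n + k))
    (hL : ∀ n ≥ 1, ∀ x ∈ Set.Ioc (t (n + 1)) (t n), L x = (t n - x) / a n)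
    (w : List ℕ) (hw : ok w) : MeasurableSet (cyl t L w) := by
  induction w with
  | nil => exact measurableSet_Icc
  | cons n w ih =>
      have hn : 1 ≤ n := hw n (by simp)
      have hok : ok w := fun m hm => hw m (by simp [hm])
      rw [show cyl t L (n :: w) = Set.Ioc (t (n+1)) (t n) ∩ L ⁻¹' (cyl t L w) from rfl,
        fiber a t L hpos hsummable ht hL n hn]
      exact ((measurable_const.sub measurable_id).div_const _)
        ((ih hok).inter measurableSet_Ico)

theorem cyl_key (hpos : ∀ n ≥ 1, 0 < a n) (hsummable : Summable (fun n => a (n + 1)))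
    (hsum : ∑' n, a (n + 1) = 1) (ht : ∀ n, t n = ∑' k, a (n + k))
    (hL : ∀ n ≥ 1, ∀ x ∈ Set.Ioc (t (n + 1)) (t n), L x = (t n - x) / a n)
    (w : List ℕ) (hw : ok w) (S : Set ℝ) :
    volume (cyl t L w ∩ (L^[w.length]) ⁻¹' S) =
      volume (cyl t L w) * volume (S ∩ Set.Ico 0 1) := by
  induction w generalizing S with
  | nil =>
      simp only [cyl, List.length_nil, Function.iterate_zero, Set.preimage_id]
      rw [show volume (Set.Icc (0:ℝ) 1) = 1 by simp, one_mul,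
        ← volIco (Set.Icc 0 1 ∩ S) Set.inter_subset_left,
        Set.inter_comm (Set.Icc 0 1) S, Set.inter_assoc,
        Set.inter_eq_self_of_subset_right Set.Ico_subset_Icc_self]
  | cons n w ih =>
      have hn : 1 ≤ n := hw n (by simp)
      have hok : ok w := fun m hm => hw m (by simp [hm])
      have ha := hpos n hn
      have step1 : cyl t L (n :: w) ∩ (L^[(n :: w).length]) ⁻¹' S =
          Set.Ioc (t (n+1)) (t n) ∩ L ⁻¹' (cyl t L w ∩ (L^[w.length]) ⁻¹' S) := by
        show (Set.Ioc (t (n+1)) (t n) ∩ L ⁻¹' (cyl t L w)) ∩ (L^[w.length + 1]) ⁻¹' S = _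
        rw [Function.iterate_succ, Set.preimage_comp, Set.inter_assoc, ← Set.preimage_inter]
      have hXsub : cyl t L w ∩ (L^[w.length]) ⁻¹' S ⊆ Set.Icc 0 1 :=
        Set.inter_subset_left.trans (cyl_subset a t L hpos hsummable hsum ht w hok)
      rw [step1, fiber a t L hpos hsummable ht hL n hn, affine_vol _ _ ha,
        volIco _ hXsub, ih hok S,
        show cyl t L (n :: w) = Set.Ioc (t (n+1)) (t n) ∩ L ⁻¹' (cyl t L w) from rfl,
        fiber a t L hpos hsummable ht hL n hn, affine_vol _ _ ha,
        volIco _ (cyl_subset a t L hpos hsummable hsum ht w hok), mul_assoc]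

theorem iter_key (hpos : ∀ n ≥ 1, 0 < a n) (hsummable : Summable (fun n => a (n + 1)))
    (hsum : ∑' n, a (n + 1) = 1) (ht : ∀ n, t n = ∑' k, a (n + k))
    (hL : ∀ n ≥ 1, ∀ x ∈ Set.Ioc (t (n + 1)) (t n), L x = (t n - x) / a n)
    (k : ℕ) (S : Set ℝ) (hS : MeasurableSet S) :
    MeasurableSet (Set.Icc 0 1 ∩ (L^[k]) ⁻¹' S) ∧
      volume (Set.Icc 0 1 ∩ (L^[k]) ⁻¹' S) = volume (S ∩ Set.Ico 0 1) := by
  induction k generalizing S hS with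
  | zero =>
      simp only [Function.iterate_zero, Set.preimage_id]
      refine ⟨measurableSet_Icc.inter hS, ?_⟩
      rw [← volIco (Set.Icc 0 1 ∩ S) Set.inter_subset_left,
        Set.inter_comm (Set.Icc 0 1) S, Set.inter_assoc,
        Set.inter_eq_self_of_subset_right Set.Ico_subset_Icc_self]
  | succ k ih =>
      obtain ⟨hXm, hXv⟩ := ih S hS
      have hTI : (L^[k]) ⁻¹' S ∩ Set.Ico 0 1 = (Set.Icc 0 1 ∩ (L^[k]) ⁻¹' S) ∩ Set.Ico 0 1 := by
        rw [Set.inter_comm (Set.Icc 0 1), Set.inter_assoc,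
          Set.inter_eq_self_of_subset_right Set.Ico_subset_Icc_self]
      have hTIm : MeasurableSet ((L^[k]) ⁻¹' S ∩ Set.Ico 0 1) := by
        rw [hTI]; exact hXm.inter measurableSet_Ico
      have hTIv : volume ((L^[k]) ⁻¹' S ∩ Set.Ico 0 1) = volume (S ∩ Set.Ico 0 1) := by
        rw [hTI, volIco _ Set.inter_subset_left, hXv]
      have hdec : Set.Icc 0 1 ∩ (L^[k+1]) ⁻¹' S =
          ({0} ∩ L ⁻¹' ((L^[k]) ⁻¹' S)) ∪
            ⋃ m : ℕ, (fun x => (t (m+1) - x)/a (m+1)) ⁻¹' ((L^[k]) ⁻¹' S ∩ Set.Ico 0 1) := by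
        rw [Function.iterate_succ, Set.preimage_comp]
        ext x
        constructor
        · rintro ⟨hx, hLx⟩
          rcases eq_or_lt_of_le hx.1 with h0 | h0
          · exact Or.inl ⟨by simp [← h0], hLx⟩
          · obtain ⟨n, hn1, hlt, hle⟩ := exists_idx a t hpos hsummable hsum ht x h0 hx.2
            refine Or.inr (Set.mem_iUnion.2 ⟨n-1, ?_⟩)
            have hh : n - 1 + 1 = n := by omega
            rw [hh, ← fiber a t L hpos hsummable ht hL n hn1]
            exact ⟨⟨hlt, hle⟩, hLx⟩
        · rintro (⟨h0, hLx⟩ | hx)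
          · have hx0 : x = 0 := h0
            subst hx0
            exact ⟨⟨le_rfl, zero_le_one⟩, hLx⟩
          · rcases Set.mem_iUnion.1 hx with ⟨m, hm⟩
            rw [← fiber a t L hpos hsummable ht hL (m+1) (by omega)] at hm
            have h0 : 0 ≤ t (m+2) := t_nonneg a t hpos ht (m+2) (by omega)
            have h1 : t (m+1) ≤ 1 := t_le_one a t hpos hsummable hsum ht (m+1) (by omega)
            exact ⟨⟨by linarith [hm.1.1], le_trans hm.1.2 h1⟩, hm.2⟩
      have hz : ({0} ∩ L ⁻¹' ((L^[k]) ⁻¹' S)) ⊆ {0} := Set.inter_subset_left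
      have hzm : MeasurableSet ({0} ∩ L ⁻¹' ((L^[k]) ⁻¹' S) : Set ℝ) := by
        rcases Set.subset_singleton_iff_eq.1 hz with h | h
        · rw [h]; exact MeasurableSet.empty
        · rw [h]; exact measurableSet_singleton 0
      have hum : ∀ m : ℕ, MeasurableSet
          ((fun x => (t (m+1) - x)/a (m+1)) ⁻¹' ((L^[k]) ⁻¹' S ∩ Set.Ico 0 1)) := fun m =>
        ((measurable_const.sub measurable_id).div_const _) hTIm
      have hdisj : Pairwise (Function.onFun Disjoint
          (fun m : ℕ => (fun x => (t (m+1) - x)/a (m+1)) ⁻¹' ((L^[k]) ⁻¹' S ∩ Set.Ico 0 1))) := by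
        intro i j hij
        have hsubi : (fun x => (t (i+1) - x)/a (i+1)) ⁻¹' ((L^[k]) ⁻¹' S ∩ Set.Ico 0 1) ⊆
            Set.Ioc (t (i+2)) (t (i+1)) := by
          rw [← gIoc a t L hpos hsummable ht hL (i+1) (by omega)]
          exact Set.preimage_mono Set.inter_subset_right
        have hsubj : (fun x => (t (j+1) - x)/a (j+1)) ⁻¹' ((L^[k]) ⁻¹' S ∩ Set.Ico 0 1) ⊆
            Set.Ioc (t (j+2)) (t (j+1)) := by
          rw [← gIoc a t L hpos hsummable ht hL (j+1) (by omega)]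
          exact Set.preimage_mono Set.inter_subset_right
        exact Disjoint.mono hsubi hsubj
          (Ioc_disj a t hpos hsummable ht (i+1) (j+1) (by omega) (by omega) (by omega))
      constructor
      · rw [hdec]; exact hzm.union (MeasurableSet.iUnion hum)
      · rw [hdec]
        have hnull : volume ({0} ∩ L ⁻¹' ((L^[k]) ⁻¹' S) : Set ℝ) = 0 :=
          le_antisymm (le_trans (measure_mono hz) (by simp)) (zero_le)
        have hcup : volume (({0} ∩ L ⁻¹' ((L^[k]) ⁻¹' S)) ∪
            ⋃ m : ℕ, (fun x => (t (m+1) - x)/a (m+1)) ⁻¹' ((L^[k]) ⁻¹' S ∩ Set.Ico 0 1)) =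
            volume (⋃ m : ℕ, (fun x => (t (m+1) - x)/a (m+1)) ⁻¹' ((L^[k]) ⁻¹' S ∩ Set.Ico 0 1)) := by
          refine le_antisymm (le_trans (measure_union_le _ _) ?_) (measure_mono Set.subset_union_right)
          rw [hnull, zero_add]
        rw [hcup, measure_iUnion hdisj hum]
        have heach : ∀ m : ℕ, volume ((fun x => (t (m+1) - x)/a (m+1)) ⁻¹' ((L^[k]) ⁻¹' S ∩ Set.Ico 0 1)) =
            ENNReal.ofReal (a (m+1)) * volume (S ∩ Set.Ico 0 1) := fun m => by
          rw [affine_vol _ _ (hpos (m+1) (by omega)), hTIv]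
        rw [tsum_congr heach, ENNReal.tsum_mul_right,
          ← ENNReal.ofReal_tsum_of_nonneg (fun m => (hpos (m+1) (by omega)).le) hsummable,
          hsum, ENNReal.ofReal_one, one_mul]

theorem cyl_disj (hpos : ∀ n ≥ 1, 0 < a n) (hsummable : Summable (fun n => a (n + 1)))
    (ht : ∀ n, t n = ∑' k, a (n + k)) :
    ∀ w u : List ℕ, ok w → ok u → w.length = u.length → w ≠ u →
      cyl t L w ∩ cyl t L u = ∅ := by
  intro w
  induction w with
  | nil =>
      intro u _ _ hlen hne
      cases u with
      | nil => exact absurd rfl hne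
      | cons m u => simp at hlen
  | cons n w ih =>
      intro u hokw hoku hlen hne
      cases u with
      | nil => simp at hlen
      | cons m u =>
          by_cases hnm : n = m
          · subst hnm
            have hwu : w ≠ u := fun h => hne (by rw [h])
            have hlen' : w.length = u.length := by simpa using hlen
            have h := ih u (fun i hi => hokw i (by simp [hi])) (fun i hi => hoku i (by simp [hi])) hlen' hwu
            ext x
            simp only [Set.mem_inter_iff, Set.mem_empty_iff_false, iff_false]
            rintro ⟨⟨_, hx1⟩, ⟨_, hx2⟩⟩
            have : L x ∈ cyl t L w ∩ cyl t L u := ⟨hx1, hx2⟩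
            rw [h] at this
            exact this
          · have hd := Ioc_disj a t hpos hsummable ht n m (hokw n (by simp)) (hoku m (by simp)) hnm
            have : cyl t L (n :: w) ∩ cyl t L (m :: u) ⊆
                Set.Ioc (t (n+1)) (t n) ∩ Set.Ioc (t (m+1)) (t m) :=
              Set.inter_subset_inter Set.inter_subset_left Set.inter_subset_left
            rw [Set.disjoint_iff_inter_eq_empty.1 hd] at this
            exact Set.subset_empty_iff.1 this

theorem cyl_take (hpos : ∀ n ≥ 1, 0 < a n) (hsummable : Summable (fun n => a (n + 1)))
    (hsum : ∑' n, a (n + 1) = 1) (ht : ∀ n, t n = ∑' k, a (n + k)) :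
    ∀ (u : List ℕ) (k : ℕ), ok u → cyl t L u ⊆ cyl t L (u.take k) := by
  intro u
  induction u with
  | nil => intro k _; simp [List.take_nil]
  | cons n u ih =>
      intro k hok
      cases k with
      | zero => exact cyl_subset a t L hpos hsummable hsum ht (n :: u) hok
      | succ k =>
          rw [List.take_succ_cons]
          exact Set.inter_subset_inter subset_rfl
            (Set.preimage_mono (ih k (fun i hi => hok i (by simp [hi]))))

theorem cyl_diam (hpos : ∀ n ≥ 1, 0 < a n) (hsummable : Summable (fun n => a (n + 1)))
    (hsum : ∑' n, a (n + 1) = 1) (ht : ∀ n, t n = ∑' k, a (n + k))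
    (hL : ∀ n ≥ 1, ∀ x ∈ Set.Ioc (t (n + 1)) (t n), L x = (t n - x) / a n) :
    ∀ w : List ℕ, ok w → ∀ y ∈ cyl t L w, ∀ z ∈ cyl t L w,
      |y - z| ≤ (max (1 - a 1) (1 - a 2)) ^ w.length := by
  intro w
  induction w with
  | nil =>
      intro _ y hy z hz
      simp only [List.length_nil, pow_zero]
      rw [abs_le]
      constructor <;> [linarith [hy.1, hy.2, hz.1, hz.2]; linarith [hy.1, hy.2, hz.1, hz.2]]
  | cons n w ih =>
      intro hok y hy z hz
      have hn : 1 ≤ n := hok n (by simp)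
      have ha := hpos n hn
      have hLy := hL n hn y hy.1
      have hLz := hL n hn z hz.1
      have hy' : y = t n - a n * L y := by rw [hLy]; field_simp; ring
      have hz' : z = t n - a n * L z := by rw [hLz]; field_simp; ring
      have hdiff : y - z = a n * (L z - L y) := by rw [mul_sub]; linarith [hy', hz']
      have hIH := ih (fun i hi => hok i (by simp [hi])) (L y) hy.2 (L z) hz.2
      have hd : |L z - L y| ≤ (max (1 - a 1) (1 - a 2)) ^ w.length := by
        rw [abs_sub_comm]; exact hIH
      have hanb := a_le_c0 a hpos hsummable hsum n hn
      have hc0 : (0:ℝ) ≤ max (1 - a 1) (1 - a 2) := le_trans ha.le hanb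
      calc |y - z| = a n * |L z - L y| := by rw [hdiff, abs_mul, abs_of_pos ha]
        _ ≤ (max (1 - a 1) (1 - a 2)) * (max (1 - a 1) (1 - a 2)) ^ w.length := by
            apply mul_le_mul hanb hd (abs_nonneg _) hc0
        _ = (max (1 - a 1) (1 - a 2)) ^ (n :: w).length := by
            rw [List.length_cons, pow_succ]; ring

theorem cover (hpos : ∀ n ≥ 1, 0 < a n) (hsummable : Summable (fun n => a (n + 1)))
    (hsum : ∑' n, a (n + 1) = 1) (ht : ∀ n, t n = ∑' k, a (n + k))
    (hL : ∀ n ≥ 1, ∀ x ∈ Set.Ioc (t (n + 1)) (t n), L x = (t n - x) / a n) :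
    ∀ (k : ℕ) (x : ℝ), 0 < x → x ≤ 1 →
      (∃ w, ok w ∧ w.length = k ∧ x ∈ cyl t L w) ∨ x ∈ bad a t k := by
  intro k
  induction k with
  | zero =>
      intro x hx0 hx1
      exact Or.inl ⟨[], fun n hn => by simp at hn, rfl, ⟨hx0.le, hx1⟩⟩
  | succ k ih =>
      intro x hx0 hx1
      obtain ⟨n, hn1, hlt, hle⟩ := exists_idx a t hpos hsummable hsum ht x hx0 hx1
      have ha := hpos n hn1
      have hLx : L x = (t n - x)/a n := hL n hn1 x ⟨hlt, hle⟩
      have hy0 : 0 ≤ (t n - x)/a n := div_nonneg (by linarith) ha.le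
      have hy1 : (t n - x)/a n < 1 := by
        rw [div_lt_one ha]
        have := t_succ a t hsummable ht n hn1
        linarith
      rcases eq_or_lt_of_le hy0 with h0 | h0
      · -- x = t n
        have hxt : x = t n := by
          have h0' : (t n - x)/a n = 0 := h0.symm
          field_simp at h0'
          linarith
        right
        exact Or.inl ⟨n, hn1, hxt.symm⟩
      · rcases ih ((t n - x)/a n) h0 hy1.le with ⟨w, hokw, hlenw, hw⟩ | hbad
        · left
          refine ⟨n :: w, ?_, by simp [hlenw], ⟨⟨hlt, hle⟩, ?_⟩⟩
          · intro i hi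
            rcases List.mem_cons.1 hi with h | h
            · omega
            · exact hokw i h
          · show L x ∈ cyl t L w
            rw [hLx]; exact hw
        · right
          refine Or.inr (Set.mem_iUnion.2 ⟨n - 1, ?_⟩)
          refine ⟨(t n - x)/a n, hbad, ?_⟩
          have hh : n - 1 + 1 = n := by omega
          rw [hh]
          field_simp; ring

theorem bad_countable (a t : ℕ → ℝ) : ∀ k : ℕ, (bad a t k).Countable := by
  intro k
  induction k with
  | zero => simp [bad]
  | succ k ih =>
      refine Set.Countable.union ?_ (Set.countable_iUnion fun n => ih.image _)
      exact (Set.to_countable _).image t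

end
end LurothAux


open LurothAux in
/-- The α-Lüroth map is exact with respect to Lebesgue measure. -/
theorem stmt5 (a t : ℕ → ℝ) (L : ℝ → ℝ) (B : Set ℝ)
    (hpos : ∀ n ≥ 1, 0 < a n)
    (hsummable : Summable (fun n => a (n + 1)))
    (hsum : ∑' n, a (n + 1) = 1)
    (ht : ∀ n, t n = ∑' k, a (n + k))
    (hL0 : L 0 = 0)
    (hL : ∀ n ≥ 1, ∀ x ∈ Set.Ioc (t (n + 1)) (t n), L x = (t n - x) / a n)
    (hBmeas : MeasurableSet B)
    (hBsub : B ⊆ Set.Icc 0 1)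
    (hB : ∀ n : ℕ, ∃ C : Set ℝ, MeasurableSet C ∧
      B = Set.Icc (0 : ℝ) 1 ∩ (L^[n]) ⁻¹' C) :
    MeasureTheory.volume B = 0 ∨ MeasureTheory.volume (Set.Icc (0 : ℝ) 1 \ B) = 0 := by
  classical
  by_cases hc : MeasureTheory.volume B = 0
  · exact Or.inl hc
  right
  have ha1 := hpos 1 le_rfl
  have ha2 := hpos 2 (by omega)
  have hc0lt : max (1 - a 1) (1 - a 2) < 1 := max_lt (by linarith) (by linarith)
  choose C hCm hCe using hB
  have hvolB : ∀ k : ℕ, volume B = volume (C k ∩ Set.Ico 0 1) := fun k => by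
    rw [hCe k]
    exact (iter_key a t L hpos hsummable hsum ht hL k (C k) (hCm k)).2
  have hkey : ∀ w : List ℕ, ok w →
      volume (B ∩ cyl t L w) = volume B * volume (cyl t L w) := by
    intro w hok
    have h1 : B ∩ cyl t L w = cyl t L w ∩ (L^[w.length]) ⁻¹' (C w.length) := by
      rw [hCe w.length]
      ext x
      constructor
      · rintro ⟨⟨_, hpre⟩, hcyl⟩; exact ⟨hcyl, hpre⟩
      · rintro ⟨hcyl, hpre⟩
        exact ⟨⟨cyl_subset a t L hpos hsummable hsum ht w hok hcyl, hpre⟩, hcyl⟩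
    rw [h1, cyl_key a t L hpos hsummable hsum ht hL w hok (C w.length),
      ← hvolB w.length, mul_comm]
  set N : Set ℝ := ((⋃ k, bad a t k) ∪ {0}) ∪ {1} with hNdef
  have hNc : N.Countable := (((Set.countable_iUnion (bad_countable a t)).union
      (Set.countable_singleton 0)).union (Set.countable_singleton 1))
  have hNnull : volume N = 0 := hNc.measure_zero volume
  have keyU : ∀ U : Set ℝ, IsOpen U →
      volume (B ∩ U) = volume B * volume (U ∩ Set.Icc 0 1) := by
    intro U hU
    set E : ℕ → Set ℝ := fun k =>
      ⋃ w : {w : List ℕ // ok w ∧ w.length = k ∧ cyl t L w ⊆ U}, cyl t L w.1 with hEdef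
    have hcylm : ∀ (k : ℕ) (w : {w : List ℕ // ok w ∧ w.length = k ∧ cyl t L w ⊆ U}),
        MeasurableSet (cyl t L w.1) := fun k w =>
      cyl_meas a t L hpos hsummable ht hL w.1 w.2.1
    have hEmeas : ∀ k, MeasurableSet (E k) := fun k => MeasurableSet.iUnion (hcylm k)
    have hEdisj : ∀ k, Pairwise (Function.onFun Disjoint
        (fun w : {w : List ℕ // ok w ∧ w.length = k ∧ cyl t L w ⊆ U} => cyl t L w.1)) := by
      intro k w u hwu
      have hne : w.1 ≠ u.1 := fun h => hwu (Subtype.ext h)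
      exact Set.disjoint_iff_inter_eq_empty.2
        (cyl_disj a t L hpos hsummable ht w.1 u.1 w.2.1 u.2.1
          (w.2.2.1.trans u.2.2.1.symm) hne)
    have hEvol : ∀ k, volume (B ∩ E k) = volume B * volume (E k) := by
      intro k
      have h1 : volume (B ∩ E k) = (volume.restrict B) (E k) := by
        rw [MeasureTheory.Measure.restrict_apply' hBmeas, Set.inter_comm]
      have h2 : ∀ w : {w : List ℕ // ok w ∧ w.length = k ∧ cyl t L w ⊆ U},
          (volume.restrict B) (cyl t L w.1) = volume B * volume (cyl t L w.1) := fun w => by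
        rw [MeasureTheory.Measure.restrict_apply' hBmeas, Set.inter_comm]
        exact hkey w.1 w.2.1
      rw [h1, hEdef, MeasureTheory.measure_iUnion (hEdisj k) (hcylm k), tsum_congr h2,
        ENNReal.tsum_mul_left]
      congr 1
      exact (MeasureTheory.measure_iUnion (hEdisj k) (hcylm k)).symm
    set G : ℕ → Set ℝ := fun k => E k \ N with hGdef
    have hGE : ∀ k, volume (G k) = volume (E k) := fun k =>
      MeasureTheory.measure_diff_null hNnull
    have hBG : ∀ k, volume (B ∩ G k) = volume B * volume (G k) := by
      intro k
      have h0 : B ∩ G k = (B ∩ E k) \ N := by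
        rw [hGdef]; exact (Set.inter_diff_assoc B (E k) N).symm
      rw [h0, MeasureTheory.measure_diff_null hNnull, hEvol k, hGE k]
    have hGmono : Monotone G := by
      apply monotone_nat_of_le_succ
      intro k x hx
      obtain ⟨w, hxw⟩ := Set.mem_iUnion.1 hx.1
      have hxIcc : x ∈ Set.Icc (0:ℝ) 1 :=
        cyl_subset a t L hpos hsummable hsum ht w.1 w.2.1 hxw
      have hx0 : 0 < x := by
        rcases lt_or_eq_of_le hxIcc.1 with h | h
        · exact h
        · exact absurd (Or.inl (Or.inr (by simp [← h]))) hx.2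
      have hx1' : x ≤ 1 := hxIcc.2
      have hxbad : x ∉ bad a t (k+1) := fun h =>
        hx.2 (Or.inl (Or.inl (Set.mem_iUnion.2 ⟨k+1, h⟩)))
      rcases cover a t L hpos hsummable hsum ht hL (k+1) x hx0 hx1' with
        ⟨u, hoku, hlenu, hxu⟩ | hb
      · have htk : x ∈ cyl t L (u.take k) :=
          cyl_take a t L hpos hsummable hsum ht u k hoku hxu
        have hoktk : ok (u.take k) := fun i hi => hoku i (List.take_subset k u hi)
        have hlentk : (u.take k).length = k := by rw [List.length_take]; omega
        have heq : u.take k = w.1 := by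
          by_contra hne
          have hdis := cyl_disj a t L hpos hsummable ht (u.take k) w.1 hoktk w.2.1
            (hlentk.trans w.2.2.1.symm) hne
          have : x ∈ cyl t L (u.take k) ∩ cyl t L w.1 := ⟨htk, hxw⟩
          rw [hdis] at this
          exact this
        have hsubU : cyl t L u ⊆ U := by
          refine (cyl_take a t L hpos hsummable hsum ht u k hoku).trans ?_
          rw [heq]
          exact w.2.2.2
        exact ⟨Set.mem_iUnion.2 ⟨⟨u, hoku, hlenu, hsubU⟩, hxu⟩, hx.2⟩
      · exact absurd hb hxbad
    have hsub2 : (⋃ k, G k) ⊆ U ∩ Set.Icc 0 1 := by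
      intro x hx
      obtain ⟨k, hk⟩ := Set.mem_iUnion.1 hx
      obtain ⟨w, hxw⟩ := Set.mem_iUnion.1 hk.1
      exact ⟨w.2.2.2 hxw, cyl_subset a t L hpos hsummable hsum ht w.1 w.2.1 hxw⟩
    have hcov : U ∩ Set.Icc 0 1 ⊆ (⋃ k, G k) ∪ N := by
      intro x hx
      by_cases hxN : x ∈ N
      · exact Or.inr hxN
      left
      have hx0 : 0 < x := by
        rcases lt_or_eq_of_le hx.2.1 with h | h
        · exact h
        · exact absurd (Or.inl (Or.inr (by simp [← h]))) hxN
      obtain ⟨ε, hε, hball⟩ := Metric.isOpen_iff.1 hU x hx.1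
      obtain ⟨k, hk⟩ := exists_pow_lt_of_lt_one hε hc0lt
      have hxbad : x ∉ bad a t k := fun h => hxN (Or.inl (Or.inl (Set.mem_iUnion.2 ⟨k, h⟩)))
      rcases cover a t L hpos hsummable hsum ht hL k x hx0 hx.2.2 with
        ⟨w, hokw, hlenw, hxw⟩ | hb
      · have hsubU : cyl t L w ⊆ U := by
          intro y hy
          apply hball
          rw [Metric.mem_ball, Real.dist_eq]
          calc |y - x| ≤ (max (1 - a 1) (1 - a 2)) ^ w.length :=
                cyl_diam a t L hpos hsummable hsum ht hL w hokw y hy x hxw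
            _ = (max (1 - a 1) (1 - a 2)) ^ k := by rw [hlenw]
            _ < ε := hk
        exact Set.mem_iUnion.2 ⟨k, Set.mem_iUnion.2 ⟨⟨w, hokw, hlenw, hsubU⟩, hxw⟩, hxN⟩
      · exact absurd hb hxbad
    have hGU : volume (⋃ k, G k) = volume (U ∩ Set.Icc 0 1) := by
      refine le_antisymm (measure_mono hsub2) ?_
      calc volume (U ∩ Set.Icc 0 1) ≤ volume ((⋃ k, G k) ∪ N) := measure_mono hcov
        _ ≤ volume (⋃ k, G k) + volume N := measure_union_le _ _
        _ = volume (⋃ k, G k) := by rw [hNnull, add_zero]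
    have hBU : volume (B ∩ U) = volume (B ∩ ⋃ k, G k) := by
      refine le_antisymm ?_ (measure_mono (Set.inter_subset_inter subset_rfl
        (hsub2.trans Set.inter_subset_left)))
      calc volume (B ∩ U) ≤ volume ((B ∩ ⋃ k, G k) ∪ N) := by
            apply measure_mono
            intro x hx
            rcases hcov ⟨hx.2, hBsub hx.1⟩ with h | h
            · exact Or.inl ⟨hx.1, h⟩
            · exact Or.inr h
        _ ≤ volume (B ∩ ⋃ k, G k) + volume N := measure_union_le _ _
        _ = volume (B ∩ ⋃ k, G k) := by rw [hNnull, add_zero]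
    have hdir : Directed (· ⊆ ·) G := hGmono.directed_le
    have hfin : volume (B ∩ ⋃ k, G k) = volume B * volume (⋃ k, G k) := by
      have h1 : volume (B ∩ ⋃ k, G k) = (volume.restrict B) (⋃ k, G k) := by
        rw [MeasureTheory.Measure.restrict_apply' hBmeas, Set.inter_comm]
      rw [h1, Directed.measure_iUnion hdir, Directed.measure_iUnion hdir,
        ENNReal.mul_iSup]
      congr 1
      funext k
      rw [MeasureTheory.Measure.restrict_apply' hBmeas, Set.inter_comm]
      exact hBG k
    rw [hBU, hfin, hGU]
  -- final density argument
  have hDfin : volume (Set.Icc (0:ℝ) 1 \ B) ≠ ⊤ := by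
    refine ne_top_of_le_ne_top ?_ (measure_mono Set.diff_subset)
    simp [Real.volume_Icc]
  have hmul : volume B * volume (Set.Icc (0:ℝ) 1 \ B) = 0 := by
    refine le_antisymm ?_ (zero_le)
    refine ENNReal.le_of_forall_pos_le_add fun ε hε _ => ?_
    rw [zero_add]
    have hlt : volume (Set.Icc (0:ℝ) 1 \ B) < volume (Set.Icc (0:ℝ) 1 \ B) + ε :=
      ENNReal.lt_add_right hDfin (by exact_mod_cast hε.ne')
    obtain ⟨U, hDU, hUopen, hUlt⟩ := Set.exists_isOpen_lt_of_lt _ _ hlt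
    have h1 : volume B * volume (Set.Icc (0:ℝ) 1 \ B) ≤ volume (B ∩ U) := by
      rw [keyU U hUopen]
      apply mul_le_mul_right
      apply measure_mono
      intro x hx
      exact ⟨hDU hx, hx.1⟩
    have hdisjBD : Disjoint (B ∩ U) (Set.Icc (0:ℝ) 1 \ B) :=
      Set.disjoint_left.2 fun x hx hxd => hxd.2 hx.1
    have h2 : volume (B ∩ U) + volume (Set.Icc (0:ℝ) 1 \ B) ≤
        volume (Set.Icc (0:ℝ) 1 \ B) + ε := by
      calc volume (B ∩ U) + volume (Set.Icc (0:ℝ) 1 \ B)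
          = volume ((B ∩ U) ∪ (Set.Icc (0:ℝ) 1 \ B)) :=
            (MeasureTheory.measure_union hdisjBD (measurableSet_Icc.diff hBmeas)).symm
        _ ≤ volume U := measure_mono (Set.union_subset Set.inter_subset_right hDU)
        _ ≤ volume (Set.Icc (0:ℝ) 1 \ B) + ε := hUlt.le
    have h3 : volume (B ∩ U) ≤ ε := by
      rw [add_comm (volume (Set.Icc (0:ℝ) 1 \ B)) (ε : ENNReal)] at h2
      exact (WithTop.add_le_add_iff_right hDfin).1 h2
    exact h1.trans h3
  rcases mul_eq_zero.1 hmul with h | h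
  · exact absurd h hc
  · exact h
end

section
/- The function φ_α := Σ_{n≥1} (t_n/a_n)·𝟙_{A_n} is a fixed point of the Ruelle (transfer) operator of the α-Farey map; that is, the measure ν_α with density φ_α with respect to Lebesgue measure is F_α-invariant: ν_α(F_α^{-1}(B)) = ν_α(B) for every Borel set B. -/
open MeasureTheory
open scoped ENNReal

private lemma vol_affine (c d : ℝ) (hc : c ≠ 0) (s : Set ℝ) :
    volume ((fun x => c * x + d) ⁻¹' s) = ENNReal.ofReal |c⁻¹| * volume s := by
  have h : (fun x => c * x + d) ⁻¹' s = (c * ·) ⁻¹' ((· + d) ⁻¹' s) := rfl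
  rw [h, Real.volume_preimage_mul_left hc, measure_preimage_add_right]

/-- The density `φ_α = Σ (t_n/a_n)·𝟙_{A_n}` yields an invariant measure for the α-Farey map:
`ν_α(F_α⁻¹ B) = ν_α(B)` for every Borel `B ⊆ [0,1]`. -/
theorem stmt6 (a t : ℕ → ℝ) (F φ : ℝ → ℝ)
    (hpos : ∀ n ≥ 1, 0 < a n)
    (hsummable : Summable (fun n => a (n + 1)))
    (hsum : ∑' n, a (n + 1) = 1)
    (ht : ∀ n, t n = ∑' k, a (n + k))
    (hF0 : F 0 = 0)
    (hF1 : ∀ x ∈ Set.Ioc (t 2) (t 1), F x = (1 - x) / a 1)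
    (hFn : ∀ n ≥ 2, ∀ x ∈ Set.Ioc (t (n + 1)) (t n),
      F x = a (n - 1) * (x - t (n + 1)) / a n + t n)
    (hφ : ∀ n ≥ 1, ∀ x ∈ Set.Ioc (t (n + 1)) (t n), φ x = t n / a n) :
    ∀ B : Set ℝ, MeasurableSet B → B ⊆ Set.Icc 0 1 →
      ∫⁻ x in Set.Icc (0 : ℝ) 1 ∩ F ⁻¹' B, ENNReal.ofReal (φ x) =
      ∫⁻ x in B, ENNReal.ofReal (φ x) := by
  classical
  intro B hB hBsub
  have ha1 : 0 < a 1 := hpos 1 le_rfl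
  -- summability of tails
  have hsa : ∀ n : ℕ, 1 ≤ n → Summable (fun k => a (n + k)) := by
    intro n hn
    obtain ⟨m, rfl⟩ := Nat.exists_eq_add_of_le hn
    have h2 : Summable (fun k => a (k + m + 1)) :=
      (summable_nat_add_iff (f := fun n => a (n + 1)) m).mpr hsummable
    exact h2.congr (fun k => by congr 1; omega)
  -- t n = a n + t (n+1)
  have hta : ∀ n : ℕ, 1 ≤ n → t n = a n + t (n + 1) := by
    intro n hn
    rw [ht n, Summable.tsum_eq_zero_add (hsa n hn), ht (n + 1)]
    simp only [Nat.add_zero]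
    congr 1
    exact tsum_congr fun k => by congr 1; omega
  have ht1 : t 1 = 1 := by
    rw [ht 1, ← hsum]
    exact tsum_congr fun k => by congr 1; omega
  have htnn : ∀ n : ℕ, 1 ≤ n → 0 ≤ t n := by
    intro n hn
    rw [ht n]
    exact tsum_nonneg fun k => (hpos (n + k) (by omega)).le
  have htpos : ∀ n : ℕ, 1 ≤ n → 0 < t n := by
    intro n hn
    have h1 := hpos n hn
    have h2 := htnn (n + 1) (by omega)
    rw [hta n hn]; linarith
  have hanti : ∀ m n : ℕ, 1 ≤ m → m ≤ n → t n ≤ t m := by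
    intro m n hm hmn
    induction n, hmn using Nat.le_induction with
    | base => exact le_rfl
    | succ k hk ih =>
      have h1 := hta k (le_trans hm hk)
      have h2 := hpos k (le_trans hm hk)
      linarith
  set I : ℕ → Set ℝ := fun n => Set.Ioc (t (n + 2)) (t (n + 1)) with hI
  have hmeasI : ∀ n, MeasurableSet (I n) := fun n => measurableSet_Ioc
  have hdisj : Pairwise (Function.onFun Disjoint I) := by
    have key : ∀ m n : ℕ, m < n → Disjoint (I m) (I n) := by
      intro m n hmn
      rw [hI, Set.Ioc_disjoint_Ioc]
      calc min (t (m + 1)) (t (n + 1)) ≤ t (n + 1) := min_le_right _ _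
        _ ≤ t (m + 2) := hanti (m + 2) (n + 1) (by omega) (by omega)
        _ ≤ max (t (m + 2)) (t (n + 2)) := le_max_left _ _
    intro m n hmn
    rcases lt_or_gt_of_ne hmn with h | h
    · exact key m n h
    · exact (key n m h).symm
  have hlim : Filter.Tendsto (fun i => t (i + 1)) Filter.atTop (nhds 0) := by
    have h0 := tendsto_sum_nat_add (fun k => a (k + 1))
    have he : (fun i => t (i + 1)) = fun i => ∑' k, a (k + i + 1) := by
      funext i; rw [ht]; exact tsum_congr fun k => by congr 1; omega
    rw [he]; exact h0
  have hcover : Set.Ioc (0 : ℝ) 1 = ⋃ n, I n := by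
    ext x
    simp only [Set.mem_iUnion, Set.mem_Ioc, hI]
    constructor
    · rintro ⟨hx0, hx1⟩
      have hex : ∃ N, t (N + 2) < x := by
        obtain ⟨N, hN⟩ := (hlim.eventually_lt_const hx0).exists
        exact ⟨N, lt_of_le_of_lt (hanti (N + 1) (N + 2) (by omega) (by omega)) hN⟩
      refine ⟨Nat.find hex, Nat.find_spec hex, ?_⟩
      rcases (Nat.find hex).eq_zero_or_pos with h0 | h0
      · rw [h0]; simpa [ht1] using hx1
      · obtain ⟨k, hk⟩ : ∃ k, Nat.find hex = k + 1 := ⟨Nat.find hex - 1, by omega⟩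
        have hmin := Nat.find_min hex (show k < Nat.find hex by omega)
        rw [hk]; push_neg at hmin; exact hmin
    · rintro ⟨n, h1, h2⟩
      refine ⟨lt_of_le_of_lt (htnn (n + 2) (by omega)) h1, le_trans h2 ?_⟩
      rw [← ht1]; exact hanti 1 (n + 1) le_rfl (by omega)
  have hIcc : Set.Icc (0 : ℝ) 1 = {0} ∪ ⋃ n, I n := by
    rw [← hcover]
    ext x
    simp only [Set.mem_Icc, Set.mem_union, Set.mem_singleton_iff, Set.mem_Ioc]
    constructor
    · rintro ⟨h0, h1⟩
      rcases eq_or_lt_of_le h0 with h | h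
      · exact Or.inl h.symm
      · exact Or.inr ⟨h, h1⟩
    · rintro (rfl | ⟨h0, h1⟩)
      · exact ⟨le_rfl, zero_le_one⟩
      · exact ⟨h0.le, h1⟩
  have h0notI : ∀ n, (0 : ℝ) ∉ I n := by
    intro n hn
    exact absurd (htpos (n + 2) (by omega)) (not_lt.mpr hn.1.le)
  have hφconst : ∀ n, ∀ x ∈ I n, φ x = t (n + 1) / a (n + 1) := by
    intro n x hx
    exact hφ (n + 1) (by omega) x hx
  have hvolsum : volume B = ∑' n, volume (B ∩ I n) := by
    have h1 : volume (B \ {0}) = volume B := measure_diff_null (measure_singleton 0)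
    have h2 : B \ {0} = ⋃ n, B ∩ I n := by
      rw [← Set.inter_iUnion, ← hcover]
      ext x
      simp only [Set.mem_diff, Set.mem_singleton_iff, Set.mem_inter_iff, Set.mem_Ioc]
      constructor
      · rintro ⟨hxB, hx0⟩
        have := hBsub hxB
        exact ⟨hxB, lt_of_le_of_ne this.1 (Ne.symm hx0), this.2⟩
      · rintro ⟨hxB, hx1, _⟩
        exact ⟨hxB, ne_of_gt hx1⟩
    rw [← h1, h2,
      measure_iUnion (hdisj.mono fun m n h => h.mono Set.inter_subset_right Set.inter_subset_right)
        (fun n => hB.inter (hmeasI n))]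
  -- the RHS as a sum
  have hRHS : ∫⁻ x in B, ENNReal.ofReal (φ x) =
      ∑' n, ENNReal.ofReal (t (n + 1) / a (n + 1)) * volume (B ∩ I n) := by
    have hBdec : B = (B ∩ {0}) ∪ ⋃ n, (B ∩ I n) := by
      conv_lhs => rw [← Set.inter_eq_left.mpr hBsub, hIcc]
      rw [Set.inter_union_distrib_left, Set.inter_iUnion]
    have hd0 : Disjoint (B ∩ {0}) (⋃ n, B ∩ I n) := by
      rw [Set.disjoint_left]
      rintro x ⟨-, hx0⟩ hxU
      simp only [Set.mem_singleton_iff] at hx0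
      obtain ⟨n, -, hxI⟩ := Set.mem_iUnion.mp hxU
      exact h0notI n (hx0 ▸ hxI)
    calc ∫⁻ x in B, ENNReal.ofReal (φ x)
        = ∫⁻ x in (B ∩ {0}) ∪ ⋃ n, (B ∩ I n), ENNReal.ofReal (φ x) := by rw [← hBdec]
      _ = (∫⁻ x in B ∩ {0}, ENNReal.ofReal (φ x))
            + ∫⁻ x in ⋃ n, (B ∩ I n), ENNReal.ofReal (φ x) :=
          lintegral_union (MeasurableSet.iUnion fun n => hB.inter (hmeasI n)) hd0
      _ = ∫⁻ x in ⋃ n, (B ∩ I n), ENNReal.ofReal (φ x) := by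
          rw [setLIntegral_measure_zero _ _
            (measure_mono_null Set.inter_subset_right (measure_singleton 0)), zero_add]
      _ = ∑' n, ∫⁻ x in B ∩ I n, ENNReal.ofReal (φ x) :=
          lintegral_iUnion (fun n => hB.inter (hmeasI n))
            (hdisj.mono fun m n h => h.mono Set.inter_subset_right Set.inter_subset_right) _
      _ = ∑' n, ENNReal.ofReal (t (n + 1) / a (n + 1)) * volume (B ∩ I n) := by
          refine tsum_congr fun n => ?_
          rw [setLIntegral_congr_fun (hB.inter (hmeasI n))
            (fun x hx => by rw [hφconst n x hx.2]),
            setLIntegral_const]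
  -- the target sets for each branch of F
  set J : ℕ → Set ℝ := fun n => if n = 0 then Set.Ico (0 : ℝ) 1 else I (n - 1) with hJ
  set w : ℕ → ℝ≥0∞ := fun n => if n = 0 then ENNReal.ofReal (a 1)
    else ENNReal.ofReal (a (n + 1) / a n) with hw
  have hmeasJ : ∀ n, MeasurableSet (J n) := by
    intro n
    rw [hJ]; dsimp only; split
    · exact measurableSet_Ico
    · exact hmeasI _
  have ht2 : t 2 = 1 - a 1 := by
    have h := hta 1 le_rfl; rw [ht1] at h; linarith
  -- affine data for each branch
  have haff : ∀ n, ∃ cn dn : ℝ, cn ≠ 0 ∧ (∀ x ∈ I n, F x = cn * x + dn) ∧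
      ((fun x => cn * x + dn) ⁻¹' (J n) = I n) ∧ ENNReal.ofReal |cn⁻¹| = w n := by
    intro n
    rcases n with _ | k
    · refine ⟨-(a 1)⁻¹, (a 1)⁻¹, neg_ne_zero.mpr (inv_ne_zero ha1.ne'), ?_, ?_, ?_⟩
      · intro x hx
        rw [hF1 x hx]
        field_simp
        ring
      · ext x
        simp only [Set.mem_preimage, hJ, hI, if_pos rfl, Set.mem_Ico, Set.mem_Ioc]
        have e : -(a 1)⁻¹ * x + (a 1)⁻¹ = (1 - x) / a 1 := by field_simp; ring
        rw [e]
        constructor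
        · rintro ⟨h0, h1lt⟩
          have hx1 : x ≤ 1 := by
            by_contra hcon; push_neg at hcon
            have : (1 - x) / a 1 < 0 := div_neg_of_neg_of_pos (by linarith) ha1
            linarith
          have hx2 : 1 - x < a 1 := (div_lt_one ha1).mp h1lt
          exact ⟨by rw [ht2]; linarith, by rw [ht1]; linarith⟩
        · rintro ⟨hx2, hx1⟩
          rw [ht2] at hx2; rw [ht1] at hx1
          exact ⟨div_nonneg (by linarith) ha1.le, (div_lt_one ha1).mpr (by linarith)⟩
      · rw [hw]
        simp [inv_neg, inv_inv, abs_neg, abs_of_pos ha1]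
    · have hak1 := hpos (k + 1) (by omega)
      have hak2 := hpos (k + 2) (by omega)
      have hcpos : (0 : ℝ) < a (k + 1) / a (k + 2) := div_pos hak1 hak2
      have hca : a (k + 1) / a (k + 2) * a (k + 2) = a (k + 1) :=
        div_mul_cancel₀ _ hak2.ne'
      have h1 := hta (k + 1) (by omega)
      have h2 := hta (k + 2) (by omega)
      refine ⟨a (k + 1) / a (k + 2), t (k + 2) - a (k + 1) / a (k + 2) * t (k + 3),
        hcpos.ne', ?_, ?_, ?_⟩
      · intro x hx
        rw [hFn (k + 2) (by omega) x hx, show k + 2 - 1 = k + 1 from rfl]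
        ring
      · ext x
        simp only [Set.mem_preimage, hJ, hI, if_neg (Nat.succ_ne_zero k),
          Nat.add_sub_cancel, Set.mem_Ioc]
        constructor
        · rintro ⟨hlt, hle⟩
          have hx1 : t (k + 3) < x := by
            by_contra hcon; push_neg at hcon
            nlinarith [mul_nonneg hcpos.le (sub_nonneg.mpr hcon)]
          have hx2 : x ≤ t (k + 2) := by
            by_contra hcon; push_neg at hcon
            nlinarith [mul_pos hcpos (show 0 < x - t (k + 3) - a (k + 2) by linarith)]
          exact ⟨hx1, hx2⟩
        · rintro ⟨hx1, hx2⟩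
          constructor
          · nlinarith [mul_pos hcpos (sub_pos.mpr hx1)]
          · nlinarith [mul_le_mul_of_nonneg_left
              (show x - t (k + 3) ≤ a (k + 2) by linarith) hcpos.le]
      · rw [hw]
        simp only [if_neg (Nat.succ_ne_zero k), inv_div]
        rw [abs_of_pos (div_pos hak2 hak1)]
  -- measurability and volume of the pieces
  have hpiece : ∀ n, MeasurableSet (I n ∩ F ⁻¹' B) ∧
      volume (I n ∩ F ⁻¹' B) = w n * volume (B ∩ J n) := by
    intro n
    obtain ⟨cn, dn, hcn, hFeq, hpre, hwn⟩ := haff n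
    have hsetEq : I n ∩ F ⁻¹' B = (fun x => cn * x + dn) ⁻¹' (B ∩ J n) := by
      ext x
      simp only [Set.mem_inter_iff, Set.mem_preimage]
      constructor
      · rintro ⟨hxI, hxB⟩
        refine ⟨by rw [← hFeq x hxI]; exact hxB, ?_⟩
        have hx : x ∈ (fun x => cn * x + dn) ⁻¹' (J n) := hpre ▸ hxI
        exact hx
      · rintro ⟨hxB, hxJ⟩
        have hxI : x ∈ I n := by rw [← hpre]; exact hxJ
        exact ⟨hxI, by rw [hFeq x hxI]; exact hxB⟩
    constructor
    · rw [hsetEq]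
      exact (hB.inter (hmeasJ n)).preimage ((measurable_id.const_mul cn).add_const dn)
    · rw [hsetEq, vol_affine cn dn hcn, hwn]
  -- the LHS as a sum
  have hLHS : ∫⁻ x in Set.Icc (0 : ℝ) 1 ∩ F ⁻¹' B, ENNReal.ofReal (φ x)
      = ∑' n, ENNReal.ofReal (t (n + 1) / a (n + 1)) * (w n * volume (B ∩ J n)) := by
    have hdec : Set.Icc (0 : ℝ) 1 ∩ F ⁻¹' B
        = ({0} ∩ F ⁻¹' B) ∪ ⋃ n, (I n ∩ F ⁻¹' B) := by
      rw [hIcc, Set.union_inter_distrib_right, Set.iUnion_inter]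
    have hd0 : Disjoint ({(0 : ℝ)} ∩ F ⁻¹' B) (⋃ n, (I n ∩ F ⁻¹' B)) := by
      rw [Set.disjoint_left]
      rintro x ⟨hx0, -⟩ hxU
      simp only [Set.mem_singleton_iff] at hx0
      obtain ⟨n, hxI, -⟩ := Set.mem_iUnion.mp hxU
      exact h0notI n (hx0 ▸ hxI)
    calc ∫⁻ x in Set.Icc (0 : ℝ) 1 ∩ F ⁻¹' B, ENNReal.ofReal (φ x)
        = ∫⁻ x in ({0} ∩ F ⁻¹' B) ∪ ⋃ n, (I n ∩ F ⁻¹' B), ENNReal.ofReal (φ x) := by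
          rw [hdec]
      _ = (∫⁻ x in {0} ∩ F ⁻¹' B, ENNReal.ofReal (φ x))
            + ∫⁻ x in ⋃ n, (I n ∩ F ⁻¹' B), ENNReal.ofReal (φ x) :=
          lintegral_union (MeasurableSet.iUnion fun n => (hpiece n).1) hd0
      _ = ∫⁻ x in ⋃ n, (I n ∩ F ⁻¹' B), ENNReal.ofReal (φ x) := by
          rw [setLIntegral_measure_zero _ _
            (measure_mono_null Set.inter_subset_left (measure_singleton 0)), zero_add]
      _ = ∑' n, ∫⁻ x in I n ∩ F ⁻¹' B, ENNReal.ofReal (φ x) :=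
          lintegral_iUnion (fun n => (hpiece n).1)
            (hdisj.mono fun m n h => h.mono Set.inter_subset_left Set.inter_subset_left) _
      _ = ∑' n, ENNReal.ofReal (t (n + 1) / a (n + 1)) * (w n * volume (B ∩ J n)) := by
          refine tsum_congr fun n => ?_
          rw [setLIntegral_congr_fun ((hpiece n).1)
            (fun x hx => by rw [hφconst n x hx.1]),
            setLIntegral_const, (hpiece n).2]
  -- final computation
  rw [hLHS, hRHS]
  have hL0 : ENNReal.ofReal (t 1 / a 1) * (w 0 * volume (B ∩ J 0)) = volume B := by
    have hJ0 : B ∩ J 0 = B \ {1} := by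
      rw [hJ]
      ext x
      simp only [Set.mem_inter_iff, if_pos rfl, Set.mem_Ico, Set.mem_diff,
        Set.mem_singleton_iff]
      constructor
      · rintro ⟨hxB, -, hx1⟩
        exact ⟨hxB, ne_of_lt hx1⟩
      · rintro ⟨hxB, hne⟩
        have := hBsub hxB
        exact ⟨hxB, this.1, lt_of_le_of_ne this.2 hne⟩
    have hw0 : w 0 = ENNReal.ofReal (a 1) := by rw [hw]; simp
    rw [hw0, hJ0, measure_diff_null (measure_singleton 1), ← mul_assoc,
      ← ENNReal.ofReal_mul (div_nonneg (htnn 1 le_rfl) ha1.le),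
      div_mul_cancel₀ _ ha1.ne', ht1, ENNReal.ofReal_one, one_mul]
  have hLk : ∀ k : ℕ, ENNReal.ofReal (t (k + 2) / a (k + 2)) * (w (k + 1) * volume (B ∩ J (k + 1)))
      = ENNReal.ofReal (t (k + 2) / a (k + 1)) * volume (B ∩ I k) := by
    intro k
    have hak1 := hpos (k + 1) (by omega)
    have hak2 := hpos (k + 2) (by omega)
    have hwk : w (k + 1) = ENNReal.ofReal (a (k + 2) / a (k + 1)) := by
      rw [hw]; simp
    have hJk : J (k + 1) = I k := by
      rw [hJ]; simp
    rw [hwk, hJk, ← mul_assoc,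
      ← ENNReal.ofReal_mul (div_nonneg (htnn (k + 2) (by omega)) hak2.le)]
    congr 2
    field_simp
  have hsplit : ∀ n : ℕ, ENNReal.ofReal (t (n + 1) / a (n + 1)) * volume (B ∩ I n)
      = volume (B ∩ I n) + ENNReal.ofReal (t (n + 2) / a (n + 1)) * volume (B ∩ I n) := by
    intro n
    have han1 := hpos (n + 1) (by omega)
    have e : t (n + 1) / a (n + 1) = 1 + t (n + 2) / a (n + 1) := by
      rw [hta (n + 1) (by omega), add_div, div_self han1.ne']
    rw [e, ENNReal.ofReal_add (by norm_num)
      (div_nonneg (htnn (n + 2) (by omega)) han1.le), ENNReal.ofReal_one, add_mul, one_mul]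
  calc ∑' n, ENNReal.ofReal (t (n + 1) / a (n + 1)) * (w n * volume (B ∩ J n))
      = (ENNReal.ofReal (t 1 / a 1) * (w 0 * volume (B ∩ J 0)))
        + ∑' k, ENNReal.ofReal (t (k + 2) / a (k + 2)) * (w (k + 1) * volume (B ∩ J (k + 1))) :=
        tsum_eq_zero_add' ENNReal.summable
    _ = volume B + ∑' k, ENNReal.ofReal (t (k + 2) / a (k + 1)) * volume (B ∩ I k) := by
        rw [hL0]
        congr 1
        exact tsum_congr hLk
    _ = ∑' n, ENNReal.ofReal (t (n + 1) / a (n + 1)) * volume (B ∩ I n) := by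
        rw [tsum_congr hsplit, ENNReal.tsum_add, ← hvolsum]
end

section
/- The jump transformation of the α-Farey map with respect to the atom A_1 coincides with the α-Lüroth map: for every x ∈ (0,1], if ρ(x) = inf{n ≥ 0 : F_α^n(x) ∈ A_1} + 1, then F_α^{ρ(x)}(x) = L_α(x). -/
/-- The jump transformation of the α-Farey map with respect to `A₁` coincides with the
α-Lüroth map: the first-hitting time of `A₁` is finite and `F^[ρ(x)] x = L x`. -/
theorem stmt8 (a t : ℕ → ℝ) (F L : ℝ → ℝ)
    (hpos : ∀ n ≥ 1, 0 < a n)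
    (hsummable : Summable (fun n => a (n + 1)))
    (hsum : ∑' n, a (n + 1) = 1)
    (ht : ∀ n, t n = ∑' k, a (n + k))
    (hF0 : F 0 = 0)
    (hF1 : ∀ x ∈ Set.Ioc (t 2) (t 1), F x = (1 - x) / a 1)
    (hFn : ∀ n ≥ 2, ∀ x ∈ Set.Ioc (t (n + 1)) (t n),
      F x = a (n - 1) * (x - t (n + 1)) / a n + t n)
    (hL0 : L 0 = 0)
    (hL : ∀ n ≥ 1, ∀ x ∈ Set.Ioc (t (n + 1)) (t n), L x = (t n - x) / a n) :
    ∀ x ∈ Set.Ioc (0 : ℝ) 1,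
      {n : ℕ | F^[n] x ∈ Set.Ioc (t 2) (t 1)}.Nonempty ∧
      F^[sInf {n : ℕ | F^[n] x ∈ Set.Ioc (t 2) (t 1)} + 1] x = L x := by
  intro x hx
  set b : ℕ → ℝ := fun k => a (k + 1) with hb
  have hbpos : ∀ k, 0 < b k := fun k => hpos (k + 1) (Nat.le_add_left 1 k)
  have hbs : ∀ m : ℕ, Summable (fun k => b (k + m)) :=
    fun m => (summable_nat_add_iff m).2 hsummable
  have htb : ∀ m : ℕ, t (m + 1) = ∑' k, b (k + m) := by
    intro m
    rw [ht (m + 1)]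
    apply tsum_congr
    intro k
    show a (m + 1 + k) = a (k + m + 1)
    congr 1
    omega
  have hrec : ∀ m : ℕ, t (m + 1) = a (m + 1) + t (m + 2) := by
    intro m
    rw [htb m, htb (m + 1), Summable.tsum_eq_zero_add (hbs m)]
    congr 1
    · show b (0 + m) = a (m + 1)
      simp [hb]
    · apply tsum_congr
      intro k
      show b (k + 1 + m) = b (k + (m + 1))
      congr 1
      omega
  have htnn : ∀ m : ℕ, 0 ≤ t (m + 1) := by
    intro m
    rw [htb m]
    exact tsum_nonneg fun k => (hbpos _).le
  have ht1 : t 1 = 1 := by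
    rw [htb 0, ← hsum]
  have hanti : ∀ m : ℕ, t (m + 2) < t (m + 1) := by
    intro m
    have := hpos (m + 1) (by omega)
    have := hrec m
    linarith
  have hle : ∀ m p : ℕ, t (m + 1 + p) ≤ t (m + 1) := by
    intro m p
    induction p with
    | zero => exact le_rfl
    | succ p ih =>
      have : t (m + 1 + (p + 1)) < t (m + 1 + p) := by
        have h := hanti (m + p)
        convert h using 2 <;> omega
      linarith
  have htend : Filter.Tendsto (fun m => t (m + 1)) Filter.atTop (nhds 0) :=
    (tendsto_sum_nat_add b).congr fun m => (htb m).symm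
  -- find the interval containing x
  have hev : ∀ᶠ m in Filter.atTop, t (m + 1) < x := htend.eventually_lt_const hx.1
  obtain ⟨m₀, hm₀⟩ := hev.exists
  classical
  let S0 : Set ℕ := {m | t (m + 1) < x}
  have hS0ne : S0.Nonempty := ⟨m₀, hm₀⟩
  have hjmem := Nat.sInf_mem hS0ne
  have hj0 : sInf S0 ≠ 0 := by
    intro h
    rw [h] at hjmem
    have : t 1 < x := hjmem
    rw [ht1] at this
    linarith [hx.2]
  obtain ⟨N, hN⟩ : ∃ N, sInf S0 = N + 1 := ⟨sInf S0 - 1, by omega⟩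
  have hxmem : x ∈ Set.Ioc (t (N + 2)) (t (N + 1)) := by
    constructor
    · have : sInf S0 ∈ S0 := hjmem
      rw [hN] at this
      exact this
    · by_contra h
      push_neg at h
      have : N ∈ S0 := h
      have := Nat.sInf_le this
      omega
  -- one step of the Farey map
  have hstep : ∀ m : ℕ, ∀ y ∈ Set.Ioc (t (m + 3)) (t (m + 2)),
      F y ∈ Set.Ioc (t (m + 2)) (t (m + 1)) ∧
      (t (m + 1) - F y) / a (m + 1) = (t (m + 2) - y) / a (m + 2) := by
    intro m y hy
    have hFy := hFn (m + 2) (by omega) y hy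
    have e1 : m + 2 - 1 = m + 1 := rfl
    have e2 : m + 2 + 1 = m + 3 := rfl
    rw [e1, e2] at hFy
    have a1p := hpos (m + 1) (by omega)
    have a2p := hpos (m + 2) (by omega)
    have hy1 := hy.1
    have hy2 := hy.2
    have er1 := hrec m
    have er2 : t (m + 2) = a (m + 2) + t (m + 3) := hrec (m + 1)
    -- y - t (m+3) ∈ (0, a (m+2)]
    have hd1 : 0 < y - t (m + 3) := by linarith
    have hd2 : y - t (m + 3) ≤ a (m + 2) := by linarith
    constructor
    · constructor
      · rw [hFy]
        have : 0 < a (m + 1) * (y - t (m + 3)) / a (m + 2) :=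
          div_pos (mul_pos a1p hd1) a2p
        linarith
      · rw [hFy]
        have h1 : a (m + 1) * (y - t (m + 3)) ≤ a (m + 1) * a (m + 2) := by nlinarith
        have h2 : a (m + 1) * (y - t (m + 3)) / a (m + 2) ≤ a (m + 1) :=
          (div_le_iff₀ a2p).2 (by nlinarith)
        linarith
    · rw [hFy]
      field_simp
      linear_combination (a (m + 2)) * er1 - (a (m + 1)) * er2
  -- main induction
  have hmain : ∀ j : ℕ, ∀ n : ℕ, ∀ y : ℝ, y ∈ Set.Ioc (t (n + j + 2)) (t (n + j + 1)) →
      F^[j] y ∈ Set.Ioc (t (n + 2)) (t (n + 1)) ∧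
      (t (n + 1) - F^[j] y) / a (n + 1) = (t (n + j + 1) - y) / a (n + j + 1) := by
    intro j
    induction j with
    | zero => intro n y hy; exact ⟨hy, rfl⟩
    | succ j ih =>
      intro n y hy
      have hy' : y ∈ Set.Ioc (t (n + j + 3)) (t (n + j + 2)) := by
        convert hy using 3 <;> omega
      obtain ⟨hFy, hr⟩ := hstep (n + j) y hy'
      obtain ⟨h1, h2⟩ := ih n (F y) hFy
      rw [Function.iterate_succ_apply]
      refine ⟨h1, ?_⟩
      rw [h2, hr]
      congr 2 <;> omega
  obtain ⟨hA1, hratio⟩ := hmain N 0 x (by convert hxmem using 3 <;> omega)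
  have hA1' : F^[N] x ∈ Set.Ioc (t 2) (t 1) := by
    simpa using hA1
  set S : Set ℕ := {n : ℕ | F^[n] x ∈ Set.Ioc (t 2) (t 1)} with hS
  have hSne : S.Nonempty := ⟨N, hA1'⟩
  have hnotmem : ∀ k, k < N → k ∉ S := by
    intro k hk hmem
    obtain ⟨h1, -⟩ := hmain k (N - k) x (by convert hxmem using 3 <;> omega)
    have hub : F^[k] x ≤ t (N - k + 1) := h1.2
    have hle2 : t (N - k + 1) ≤ t 2 := by
      have := hle 1 (N - k - 1)
      convert this using 2
      omega
    have := hmem.1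
    linarith
  have hsInf : sInf S = N := by
    refine le_antisymm (Nat.sInf_le hA1') (le_csInf hSne ?_)
    intro k hk
    by_contra h
    push_neg at h
    exact hnotmem k h hk
  refine ⟨hSne, ?_⟩
  rw [hsInf, Function.iterate_succ_apply', hF1 _ hA1']
  have : (1 - F^[N] x) / a 1 = (t 1 - F^[N] x) / a 1 := by rw [ht1]
  rw [this]
  have hr' : (t 1 - F^[N] x) / a 1 = (t (N + 1) - x) / a (N + 1) := by
    simpa using hratio
  rw [hr', hL (N + 1) (by omega) x hxmem]
end

section
/- Every x ∈ (0,1] with infinite α-Lüroth expansion digits (ℓ_k)_{k≥1} (defined by L_α^{k−1}(x) ∈ A_{ℓ_k}) satisfies x = Σ_{n=1}^∞ (−1)^{n−1} (∏_{i<n} a_{ℓ_i}) t_{ℓ_n}, and the series on the right converges. -/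
open Filter Topology

/-- Every α-irrational `x` with digit sequence `ℓ` is the sum of its alternating
α-Lüroth series. -/
theorem stmt9 (a t : ℕ → ℝ) (L : ℝ → ℝ) (x : ℝ) (ℓ : ℕ → ℕ)
    (hpos : ∀ n ≥ 1, 0 < a n)
    (hsummable : Summable (fun n => a (n + 1)))
    (hsum : ∑' n, a (n + 1) = 1)
    (ht : ∀ n, t n = ∑' k, a (n + k))
    (hL0 : L 0 = 0)
    (hL : ∀ n ≥ 1, ∀ y ∈ Set.Ioc (t (n + 1)) (t n), L y = (t n - y) / a n)
    (hx : x ∈ Set.Ioc (0 : ℝ) 1)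
    (hdig : ∀ k, 1 ≤ ℓ k ∧ L^[k] x ∈ Set.Ioc (t (ℓ k + 1)) (t (ℓ k))) :
    HasSum (fun n : ℕ => (-1 : ℝ) ^ n * (∏ i ∈ Finset.range n, a (ℓ i)) * t (ℓ n)) x := by
  have hsa : Summable a := (summable_nat_add_iff 1).mp hsummable
  have hsan : ∀ n : ℕ, Summable (fun k => a (n + k)) := by
    intro n
    have h := (summable_nat_add_iff n).mpr hsa
    exact h.congr (fun k => by rw [add_comm])
  have htrec : ∀ n, t n = a n + t (n + 1) := by
    intro n
    rw [ht n, ht (n + 1), Summable.tsum_eq_zero_add (hsan n), add_zero]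
    congr 1
    exact tsum_congr (fun k => by congr 1; omega)
  have htpos : ∀ n ≥ 1, 0 < t n := by
    intro n hn
    rw [ht n]
    exact Summable.tsum_pos (hsan n) (fun k => (hpos (n + k) (le_trans hn (Nat.le_add_right n k))).le)
      0 (by simpa using hpos n hn)
  have ht1 : t 1 = 1 := by
    rw [ht 1, ← hsum]
    exact tsum_congr (fun k => by congr 1; omega)
  have htle : ∀ n ≥ 1, t n ≤ 1 := by
    intro n hn
    induction n, hn using Nat.le_induction with
    | base => exact ht1.le
    | succ n hn ih => linarith [htrec n, hpos n hn]
  have halt : ∀ n ≥ 1, a n < 1 := by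
    intro n hn
    linarith [htrec n, htpos (n + 1) (by omega), htle n hn]
  obtain ⟨N, hN⟩ : ∃ N, ∀ n ≥ N, a n < 1 / 2 := by
    have h0 := hsa.tendsto_atTop_zero
    have h1 : ∀ᶠ n in atTop, a n < 1 / 2 :=
      h0.eventually_lt_const (by norm_num)
    exact eventually_atTop.mp h1
  set S : Finset ℝ := insert (1 / 2 : ℝ) ((Finset.Icc 1 N).image a) with hS
  have hSne : S.Nonempty := ⟨1 / 2, Finset.mem_insert_self _ _⟩
  set c : ℝ := S.max' hSne with hcdef
  have hchalf : (1 / 2 : ℝ) ≤ c := S.le_max' _ (Finset.mem_insert_self _ _)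
  have hc0 : (0 : ℝ) ≤ c := by linarith
  have hc1 : c < 1 := by
    rcases Finset.mem_insert.mp (S.max'_mem hSne) with h | h
    · rw [hcdef, h]; norm_num
    · obtain ⟨m, hm, hma⟩ := Finset.mem_image.mp h
      rw [hcdef, ← hma]
      exact halt m (Finset.mem_Icc.mp hm).1
  have hac : ∀ n ≥ 1, a n ≤ c := by
    intro n hn
    rcases le_or_gt n N with h | h
    · exact S.le_max' _ (Finset.mem_insert_of_mem
        (Finset.mem_image.mpr ⟨n, Finset.mem_Icc.mpr ⟨hn, h⟩, rfl⟩))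
    · linarith [hN n h.le]
  set P : ℕ → ℝ := fun n => ∏ i ∈ Finset.range n, a (ℓ i) with hP
  have hPpos : ∀ n, 0 < P n := fun n => Finset.prod_pos (fun i _ => hpos _ (hdig i).1)
  have hPle : ∀ n, P n ≤ c ^ n := by
    intro n
    calc P n ≤ ∏ _i ∈ Finset.range n, c :=
        Finset.prod_le_prod (fun i _ => (hpos _ (hdig i).1).le) (fun i _ => hac _ (hdig i).1)
      _ = c ^ n := by simp
  have hLpos : ∀ k, 0 < L^[k] x :=
    fun k => lt_trans (htpos (ℓ k + 1) (by omega)) (hdig k).2.1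
  have hLle1 : ∀ k, L^[k] x ≤ 1 := fun k => le_trans (hdig k).2.2 (htle _ (hdig k).1)
  have key : ∀ Nn : ℕ, x - ∑ n ∈ Finset.range Nn, (-1 : ℝ) ^ n * P n * t (ℓ n)
      = (-1 : ℝ) ^ Nn * P Nn * L^[Nn] x := by
    intro Nn
    induction Nn with
    | zero => simp [hP]
    | succ m ih =>
      have hstep : L^[m + 1] x = (t (ℓ m) - L^[m] x) / a (ℓ m) := by
        rw [Function.iterate_succ_apply']
        exact hL (ℓ m) (hdig m).1 _ (hdig m).2
      have ha : a (ℓ m) ≠ 0 := (hpos _ (hdig m).1).ne'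
      have hPsucc : P (m + 1) = P m * a (ℓ m) := Finset.prod_range_succ _ _
      rw [Finset.sum_range_succ, hstep, hPsucc]
      have hred : (-1 : ℝ) ^ (m + 1) * (P m * a (ℓ m)) * ((t (ℓ m) - L^[m] x) / a (ℓ m))
          = (-1 : ℝ) ^ (m + 1) * P m * (t (ℓ m) - L^[m] x) := by
        field_simp
      rw [hred, pow_succ]
      linear_combination ih
  have hbound : ∀ Nn : ℕ,
      |x - ∑ n ∈ Finset.range Nn, (-1 : ℝ) ^ n * P n * t (ℓ n)| ≤ c ^ Nn := by
    intro Nn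
    rw [key Nn, abs_mul, abs_mul, abs_pow, abs_neg, abs_one, one_pow, one_mul,
      abs_of_pos (hPpos Nn), abs_of_pos (hLpos Nn)]
    calc P Nn * L^[Nn] x ≤ P Nn * 1 :=
        mul_le_mul_of_nonneg_left (hLle1 Nn) (hPpos Nn).le
      _ ≤ c ^ Nn := by rw [mul_one]; exact hPle Nn
  have hgeo : Tendsto (fun n : ℕ => c ^ n) atTop (𝓝 0) :=
    tendsto_pow_atTop_nhds_zero_of_lt_one hc0 hc1
  have htend : Tendsto (fun Nn => ∑ n ∈ Finset.range Nn, (-1 : ℝ) ^ n * P n * t (ℓ n))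
      atTop (𝓝 x) := by
    rw [tendsto_iff_norm_sub_tendsto_zero]
    apply squeeze_zero (fun n => norm_nonneg _) (fun n => ?_) hgeo
    rw [Real.norm_eq_abs, abs_sub_comm]
    exact hbound n
  have hfs : Summable (fun n : ℕ => (-1 : ℝ) ^ n * P n * t (ℓ n)) := by
    apply Summable.of_norm_bounded (summable_geometric_of_lt_one hc0 hc1)
    intro n
    rw [norm_mul, norm_mul, norm_pow, norm_neg, norm_one, one_pow, one_mul,
      Real.norm_eq_abs, Real.norm_eq_abs, abs_of_pos (hPpos n),
      abs_of_pos (htpos _ (hdig n).1)]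
    calc P n * t (ℓ n) ≤ P n * 1 :=
        mul_le_mul_of_nonneg_left (htle _ (hdig n).1) (hPpos n).le
      _ ≤ c ^ n := by rw [mul_one]; exact hPle n
  have hhs := hfs.hasSum
  have heq : (∑' n, (-1 : ℝ) ^ n * P n * t (ℓ n)) = x :=
    tendsto_nhds_unique hhs.tendsto_sum_nat htend
  rwa [heq] at hhs
end

section
/- If α is of infinite type (Σ_{k} t_k = ∞), then the Lebesgue measures of the α-sum-level sets tend to zero: lim_{n→∞} λ(𝓛_n^{(α)}) = 0; if α is of finite type, then lim_{n→∞} λ(𝓛_n^{(α)}) = (Σ_{k=1}^∞ t_k)^{−1}. -/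
open Filter

lemma efp_eps_le (x S : ℝ) (hS : 0 < S) (h : ∀ ε : ℝ, 0 < ε → (x - ε) * S ≤ 1) :
    x * S ≤ 1 := by
  by_contra hc
  push_neg at hc
  have hδ : 0 < (x * S - 1) / (2 * S) := div_pos (by linarith) (by linarith)
  have h2 := h _ hδ
  have h3 : (x * S - 1) / (2 * S) * S = (x * S - 1) / 2 := by
    field_simp
  nlinarith [h2, h3]

lemma efp_eps_ge (x S c : ℝ) (hS : 0 < S) (h : ∀ ε : ℝ, 0 < ε → 1 ≤ (x + ε) * S + c) :
    1 ≤ x * S + c := by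
  by_contra hc
  push_neg at hc
  have hδ : 0 < (1 - (x * S + c)) / (2 * S) := div_pos (by linarith) (by linarith)
  have h2 := h _ hδ
  have h3 : (1 - (x * S + c)) / (2 * S) * S = (1 - (x * S + c)) / 2 := by
    field_simp
  nlinarith [h2, h3]

lemma efp_w_bounds (a w : ℕ → ℝ) (ha : ∀ n ≥ 1, 0 ≤ a n)
    (hpart : ∀ n, ∑ m ∈ Finset.Icc 1 n, a m ≤ 1)
    (hw0 : w 0 = 1) (hw : ∀ n ≥ 1, w n = ∑ m ∈ Finset.Icc 1 n, a m * w (n - m)) :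
    ∀ n, 0 ≤ w n ∧ w n ≤ 1 := by
  intro n
  induction n using Nat.strong_induction_on with
  | _ n ih =>
    rcases Nat.eq_zero_or_pos n with rfl | hn
    · simp [hw0]
    · rw [hw n hn]
      constructor
      · apply Finset.sum_nonneg
        intro m hm
        simp only [Finset.mem_Icc] at hm
        exact mul_nonneg (ha m hm.1) (ih (n - m) (by omega)).1
      · calc ∑ m ∈ Finset.Icc 1 n, a m * w (n - m)
            ≤ ∑ m ∈ Finset.Icc 1 n, a m * 1 := by
              apply Finset.sum_le_sum
              intro m hm
              simp only [Finset.mem_Icc] at hm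
              exact mul_le_mul_of_nonneg_left (ih (n - m) (by omega)).2 (ha m hm.1)
          _ = ∑ m ∈ Finset.Icc 1 n, a m := by simp
          _ ≤ 1 := hpart n

lemma efp_key (a w r : ℕ → ℝ) (hw0 : w 0 = 1)
    (hw : ∀ n ≥ 1, w n = ∑ m ∈ Finset.Icc 1 n, a m * w (n - m))
    (hr0 : r 0 = 1) (hrrec : ∀ m, r m = a (m + 1) + r (m + 1)) :
    ∀ n, ∑ j ∈ Finset.range (n + 1), w j * r (n - j) = 1 := by
  intro n
  induction n with
  | zero => simp [hw0, hr0]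
  | succ n ih =>
    have hstep : ∑ j ∈ Finset.range (n + 2), w j * r (n + 1 - j)
        = (∑ j ∈ Finset.range (n + 1), w j * r (n + 1 - j)) + w (n + 1) * r 0 := by
      rw [Finset.sum_range_succ]
      simp
    have h2 : ∑ j ∈ Finset.range (n + 1), w j * r (n + 1 - j)
        = ∑ j ∈ Finset.range (n + 1), (w j * r (n - j) - w j * a (n - j + 1)) := by
      apply Finset.sum_congr rfl
      intro j hj
      simp only [Finset.mem_range] at hj
      have h3 : n + 1 - j = (n - j) + 1 := by omega
      have h4 : r ((n - j) + 1) = r (n - j) - a ((n - j) + 1) := by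
        have := hrrec (n - j); linarith
      rw [h3, h4]; ring
    have e1 : ∑ j ∈ Finset.range (n + 1), w j * a (n - j + 1)
        = ∑ j ∈ Finset.range (n + 1), w (n - j) * a (j + 1) := by
      calc ∑ j ∈ Finset.range (n + 1), w j * a (n - j + 1)
          = ∑ j ∈ Finset.range (n + 1), w (n + 1 - 1 - j) * a (n - (n + 1 - 1 - j) + 1) :=
            (Finset.sum_range_reflect (fun j => w j * a (n - j + 1)) (n + 1)).symm
        _ = ∑ j ∈ Finset.range (n + 1), w (n - j) * a (j + 1) := by
            apply Finset.sum_congr rfl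
            intro j hj
            simp only [Finset.mem_range] at hj
            congr 2 <;> omega
    have e2 : w (n + 1) = ∑ j ∈ Finset.range (n + 1), w (n - j) * a (j + 1) := by
      rw [hw (n + 1) (by omega)]
      have hIccIco : Finset.Icc 1 (n + 1) = Finset.Ico 1 (n + 2) := by
        ext x; simp only [Finset.mem_Icc, Finset.mem_Ico]; omega
      rw [hIccIco, Finset.sum_Ico_eq_sum_range]
      have hidx : n + 2 - 1 = n + 1 := by omega
      rw [hidx]
      apply Finset.sum_congr rfl
      intro i hi
      have : n + 1 - (1 + i) = n - i := by omega
      rw [this]; ring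
    have hren : ∑ j ∈ Finset.range (n + 1), w j * a (n - j + 1) = w (n + 1) :=
      e1.trans e2.symm
    rw [hstep, h2, Finset.sum_sub_distrib, ih, hren, hr0]
    ring

/-- Erdős–Pollard–Feller renewal theorem for the α-sum-level sets: `λ(𝓛_n) → 0` when α is
of infinite type, and `λ(𝓛_n) → (Σ t_k)⁻¹` when α is of finite type. -/
theorem stmt11 (a t w : ℕ → ℝ)
    (hpos : ∀ n ≥ 1, 0 < a n)
    (hsummable : Summable (fun n => a (n + 1)))
    (hsum : ∑' n, a (n + 1) = 1)
    (ht : ∀ n, t n = ∑' k, a (n + k))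
    (hw0 : w 0 = 1)
    (hw : ∀ n ≥ 1, w n = ∑ m ∈ Finset.Icc 1 n, a m * w (n - m)) :
    (¬ Summable (fun k => t (k + 1)) → Tendsto w atTop (nhds 0)) ∧
    (Summable (fun k => t (k + 1)) →
      Tendsto w atTop (nhds (1 / ∑' k, t (k + 1)))) := by
  classical
  set r : ℕ → ℝ := fun k => t (k + 1) with hrdef
  -- basic facts about r
  have hsa : ∀ n : ℕ, Summable (fun k => a (n + 1 + k)) := by
    intro n
    have h1 : Summable (fun k => a (k + n + 1)) := (summable_nat_add_iff n).2 hsummable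
    exact h1.congr fun k => by congr 1; omega
  have hrfor : ∀ m, r m = ∑' k, a (m + 1 + k) := fun m => ht (m + 1)
  have hrnn : ∀ m, 0 ≤ r m := by
    intro m
    rw [hrfor m]
    exact tsum_nonneg fun k => (hpos _ (by omega)).le
  have hrrec : ∀ m, r m = a (m + 1) + r (m + 1) := by
    intro m
    have h1 : a (m + 1) + ∑' k, a (m + 1 + 1 + k) = ∑' k, a (m + 1 + k) := by
      have h2 := Summable.sum_add_tsum_nat_add (f := fun k => a (m + 1 + k)) 1 (hsa m)
      have h3 : ∑' (i : ℕ), a (m + 1 + (i + 1)) = ∑' k, a (m + 1 + 1 + k) :=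
        tsum_congr fun k => by rw [show m + 1 + (k + 1) = m + 1 + 1 + k by omega]
      simpa [h3] using h2
    rw [hrfor m, hrfor (m + 1)]
    linarith
  have hr0 : r 0 = 1 := by
    rw [hrfor 0, ← hsum]
    exact tsum_congr fun k => by congr 1; omega
  have psum : ∀ n, (∑ i ∈ Finset.range n, a (i + 1)) + r n = 1 := by
    intro n
    have h1 : (∑ i ∈ Finset.range n, a (i + 1)) + ∑' i, a (i + n + 1) = 1 := by
      have h2 := Summable.sum_add_tsum_nat_add (f := fun i => a (i + 1)) n hsummable
      simpa [hsum] using h2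
    have h3 : ∑' i, a (i + n + 1) = r n := by
      rw [hrfor n]
      exact tsum_congr fun k => by rw [show k + n + 1 = n + 1 + k by omega]
    rw [h3] at h1
    exact h1
  have hIccIoc : ∀ n : ℕ, Finset.Icc 1 n = Finset.Ioc 0 n := by
    intro n; ext x; simp only [Finset.mem_Icc, Finset.mem_Ioc]; omega
  have hIoc : ∀ n, ∑ m ∈ Finset.Ioc 0 n, a m = 1 - r n := by
    intro n
    have h1 : ∑ m ∈ Finset.Ioc 0 n, a m = ∑ i ∈ Finset.range n, a (1 + i) := by
      have : Finset.Ioc 0 n = Finset.Ico 1 (n + 1) := by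
        ext x; simp only [Finset.mem_Ioc, Finset.mem_Ico]; omega
      rw [this, Finset.sum_Ico_eq_sum_range]
      norm_num
    rw [h1]
    have h2 := psum n
    have h3 : ∑ i ∈ Finset.range n, a (1 + i) = ∑ i ∈ Finset.range n, a (i + 1) :=
      Finset.sum_congr rfl fun i _ => by congr 1; omega
    linarith
  have hpart : ∀ n, ∑ m ∈ Finset.Icc 1 n, a m ≤ 1 := by
    intro n
    rw [hIccIoc, hIoc]
    linarith [hrnn n]
  have rtend : Tendsto r atTop (nhds 0) := by
    have h1 := tendsto_sum_nat_add (f := fun i => a (i + 1))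
    apply h1.congr
    intro i
    rw [hrfor i]
    exact (tsum_congr fun k => by congr 1; omega).symm
  -- bounds on w
  have wb := efp_w_bounds a w (fun n hn => (hpos n hn).le) hpart hw0 hw
  have wnn : ∀ n, 0 ≤ w n := fun n => (wb n).1
  have wle : ∀ n, w n ≤ 1 := fun n => (wb n).2
  have key := efp_key a w r hw0 hw hr0 hrrec
  have keym : ∀ n, ∑ m ∈ Finset.range (n + 1), r m * w (n - m) = 1 := by
    intro n
    calc ∑ m ∈ Finset.range (n + 1), r m * w (n - m)
        = ∑ j ∈ Finset.range (n + 1), w (n + 1 - 1 - j) * r (n - (n + 1 - 1 - j)) := by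
          apply Finset.sum_congr rfl
          intro j hj
          simp only [Finset.mem_range] at hj
          rw [mul_comm]
          congr 2 <;> omega
      _ = ∑ j ∈ Finset.range (n + 1), w j * r (n - j) :=
          Finset.sum_range_reflect (fun j => w j * r (n - j)) (n + 1)
      _ = 1 := key n
  -- limsup/liminf setup
  have hbddle : IsBoundedUnder (· ≤ ·) atTop w := isBoundedUnder_of ⟨1, wle⟩
  have hbddge : IsBoundedUnder (· ≥ ·) atTop w := isBoundedUnder_of ⟨0, wnn⟩
  set L := limsup w atTop with hLdef
  set l := liminf w atTop with hldef
  have hl0 : 0 ≤ l := le_liminf_of_le hbddle.isCoboundedUnder_ge (Eventually.of_forall wnn)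
  have hL1 : L ≤ 1 := limsup_le_of_le hbddge.isCoboundedUnder_le (Eventually.of_forall wle)
  have hlL : l ≤ L := liminf_le_limsup hbddle hbddge
  have hL0 : 0 ≤ L := le_trans hl0 hlL
  have hl1 : l ≤ 1 := le_trans hlL hL1
  have a1pos : 0 < a 1 := hpos 1 le_rfl
  have h01 : Finset.Ioc (0:ℕ) 1 = {1} := by decide
  have a1le : a 1 ≤ 1 := by
    have := hIoc 1
    rw [h01, Finset.sum_singleton] at this
    linarith [hrnn 1]
  have hsum01 : ∀ (f : ℕ → ℝ), ∑ m ∈ Finset.Ioc 0 1, f m = f 1 := by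
    intro f; rw [h01, Finset.sum_singleton]
  have hw_eq : ∀ N0 n : ℕ, N0 + 2 ≤ n → w n = a 1 * w (n - 1)
      + ∑ m ∈ Finset.Ioc 1 (n - N0), a m * w (n - m)
      + ∑ m ∈ Finset.Ioc (n - N0) n, a m * w (n - m) := by
    intro N0 n hn
    rw [hw n (by omega), hIccIoc n,
      ← Finset.sum_Ioc_consecutive (fun m => a m * w (n - m)) (Nat.zero_le 1)
        (by omega : (1:ℕ) ≤ n),
      ← Finset.sum_Ioc_consecutive (fun m => a m * w (n - m))
        (by omega : (1:ℕ) ≤ n - N0) (by omega : n - N0 ≤ n),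
      hsum01]
    ring
  have hsub : ∀ N0 n : ℕ, N0 + 2 ≤ n →
      a 1 + ∑ m ∈ Finset.Ioc 1 (n - N0), a m = 1 - r (n - N0) := by
    intro N0 n hn
    have h2 := Finset.sum_Ioc_consecutive (fun m => a m) (Nat.zero_le 1)
      (by omega : (1:ℕ) ≤ n - N0)
    rw [hsum01] at h2
    rw [h2]
    exact hIoc (n - N0)
  have EstepUP : ∀ ε : ℝ, 0 < ε →
      ∀ᶠ n in atTop, w n ≤ a 1 * w (n - 1) + (L + ε) * (1 - a 1) + ε := by
    intro ε hε
    have hev1 : ∀ᶠ k in atTop, w k < L + ε :=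
      eventually_lt_of_limsup_lt (by linarith) hbddle
    obtain ⟨N0, hN0⟩ := eventually_atTop.mp hev1
    have hev2 : ∀ᶠ n in atTop, r (n - N0) < ε :=
      (tendsto_sub_atTop_nat N0).eventually (rtend.eventually_lt_const hε)
    filter_upwards [hev2, eventually_ge_atTop (N0 + 2)] with n hr2 hn
    have hb1 : ∑ m ∈ Finset.Ioc 1 (n - N0), a m * w (n - m) ≤ (L + ε) * (1 - a 1) := by
      have t1 : ∑ m ∈ Finset.Ioc 1 (n - N0), a m * w (n - m)
          ≤ ∑ m ∈ Finset.Ioc 1 (n - N0), a m * (L + ε) := by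
        apply Finset.sum_le_sum
        intro m hm
        simp only [Finset.mem_Ioc] at hm
        exact mul_le_mul_of_nonneg_left (hN0 (n - m) (by omega)).le (hpos m (by omega)).le
      have t2 : ∑ m ∈ Finset.Ioc 1 (n - N0), a m * (L + ε)
          = (∑ m ∈ Finset.Ioc 1 (n - N0), a m) * (L + ε) := (Finset.sum_mul ..).symm
      have t3 : ∑ m ∈ Finset.Ioc 1 (n - N0), a m ≤ 1 - a 1 := by
        have := hrnn (n - N0)
        have := hsub N0 n hn
        linarith
      have t4 : (∑ m ∈ Finset.Ioc 1 (n - N0), a m) * (L + ε) ≤ (1 - a 1) * (L + ε) :=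
        mul_le_mul_of_nonneg_right t3 (by linarith)
      calc ∑ m ∈ Finset.Ioc 1 (n - N0), a m * w (n - m)
          ≤ (1 - a 1) * (L + ε) := by linarith
        _ = (L + ε) * (1 - a 1) := mul_comm _ _
    have hb2 : ∑ m ∈ Finset.Ioc (n - N0) n, a m * w (n - m) ≤ ε := by
      have t1 : ∑ m ∈ Finset.Ioc (n - N0) n, a m * w (n - m)
          ≤ ∑ m ∈ Finset.Ioc (n - N0) n, a m := by
        apply Finset.sum_le_sum
        intro m hm
        simp only [Finset.mem_Ioc] at hm
        exact mul_le_of_le_one_right (hpos m (by omega)).le (wle _)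
      have t2 : (∑ m ∈ Finset.Ioc 0 (n - N0), a m) + ∑ m ∈ Finset.Ioc (n - N0) n, a m
          = ∑ m ∈ Finset.Ioc 0 n, a m :=
        Finset.sum_Ioc_consecutive (fun m => a m) (Nat.zero_le _) (by omega)
      have h3 := hIoc n
      have h4 := hIoc (n - N0)
      have h5 := hrnn n
      linarith
    have h6 := hw_eq N0 n hn
    linarith
  have EstepDOWN : ∀ ε : ℝ, 0 < ε →
      ∀ᶠ n in atTop, a 1 * w (n - 1) + (l - ε) * (1 - a 1) - ε ≤ w n := by
    intro ε hε
    have hev1 : ∀ᶠ k in atTop, l - ε < w k :=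
      eventually_lt_of_lt_liminf (by linarith) hbddge
    obtain ⟨N0, hN0⟩ := eventually_atTop.mp hev1
    have hev2 : ∀ᶠ n in atTop, r (n - N0) < ε :=
      (tendsto_sub_atTop_nat N0).eventually (rtend.eventually_lt_const hε)
    filter_upwards [hev2, eventually_ge_atTop (N0 + 2)] with n hr2 hn
    have hb1 : (l - ε) * (1 - a 1) - ε ≤ ∑ m ∈ Finset.Ioc 1 (n - N0), a m * w (n - m) := by
      have t1 : ∑ m ∈ Finset.Ioc 1 (n - N0), a m * (l - ε)
          ≤ ∑ m ∈ Finset.Ioc 1 (n - N0), a m * w (n - m) := by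
        apply Finset.sum_le_sum
        intro m hm
        simp only [Finset.mem_Ioc] at hm
        exact mul_le_mul_of_nonneg_left (hN0 (n - m) (by omega)).le (hpos m (by omega)).le
      have t2 : ∑ m ∈ Finset.Ioc 1 (n - N0), a m * (l - ε)
          = (∑ m ∈ Finset.Ioc 1 (n - N0), a m) * (l - ε) := (Finset.sum_mul ..).symm
      have t3 : r (n - N0) * (l - ε) ≤ ε := by
        nlinarith [hrnn (n - N0), hr2, hl1, hε]
      have e : ∑ m ∈ Finset.Ioc 1 (n - N0), a m = 1 - r (n - N0) - a 1 := by
        have := hsub N0 n hn; linarith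
      have e2 : (1 - r (n - N0) - a 1) * (l - ε)
          = (l - ε) * (1 - a 1) - r (n - N0) * (l - ε) := by ring
      rw [e, e2] at t2
      linarith
    have hb2 : 0 ≤ ∑ m ∈ Finset.Ioc (n - N0) n, a m * w (n - m) := by
      apply Finset.sum_nonneg
      intro m hm
      simp only [Finset.mem_Ioc] at hm
      exact mul_nonneg (hpos m (by omega)).le (wnn _)
    have h6 := hw_eq N0 n hn
    linarith
  have FUP : ∀ M : ℕ, ∀ ε : ℝ, 0 < ε → ∃ᶠ n in atTop, ∀ m ≤ M, L - ε ≤ w (n - m) := by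
    intro M
    induction M with
    | zero =>
      intro ε hε
      have hfreq : ∃ᶠ n in atTop, L - ε < w n :=
        frequently_lt_of_lt_limsup hbddge.isCoboundedUnder_le (by linarith)
      refine hfreq.mono fun n h m hm => ?_
      have : m = 0 := Nat.le_zero.mp hm
      subst this
      simpa using h.le
    | succ M ih =>
      intro ε hε
      obtain ⟨ε₁, hε1, hε1a, hε1b⟩ : ∃ e : ℝ, 0 < e ∧ e ≤ ε ∧ e ≤ ε * a 1 / 3 :=
        ⟨min ε (ε * a 1 / 3), lt_min hε (by positivity), min_le_left _ _, min_le_right _ _⟩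
      have hstep' : ∀ᶠ n in atTop,
          w (n - M) ≤ a 1 * w (n - M - 1) + (L + ε₁) * (1 - a 1) + ε₁ :=
        (tendsto_sub_atTop_nat M).eventually (EstepUP ε₁ hε1)
      have hcomb := (ih ε₁ hε1).and_eventually (hstep'.and (eventually_ge_atTop (M + 1)))
      refine hcomb.mono ?_
      rintro n ⟨hih, hst, hn⟩ m hm
      rcases Nat.lt_or_ge m (M + 1) with h | h
      · have := hih m (by omega)
        linarith
      · have hmeq : m = M + 1 := by omega
        subst hmeq
        have h1 : L - ε₁ ≤ w (n - M) := hih M le_rfl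
        have h2 : n - M - 1 = n - (M + 1) := by omega
        rw [← h2]
        have h3 : a 1 * (L - ε) ≤ a 1 * w (n - M - 1) := by
          linarith [hst, h1, hε1b, mul_nonneg a1pos.le hε1.le]
        exact le_of_mul_le_mul_left h3 a1pos
  have FDOWN : ∀ M : ℕ, ∀ ε : ℝ, 0 < ε → ∃ᶠ n in atTop, ∀ m ≤ M, w (n - m) ≤ l + ε := by
    intro M
    induction M with
    | zero =>
      intro ε hε
      have hfreq : ∃ᶠ n in atTop, w n < l + ε :=
        frequently_lt_of_liminf_lt hbddle.isCoboundedUnder_ge (by linarith)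
      refine hfreq.mono fun n h m hm => ?_
      have : m = 0 := Nat.le_zero.mp hm
      subst this
      simpa using h.le
    | succ M ih =>
      intro ε hε
      obtain ⟨ε₁, hε1, hε1a, hε1b⟩ : ∃ e : ℝ, 0 < e ∧ e ≤ ε ∧ e ≤ ε * a 1 / 3 :=
        ⟨min ε (ε * a 1 / 3), lt_min hε (by positivity), min_le_left _ _, min_le_right _ _⟩
      have hstep' : ∀ᶠ n in atTop,
          a 1 * w (n - M - 1) + (l - ε₁) * (1 - a 1) - ε₁ ≤ w (n - M) :=
        (tendsto_sub_atTop_nat M).eventually (EstepDOWN ε₁ hε1)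
      have hcomb := (ih ε₁ hε1).and_eventually (hstep'.and (eventually_ge_atTop (M + 1)))
      refine hcomb.mono ?_
      rintro n ⟨hih, hst, hn⟩ m hm
      rcases Nat.lt_or_ge m (M + 1) with h | h
      · have := hih m (by omega)
        linarith
      · have hmeq : m = M + 1 := by omega
        subst hmeq
        have h1 : w (n - M) ≤ l + ε₁ := hih M le_rfl
        have h2 : n - M - 1 = n - (M + 1) := by omega
        rw [← h2]
        have h3 : a 1 * w (n - M - 1) ≤ a 1 * (l + ε) := by
          linarith [hst, h1, hε1b, mul_nonneg a1pos.le hε1.le]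
        exact le_of_mul_le_mul_left h3 a1pos
  have hSr0 : ∀ K : ℕ, 1 ≤ ∑ m ∈ Finset.range (K + 1), r m := by
    intro K
    have h1 : r 0 ≤ ∑ m ∈ Finset.range (K + 1), r m :=
      Finset.single_le_sum (f := r) (fun i _ => hrnn i) (Finset.mem_range.mpr (by omega))
    linarith [hr0]
  have hLS : ∀ K : ℕ, L * ∑ m ∈ Finset.range (K + 1), r m ≤ 1 := by
    intro K
    apply efp_eps_le _ _ (by linarith [hSr0 K])
    intro ε hε
    obtain ⟨n, hn, hnK⟩ := ((FUP K ε hε).and_eventually (eventually_ge_atTop K)).exists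
    calc (L - ε) * ∑ m ∈ Finset.range (K + 1), r m
        = ∑ m ∈ Finset.range (K + 1), (L - ε) * r m := by rw [Finset.mul_sum]
      _ ≤ ∑ m ∈ Finset.range (K + 1), r m * w (n - m) := by
          apply Finset.sum_le_sum
          intro m hm
          simp only [Finset.mem_range] at hm
          rw [mul_comm]
          exact mul_le_mul_of_nonneg_left (hn m (by omega)) (hrnn m)
      _ ≤ ∑ m ∈ Finset.range (n + 1), r m * w (n - m) := by
          apply Finset.sum_le_sum_of_subset_of_nonneg
          · intro x hx
            simp only [Finset.mem_range] at *
            omega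
          · intro i _ _
            exact mul_nonneg (hrnn i) (wnn _)
      _ = 1 := keym n
  constructor
  · -- infinite type
    intro hns
    have hStend : Tendsto (fun K => ∑ m ∈ Finset.range (K + 1), r m) atTop atTop := by
      have h1 := (not_summable_iff_tendsto_nat_atTop_of_nonneg hrnn).mp hns
      exact h1.comp (tendsto_add_atTop_nat 1)
    have hL_le : L ≤ 0 := by
      by_contra hc
      push_neg at hc
      obtain ⟨K, hK⟩ := (hStend.eventually_ge_atTop (2 / L)).exists
      have h2 : L * (2 / L) ≤ L * ∑ m ∈ Finset.range (K + 1), r m :=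
        mul_le_mul_of_nonneg_left hK hc.le
      have h3 : L * (2 / L) = 2 := by field_simp
      rw [h3] at h2
      linarith [hLS K]
    exact tendsto_of_le_liminf_of_limsup_le hl0 hL_le hbddle hbddge
  · -- finite type
    intro hs
    have hStoμ : Tendsto (fun K => ∑ m ∈ Finset.range (K + 1), r m) atTop
        (nhds (∑' k, r k)) :=
      hs.hasSum.tendsto_sum_nat.comp (tendsto_add_atTop_nat 1)
    have hμ1 : 1 ≤ ∑' k, r k := by
      have h1 := Summable.sum_le_tsum (Finset.range 1) (fun i _ => hrnn i) hs
      simpa [hr0] using h1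
    have hμpos : (0:ℝ) < ∑' k, r k := by linarith
    have hLμ : L * ∑' k, r k ≤ 1 :=
      le_of_tendsto (tendsto_const_nhds.mul hStoμ) (Eventually.of_forall hLS)
    have hlow : ∀ K : ℕ, 1 ≤ l * (∑ m ∈ Finset.range (K + 1), r m)
        + (∑' k, r k - ∑ m ∈ Finset.range (K + 1), r m) := by
      intro K
      apply efp_eps_ge _ _ _ (by linarith [hSr0 K])
      intro ε hε
      obtain ⟨n, hn, hnK⟩ := ((FDOWN K ε hε).and_eventually (eventually_ge_atTop K)).exists
      have hsplit : (∑ m ∈ Finset.range (K + 1), r m * w (n - m))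
          + ∑ m ∈ Finset.Ico (K + 1) (n + 1), r m * w (n - m) = 1 := by
        rw [← keym n, Finset.range_eq_Ico, Finset.range_eq_Ico]
        exact Finset.sum_Ico_consecutive _ (Nat.zero_le (K + 1)) (by omega : K + 1 ≤ n + 1)
      have hfront : ∑ m ∈ Finset.range (K + 1), r m * w (n - m)
          ≤ (l + ε) * ∑ m ∈ Finset.range (K + 1), r m := by
        calc ∑ m ∈ Finset.range (K + 1), r m * w (n - m)
            ≤ ∑ m ∈ Finset.range (K + 1), r m * (l + ε) := by
              apply Finset.sum_le_sum
              intro m hm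
              simp only [Finset.mem_range] at hm
              exact mul_le_mul_of_nonneg_left (hn m (by omega)) (hrnn m)
          _ = (∑ m ∈ Finset.range (K + 1), r m) * (l + ε) := (Finset.sum_mul ..).symm
          _ = (l + ε) * ∑ m ∈ Finset.range (K + 1), r m := mul_comm _ _
      have htail : ∑ m ∈ Finset.Ico (K + 1) (n + 1), r m * w (n - m)
          ≤ ∑' k, r k - ∑ m ∈ Finset.range (K + 1), r m := by
        have t1 : ∑ m ∈ Finset.Ico (K + 1) (n + 1), r m * w (n - m)
            ≤ ∑ m ∈ Finset.Ico (K + 1) (n + 1), r m := by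
          apply Finset.sum_le_sum
          intro m _
          exact mul_le_of_le_one_right (hrnn m) (wle _)
        have t2 : (∑ m ∈ Finset.range (K + 1), r m)
            + ∑ m ∈ Finset.Ico (K + 1) (n + 1), r m
            = ∑ m ∈ Finset.range (n + 1), r m := by
          rw [Finset.range_eq_Ico, Finset.range_eq_Ico]
          exact Finset.sum_Ico_consecutive _ (Nat.zero_le (K + 1)) (by omega : K + 1 ≤ n + 1)
        have t3 : ∑ m ∈ Finset.range (n + 1), r m ≤ ∑' k, r k :=
          Summable.sum_le_tsum _ (fun i _ => hrnn i) hs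
        linarith
      linarith
    have hlμ : 1 ≤ l * ∑' k, r k := by
      have hten : Tendsto (fun K => l * (∑ m ∈ Finset.range (K + 1), r m)
          + (∑' k, r k - ∑ m ∈ Finset.range (K + 1), r m)) atTop
          (nhds (l * ∑' k, r k + (∑' k, r k - ∑' k, r k))) :=
        (tendsto_const_nhds.mul hStoμ).add (tendsto_const_nhds.sub hStoμ)
      have h2 := ge_of_tendsto hten (Eventually.of_forall hlow)
      simpa using h2
    have hfin1 : 1 / (∑' k, r k) ≤ l := by
      rw [div_le_iff₀ hμpos]
      linarith
    have hfin2 : L ≤ 1 / (∑' k, r k) := by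
      rw [le_div_iff₀ hμpos]
      linarith
    exact tendsto_of_le_liminf_of_limsup_le hfin1 hfin2 hbddle hbddge
end

section
/- Let κ(n) = −n·log 2 / log a_n and κ₊ = inf_n κ(n). If κ₊ > 0, then the conjugating map θ_α (the distribution function of the measure of maximal entropy of F_α) is κ₊-Hölder continuous: there is c > 0 with |θ_α(x) − θ_α(y)| ≤ c|x − y|^{κ₊} for all x, y ∈ [0,1]. Moreover, if κ₊ = 0 then θ_α is not Hölder continuous of any positive exponent. -/
open Real Finset Set

section A
variable {a t : ℕ → ℝ}

lemma tailSummable (hsummable : Summable (fun n => a (n + 1))) (n : ℕ) :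
    Summable (fun k => a (n + 1 + k)) := by
  have h := (summable_nat_add_iff (f := fun n => a (n + 1)) n).2 hsummable
  exact h.congr fun k => by ring_nf

lemma t_succ (hsummable : Summable (fun n => a (n + 1)))
    (ht : ∀ n, t n = ∑' k, a (n + k)) :
    ∀ n, 1 ≤ n → t n = a n + t (n + 1) := by
  intro n hn
  obtain ⟨m, rfl⟩ : ∃ m, n = m + 1 := ⟨n - 1, by omega⟩
  · rw [ht, ht]
    have hs : Summable (fun k => a (m + 1 + k)) := tailSummable hsummable m
    have h1 : a (m + 1 + 0) = a (m + 1) := by norm_num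
    rw [Summable.tsum_eq_zero_add hs, h1]
    congr 1
    exact tsum_congr fun k => by ring_nf

lemma t_ge_a (hpos : ∀ n ≥ 1, 0 < a n) (hsummable : Summable (fun n => a (n + 1)))
    (ht : ∀ n, t n = ∑' k, a (n + k)) :
    ∀ n, 1 ≤ n → a n ≤ t n := by
  intro n hn
  obtain ⟨m, rfl⟩ : ∃ m, n = m + 1 := ⟨n - 1, by omega⟩
  · rw [ht]
    have hs : Summable (fun k => a (m + 1 + k)) := tailSummable hsummable m
    have := Summable.le_tsum hs 0 (fun j _ => le_of_lt (hpos _ (by omega)))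
    simpa using this

lemma t_pos (hpos : ∀ n ≥ 1, 0 < a n) (hsummable : Summable (fun n => a (n + 1)))
    (ht : ∀ n, t n = ∑' k, a (n + k)) :
    ∀ n, 1 ≤ n → 0 < t n :=
  fun n hn => lt_of_lt_of_le (hpos n hn) (t_ge_a hpos hsummable ht n hn)

lemma t_one (hsum : ∑' n, a (n + 1) = 1) (ht : ∀ n, t n = ∑' k, a (n + k)) :
    t 1 = 1 := by
  rw [ht]
  rw [← hsum]
  exact tsum_congr fun k => by ring_nf

lemma t_succ_lt (hpos : ∀ n ≥ 1, 0 < a n) (hsummable : Summable (fun n => a (n + 1)))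
    (ht : ∀ n, t n = ∑' k, a (n + k)) :
    ∀ n, 1 ≤ n → t (n + 1) < t n := by
  intro n hn
  rw [t_succ hsummable ht n hn]
  linarith [hpos n hn]

lemma t_anti (hpos : ∀ n ≥ 1, 0 < a n) (hsummable : Summable (fun n => a (n + 1)))
    (ht : ∀ n, t n = ∑' k, a (n + k)) :
    ∀ m n, 1 ≤ m → m ≤ n → t n ≤ t m := by
  intro m n h1 h2
  induction n with
  | zero => omega
  | succ k ih =>
    rcases Nat.lt_or_ge m (k+1) with h | h
    · have hk : 1 ≤ k := by omega
      exact le_trans (le_of_lt (t_succ_lt hpos hsummable ht k hk)) (ih (by omega))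
    · have : m = k + 1 := by omega
      subst this; rfl

lemma t_le_one (hpos : ∀ n ≥ 1, 0 < a n) (hsummable : Summable (fun n => a (n + 1)))
    (hsum : ∑' n, a (n + 1) = 1) (ht : ∀ n, t n = ∑' k, a (n + k)) :
    ∀ n, 1 ≤ n → t n ≤ 1 := by
  intro n hn
  have := t_anti hpos hsummable ht 1 n le_rfl hn
  rwa [t_one hsum ht] at this

lemma t_tendsto (hsummable : Summable (fun n => a (n + 1)))
    (ht : ∀ n, t n = ∑' k, a (n + k)) :
    Filter.Tendsto (fun n => t (n + 1)) Filter.atTop (nhds 0) := by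
  have h := tendsto_sum_nat_add (fun n => a (n + 1))
  refine h.congr fun i => ?_
  rw [ht]
  exact tsum_congr fun k => by ring_nf

/-- digit existence -/
lemma digit_exists (hpos : ∀ n ≥ 1, 0 < a n) (hsummable : Summable (fun n => a (n + 1)))
    (hsum : ∑' n, a (n + 1) = 1) (ht : ∀ n, t n = ∑' k, a (n + k)) :
    ∀ x : ℝ, 0 < x → x ≤ 1 → ∃ j, 1 ≤ j ∧ t (j + 1) < x ∧ x ≤ t j := by
  intro x hx0 hx1
  have hex : ∃ n, t (n + 1) < x := by
    have := t_tendsto hsummable ht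
    have h2 := this.eventually (eventually_lt_nhds hx0)
    rcases h2.exists with ⟨n, hn⟩
    exact ⟨n, hn⟩
  classical
  let n0 := Nat.find hex
  have hfind : t (n0 + 1) < x := Nat.find_spec hex
  have hn0 : 1 ≤ n0 := by
    by_contra h
    have : n0 = 0 := by omega
    rw [this] at hfind
    rw [t_one hsum ht] at hfind
    linarith
  refine ⟨n0, hn0, hfind, ?_⟩
  have := Nat.find_min hex (m := n0 - 1) (by omega)
  push_neg at this
  have heq : n0 - 1 + 1 = n0 := by omega
  rwa [heq] at this

lemma digit_unique (hpos : ∀ n ≥ 1, 0 < a n) (hsummable : Summable (fun n => a (n + 1)))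
    (ht : ∀ n, t n = ∑' k, a (n + k)) {x : ℝ} {i j : ℕ}
    (hi : 1 ≤ i) (hj : 1 ≤ j) (hxi : t (i + 1) < x ∧ x ≤ t i)
    (hxj : t (j + 1) < x ∧ x ≤ t j) : i = j := by
  by_contra hne
  rcases Nat.lt_or_ge i j with h | h
  · have := t_anti hpos hsummable ht (i+1) j (by omega) (by omega)
    linarith [hxi.1, hxj.2]
  · have hj2 : j < i := by omega
    have := t_anti hpos hsummable ht (j+1) i (by omega) (by omega)
    linarith [hxj.1, hxi.2]

end A

section B

lemma geom_summable : Summable (fun k : ℕ => ((2:ℝ)⁻¹) ^ (k+1)) := by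
  have h : Summable (fun k : ℕ => ((2:ℝ)⁻¹) ^ k) :=
    summable_geometric_of_lt_one (by norm_num) (by norm_num)
  exact (h.mul_right ((2:ℝ)⁻¹)).congr fun k => (pow_succ _ _).symm

lemma term_norm_le {ℓ : ℕ → ℕ} (hℓ : ∀ i, 1 ≤ ℓ i) (k : ℕ) :
    ‖(-1:ℝ)^(k+1) * ((2:ℝ)⁻¹) ^ (∑ i ∈ Finset.range (k+1), ℓ i)‖ ≤ ((2:ℝ)⁻¹) ^ (k+1) := by
  have hS : k + 1 ≤ ∑ i ∈ Finset.range (k+1), ℓ i := by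
    calc k + 1 = ∑ _i ∈ Finset.range (k+1), 1 := by simp
      _ ≤ _ := Finset.sum_le_sum fun i _ => hℓ i
  have h1 : ‖(-1:ℝ)^(k+1) * ((2:ℝ)⁻¹) ^ (∑ i ∈ Finset.range (k+1), ℓ i)‖
      = ((2:ℝ)⁻¹) ^ (∑ i ∈ Finset.range (k+1), ℓ i) := by
    rw [norm_mul, norm_pow, norm_neg, norm_one, one_pow, one_mul, norm_pow, norm_inv,
      Real.norm_two]
  rw [h1]
  exact pow_le_pow_of_le_one (by norm_num) (by norm_num) hS

/-- summability of the theta series -/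
lemma series_summable {ℓ : ℕ → ℕ} (hℓ : ∀ i, 1 ≤ ℓ i) :
    Summable (fun k : ℕ => (-1:ℝ)^(k+1) * ((2:ℝ)⁻¹) ^ (∑ i ∈ Finset.range (k+1), ℓ i)) := by
  apply Summable.of_norm
  exact Summable.of_nonneg_of_le (fun k => norm_nonneg _) (term_norm_le hℓ) geom_summable

lemma tsum_half_pow : ∑' k : ℕ, ((2:ℝ)⁻¹) ^ (k+1) = 1 := by
  have h : ∀ k : ℕ, ((2:ℝ)⁻¹) ^ (k+1) = (2:ℝ)⁻¹ * ((2:ℝ)⁻¹)^k := fun k => by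
    rw [pow_succ]; ring
  rw [tsum_congr h, tsum_mul_left, tsum_geometric_of_lt_one (by norm_num) (by norm_num)]
  norm_num

/-- bound on the infinite series -/
lemma series_abs_le {ℓ : ℕ → ℕ} (hℓ : ∀ i, 1 ≤ ℓ i) :
    |∑' k : ℕ, (-1:ℝ)^(k+1) * ((2:ℝ)⁻¹) ^ (∑ i ∈ Finset.range (k+1), ℓ i)| ≤ 1 := by
  have h1 := norm_tsum_le_tsum_norm (f := fun k : ℕ =>
    (-1:ℝ)^(k+1) * ((2:ℝ)⁻¹) ^ (∑ i ∈ Finset.range (k+1), ℓ i)) (series_summable hℓ).norm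
  rw [Real.norm_eq_abs] at h1
  refine h1.trans ?_
  exact (Summable.tsum_le_tsum (term_norm_le hℓ) (series_summable hℓ).norm geom_summable).trans_eq
    tsum_half_pow

/-- bound on the finite sums -/
lemma finsum_abs_le {ℓ : ℕ → ℕ} (hℓ : ∀ i, 1 ≤ ℓ i) (m : ℕ) :
    |∑ k ∈ Finset.range m, (-1:ℝ)^(k+1) * ((2:ℝ)⁻¹) ^ (∑ i ∈ Finset.range (k+1), ℓ i)| ≤ 1 := by
  refine (Finset.abs_sum_le_sum_abs _ _).trans ?_
  have hb := Finset.sum_le_sum (f := fun k =>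
      |(-1:ℝ)^(k+1) * ((2:ℝ)⁻¹) ^ (∑ i ∈ Finset.range (k+1), ℓ i)|)
      (g := fun k => ((2:ℝ)⁻¹) ^ (k+1)) (s := Finset.range m)
      (fun k _ => by have := term_norm_le hℓ k; rwa [Real.norm_eq_abs] at this)
  refine hb.trans ?_
  exact (Summable.sum_le_tsum _ (fun k _ => by positivity) geom_summable).trans_eq tsum_half_pow

/-- shift identity, finite case -/
lemma sum_shift (m : ℕ) (ℓ : ℕ → ℕ) :
    -2 * ∑ k ∈ Finset.range (m+1), (-1:ℝ)^(k+1) * ((2:ℝ)⁻¹) ^ (∑ i ∈ Finset.range (k+1), ℓ i)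
      = ((2:ℝ)⁻¹) ^ (ℓ 0) *
        (2 - (-2 * ∑ k ∈ Finset.range m, (-1:ℝ)^(k+1) *
          ((2:ℝ)⁻¹) ^ (∑ i ∈ Finset.range (k+1), ℓ (i+1)))) := by
  rw [Finset.sum_range_succ']
  have h2 : ∀ k ∈ Finset.range m, (-1:ℝ)^(k+1+1) * ((2:ℝ)⁻¹) ^ (∑ i ∈ Finset.range (k+1+1), ℓ i)
      = ((2:ℝ)⁻¹) ^ (ℓ 0) * (-((-1:ℝ)^(k+1) * ((2:ℝ)⁻¹) ^ (∑ i ∈ Finset.range (k+1), ℓ (i+1))))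
      := by
    intro k _
    rw [Finset.sum_range_succ' ℓ (k+1), pow_add]
    ring
  rw [Finset.sum_congr rfl h2, ← Finset.mul_sum, Finset.sum_neg_distrib]
  have h3 : (∑ i ∈ Finset.range (0+1), ℓ i) = ℓ 0 := by simp
  rw [h3]
  ring

/-- shift identity, infinite case -/
lemma tsum_shift (ℓ : ℕ → ℕ) (hℓ : ∀ i, 1 ≤ ℓ i) :
    -2 * ∑' k : ℕ, (-1:ℝ)^(k+1) * ((2:ℝ)⁻¹) ^ (∑ i ∈ Finset.range (k+1), ℓ i)
      = ((2:ℝ)⁻¹) ^ (ℓ 0) *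
        (2 - (-2 * ∑' k : ℕ, (-1:ℝ)^(k+1) *
          ((2:ℝ)⁻¹) ^ (∑ i ∈ Finset.range (k+1), ℓ (i+1)))) := by
  rw [Summable.tsum_eq_zero_add (series_summable hℓ)]
  have h2 : ∀ k : ℕ, (-1:ℝ)^(k+1+1) * ((2:ℝ)⁻¹) ^ (∑ i ∈ Finset.range (k+1+1), ℓ i)
      = ((2:ℝ)⁻¹) ^ (ℓ 0) * (-((-1:ℝ)^(k+1) * ((2:ℝ)⁻¹) ^ (∑ i ∈ Finset.range (k+1), ℓ (i+1))))
      := by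
    intro k
    rw [Finset.sum_range_succ' ℓ (k+1), pow_add]
    ring
  rw [tsum_congr h2, tsum_mul_left, tsum_neg]
  have h3 : (∑ i ∈ Finset.range (0+1), ℓ i) = ℓ 0 := by simp
  rw [h3]
  ring

end B
section C
variable {a t : ℕ → ℝ} {L θ : ℝ → ℝ}

noncomputable def dig (t : ℕ → ℝ) (x : ℝ) : ℕ :=
  sInf {j | 1 ≤ j ∧ t (j + 1) < x ∧ x ≤ t j}

lemma dig_spec (hpos : ∀ n ≥ 1, 0 < a n) (hsummable : Summable (fun n => a (n + 1)))
    (hsum : ∑' n, a (n + 1) = 1) (ht : ∀ n, t n = ∑' k, a (n + k))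
    {x : ℝ} (h0 : 0 < x) (h1 : x ≤ 1) :
    1 ≤ dig t x ∧ t (dig t x + 1) < x ∧ x ≤ t (dig t x) := by
  have hne : {j | 1 ≤ j ∧ t (j + 1) < x ∧ x ≤ t j}.Nonempty := by
    obtain ⟨j, hj⟩ := digit_exists hpos hsummable hsum ht x h0 h1
    exact ⟨j, hj⟩
  exact Nat.sInf_mem hne

lemma dig_eq (hpos : ∀ n ≥ 1, 0 < a n) (hsummable : Summable (fun n => a (n + 1)))
    (hsum : ∑' n, a (n + 1) = 1) (ht : ∀ n, t n = ∑' k, a (n + k))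
    {x : ℝ} {j : ℕ} (hj : 1 ≤ j) (h1 : t (j + 1) < x) (h2 : x ≤ t j) :
    dig t x = j := by
  have h0 : 0 < x := lt_trans (t_pos hpos hsummable ht (j+1) (by omega)) h1
  have hx1 : x ≤ 1 := le_trans h2 (t_le_one hpos hsummable hsum ht j hj)
  obtain ⟨hd1, hd2, hd3⟩ := dig_spec hpos hsummable hsum ht h0 hx1
  exact digit_unique hpos hsummable ht hd1 hj ⟨hd2, hd3⟩ ⟨h1, h2⟩

lemma L_map (hpos : ∀ n ≥ 1, 0 < a n) (hsummable : Summable (fun n => a (n + 1)))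
    (ht : ∀ n, t n = ∑' k, a (n + k))
    (hL : ∀ n ≥ 1, ∀ y ∈ Set.Ioc (t (n + 1)) (t n), L y = (t n - y) / a n)
    {x : ℝ} {j : ℕ} (hj : 1 ≤ j) (h1 : t (j + 1) < x) (h2 : x ≤ t j) :
    L x = (t j - x) / a j ∧ 0 ≤ L x ∧ L x < 1 ∧
      a j * L x = t j - x ∧ a j * (1 - L x) = x - t (j + 1) := by
  have hLx := hL j hj x ⟨h1, h2⟩
  have haj := hpos j hj
  have hts := t_succ hsummable ht j hj
  refine ⟨hLx, ?_, ?_, ?_, ?_⟩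
  · rw [hLx]
    exact div_nonneg (by linarith) haj.le
  · rw [hLx, div_lt_one haj]
    linarith
  · rw [hLx]
    field_simp
  · rw [hLx]
    field_simp
    linarith

lemma orbit_good (hpos : ∀ n ≥ 1, 0 < a n) (hsummable : Summable (fun n => a (n + 1)))
    (hsum : ∑' n, a (n + 1) = 1) (ht : ∀ n, t n = ∑' k, a (n + k))
    (hL : ∀ n ≥ 1, ∀ y ∈ Set.Ioc (t (n + 1)) (t n), L y = (t n - y) / a n)
    {z : ℝ} (h0 : 0 < z) (h1 : z ≤ 1) :
    ∀ n, (∀ i, i ≤ n → L^[i] z ≠ 0) → 0 < L^[n] z ∧ L^[n] z ≤ 1 := by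
  intro n
  induction n with
  | zero => intro _; exact ⟨h0, h1⟩
  | succ k ih =>
    intro hne
    have hk := ih (fun i hi => hne i (by omega))
    obtain ⟨j, hj, hj1, hj2⟩ := digit_exists hpos hsummable hsum ht (L^[k] z) hk.1 hk.2
    have hLm := L_map hpos hsummable ht hL hj hj1 hj2
    have hne' := hne (k+1) le_rfl
    rw [Function.iterate_succ_apply'] at hne' ⊢
    exact ⟨lt_of_le_of_ne hLm.2.1 (Ne.symm hne'), hLm.2.2.1.le⟩

lemma theta_rec (hpos : ∀ n ≥ 1, 0 < a n) (hsummable : Summable (fun n => a (n + 1)))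
    (hsum : ∑' n, a (n + 1) = 1) (ht : ∀ n, t n = ∑' k, a (n + k))
    (hL : ∀ n ≥ 1, ∀ y ∈ Set.Ioc (t (n + 1)) (t n), L y = (t n - y) / a n)
    (hθ0 : θ 0 = 0)
    (hθinf : ∀ x ∈ Set.Ioc (0 : ℝ) 1, ∀ ℓ : ℕ → ℕ,
      (∀ j, 1 ≤ ℓ j ∧ L^[j] x ∈ Set.Ioc (t (ℓ j + 1)) (t (ℓ j))) →
      θ x = -2 * ∑' k : ℕ, (-1 : ℝ) ^ (k + 1) *
        ((2 : ℝ)⁻¹) ^ (∑ i ∈ Finset.range (k + 1), ℓ i))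
    (hθfin : ∀ x ∈ Set.Ioc (0 : ℝ) 1, ∀ m : ℕ, ∀ ℓ : ℕ → ℕ,
      (∀ j < m, 1 ≤ ℓ j ∧ L^[j] x ∈ Set.Ioc (t (ℓ j + 1)) (t (ℓ j))) →
      L^[m] x = 0 →
      θ x = -2 * ∑ k ∈ Finset.range m, (-1 : ℝ) ^ (k + 1) *
        ((2 : ℝ)⁻¹) ^ (∑ i ∈ Finset.range (k + 1), ℓ i))
    {x : ℝ} {j : ℕ} (hj : 1 ≤ j) (hx1 : t (j + 1) < x) (hx2 : x ≤ t j) :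
    θ x = ((2:ℝ)⁻¹) ^ j * (2 - θ (L x)) := by
  classical
  have h0 : 0 < x := lt_trans (t_pos hpos hsummable ht (j+1) (by omega)) hx1
  have h1 : x ≤ 1 := le_trans hx2 (t_le_one hpos hsummable hsum ht j hj)
  have hxmem : x ∈ Set.Ioc (0:ℝ) 1 := ⟨h0, h1⟩
  have hdx : dig t x = j := dig_eq hpos hsummable hsum ht hj hx1 hx2
  have hLm := L_map hpos hsummable ht hL hj hx1 hx2
  by_cases hz : L x = 0
  · rw [hz, hθ0]
    have hfin := hθfin x hxmem 1 (fun _ => j) ?_ ?_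
    · rw [hfin]
      simp only [Finset.sum_range_one, Finset.sum_range_succ]
      norm_num
      ring
    · intro i hi
      have : i = 0 := by omega
      subst this
      exact ⟨hj, hx1, hx2⟩
    · simpa using hz
  · have hLx0 : 0 < L x := lt_of_le_of_ne hLm.2.1 (Ne.symm hz)
    have hLx1 : L x ≤ 1 := hLm.2.2.1.le
    by_cases hfin : ∃ m, L^[m] x = 0
    · set m0 := Nat.find hfin with hm0def
      have hspec : L^[m0] x = 0 := Nat.find_spec hfin
      have hne : ∀ i, i < m0 → L^[i] x ≠ 0 := fun i hi => Nat.find_min hfin hi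
      have hm0ge : 2 ≤ m0 := by
        by_contra hcon
        push_neg at hcon
        interval_cases m0
        · simp only [Function.iterate_zero, id] at hspec
          exact absurd hspec (ne_of_gt h0)
        · rw [Function.iterate_one] at hspec
          exact hz hspec
      have hgood : ∀ i, i < m0 → 0 < L^[i] x ∧ L^[i] x ≤ 1 := fun i hi =>
        orbit_good hpos hsummable hsum ht hL h0 h1 i
          (fun i' hi' => hne i' (lt_of_le_of_lt hi' hi))
      set ℓ : ℕ → ℕ := fun i => dig t (L^[i] x) with hℓdef
      have hdig : ∀ i, i < m0 → 1 ≤ ℓ i ∧ L^[i] x ∈ Set.Ioc (t (ℓ i + 1)) (t (ℓ i)) := by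
        intro i hi
        obtain ⟨hg0, hg1⟩ := hgood i hi
        obtain ⟨hd1, hd2, hd3⟩ := dig_spec hpos hsummable hsum ht hg0 hg1
        exact ⟨hd1, hd2, hd3⟩
      obtain ⟨m, hm⟩ : ∃ m, m0 = m + 1 := ⟨m0 - 1, by omega⟩
      have hx_eq := hθfin x hxmem (m+1) ℓ (fun i hi => hdig i (by omega)) (hm ▸ hspec)
      have hLx_eq := hθfin (L x) ⟨hLx0, hLx1⟩ m (fun i => ℓ (i+1)) ?_ ?_
      · rw [hx_eq, hLx_eq]
        have hℓ0 : ℓ 0 = j := by simpa [hℓdef] using hdx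
        rw [← hℓ0]
        exact sum_shift m ℓ
      · intro i hi
        have h := hdig (i+1) (by omega)
        rwa [Function.iterate_succ_apply] at h
      · rw [← Function.iterate_succ_apply]
        show L^[m + 1] x = 0
        exact hm ▸ hspec
    · push_neg at hfin
      have hgood : ∀ i, 0 < L^[i] x ∧ L^[i] x ≤ 1 := fun i =>
        orbit_good hpos hsummable hsum ht hL h0 h1 i (fun i' _ => hfin i')
      set ℓ : ℕ → ℕ := fun i => dig t (L^[i] x) with hℓdef
      have hdig : ∀ i, 1 ≤ ℓ i ∧ L^[i] x ∈ Set.Ioc (t (ℓ i + 1)) (t (ℓ i)) := by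
        intro i
        obtain ⟨hg0, hg1⟩ := hgood i
        obtain ⟨hd1, hd2, hd3⟩ := dig_spec hpos hsummable hsum ht hg0 hg1
        exact ⟨hd1, hd2, hd3⟩
      have hx_eq := hθinf x hxmem ℓ hdig
      have hLx_eq := hθinf (L x) ⟨hLx0, hLx1⟩ (fun i => ℓ (i+1)) ?_
      · rw [hx_eq, hLx_eq]
        have hℓ0 : ℓ 0 = j := by simpa [hℓdef] using hdx
        rw [← hℓ0]
        exact tsum_shift ℓ (fun i => (hdig i).1)
      · intro i
        have h := hdig (i+1)
        rwa [Function.iterate_succ_apply] at h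

end C
section D
variable {a t : ℕ → ℝ} {L θ : ℝ → ℝ}

lemma theta_abs_le (hpos : ∀ n ≥ 1, 0 < a n) (hsummable : Summable (fun n => a (n + 1)))
    (hsum : ∑' n, a (n + 1) = 1) (ht : ∀ n, t n = ∑' k, a (n + k))
    (hL : ∀ n ≥ 1, ∀ y ∈ Set.Ioc (t (n + 1)) (t n), L y = (t n - y) / a n)
    (hθ0 : θ 0 = 0)
    (hθinf : ∀ x ∈ Set.Ioc (0 : ℝ) 1, ∀ ℓ : ℕ → ℕ,
      (∀ j, 1 ≤ ℓ j ∧ L^[j] x ∈ Set.Ioc (t (ℓ j + 1)) (t (ℓ j))) →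
      θ x = -2 * ∑' k : ℕ, (-1 : ℝ) ^ (k + 1) *
        ((2 : ℝ)⁻¹) ^ (∑ i ∈ Finset.range (k + 1), ℓ i))
    (hθfin : ∀ x ∈ Set.Ioc (0 : ℝ) 1, ∀ m : ℕ, ∀ ℓ : ℕ → ℕ,
      (∀ j < m, 1 ≤ ℓ j ∧ L^[j] x ∈ Set.Ioc (t (ℓ j + 1)) (t (ℓ j))) →
      L^[m] x = 0 →
      θ x = -2 * ∑ k ∈ Finset.range m, (-1 : ℝ) ^ (k + 1) *
        ((2 : ℝ)⁻¹) ^ (∑ i ∈ Finset.range (k + 1), ℓ i)) :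
    ∀ x : ℝ, 0 ≤ x → x ≤ 1 → |θ x| ≤ 2 := by
  intro x h0 h1
  rcases eq_or_lt_of_le h0 with h | h0'
  · rw [← h, hθ0]; norm_num
  · classical
    by_cases hfin : ∃ m, L^[m] x = 0
    · set m0 := Nat.find hfin with hm0def
      have hspec : L^[m0] x = 0 := Nat.find_spec hfin
      have hne : ∀ i, i < m0 → L^[i] x ≠ 0 := fun i hi => Nat.find_min hfin hi
      have hgood : ∀ i, i < m0 → 0 < L^[i] x ∧ L^[i] x ≤ 1 := fun i hi =>
        orbit_good hpos hsummable hsum ht hL h0' h1 i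
          (fun i' hi' => hne i' (lt_of_le_of_lt hi' hi))
      set ℓ' : ℕ → ℕ := fun i => if i < m0 then dig t (L^[i] x) else 1 with hℓdef
      have hℓ1 : ∀ i, 1 ≤ ℓ' i := by
        intro i
        simp only [hℓdef]
        split
        · rename_i hi
          exact (dig_spec hpos hsummable hsum ht (hgood i hi).1 (hgood i hi).2).1
        · exact le_rfl
      have hdig : ∀ i, i < m0 → 1 ≤ ℓ' i ∧ L^[i] x ∈ Set.Ioc (t (ℓ' i + 1)) (t (ℓ' i)) := by
        intro i hi
        have hif : ℓ' i = dig t (L^[i] x) := by simp [hℓdef, hi]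
        obtain ⟨hd1, hd2, hd3⟩ := dig_spec hpos hsummable hsum ht (hgood i hi).1 (hgood i hi).2
        rw [hif]
        exact ⟨hd1, hd2, hd3⟩
      have hx_eq := hθfin x ⟨h0', h1⟩ m0 ℓ' hdig hspec
      rw [hx_eq, abs_mul]
      have := finsum_abs_le hℓ1 m0
      calc |(-2 : ℝ)| * |∑ k ∈ Finset.range m0, (-1:ℝ)^(k+1) *
          ((2:ℝ)⁻¹) ^ (∑ i ∈ Finset.range (k+1), ℓ' i)| ≤ 2 * 1 := by
            rw [abs_neg, abs_two]
            exact mul_le_mul_of_nonneg_left this (by norm_num)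
        _ = 2 := by norm_num
    · push_neg at hfin
      have hgood : ∀ i, 0 < L^[i] x ∧ L^[i] x ≤ 1 := fun i =>
        orbit_good hpos hsummable hsum ht hL h0' h1 i (fun i' _ => hfin i')
      set ℓ : ℕ → ℕ := fun i => dig t (L^[i] x) with hℓdef
      have hdig : ∀ i, 1 ≤ ℓ i ∧ L^[i] x ∈ Set.Ioc (t (ℓ i + 1)) (t (ℓ i)) := by
        intro i
        obtain ⟨hd1, hd2, hd3⟩ := dig_spec hpos hsummable hsum ht (hgood i).1 (hgood i).2
        exact ⟨hd1, hd2, hd3⟩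
      have hx_eq := hθinf x ⟨h0', h1⟩ ℓ hdig
      rw [hx_eq, abs_mul]
      have := series_abs_le (fun i => (hdig i).1)
      calc |(-2 : ℝ)| * |∑' k : ℕ, (-1:ℝ)^(k+1) *
          ((2:ℝ)⁻¹) ^ (∑ i ∈ Finset.range (k+1), ℓ i)| ≤ 2 * 1 := by
            rw [abs_neg, abs_two]
            exact mul_le_mul_of_nonneg_left this (by norm_num)
        _ = 2 := by norm_num
end D
section E
variable {a t : ℕ → ℝ} {L θ : ℝ → ℝ}
variable (hpos : ∀ n ≥ 1, 0 < a n) (hsummable : Summable (fun n => a (n + 1)))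
    (hsum : ∑' n, a (n + 1) = 1) (ht : ∀ n, t n = ∑' k, a (n + k))
    (hL : ∀ n ≥ 1, ∀ y ∈ Set.Ioc (t (n + 1)) (t n), L y = (t n - y) / a n)
    (hθ0 : θ 0 = 0)
    (hθinf : ∀ x ∈ Set.Ioc (0 : ℝ) 1, ∀ ℓ : ℕ → ℕ,
      (∀ j, 1 ≤ ℓ j ∧ L^[j] x ∈ Set.Ioc (t (ℓ j + 1)) (t (ℓ j))) →
      θ x = -2 * ∑' k : ℕ, (-1 : ℝ) ^ (k + 1) *
        ((2 : ℝ)⁻¹) ^ (∑ i ∈ Finset.range (k + 1), ℓ i))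
    (hθfin : ∀ x ∈ Set.Ioc (0 : ℝ) 1, ∀ m : ℕ, ∀ ℓ : ℕ → ℕ,
      (∀ j < m, 1 ≤ ℓ j ∧ L^[j] x ∈ Set.Ioc (t (ℓ j + 1)) (t (ℓ j))) →
      L^[m] x = 0 →
      θ x = -2 * ∑ k ∈ Finset.range m, (-1 : ℝ) ^ (k + 1) *
        ((2 : ℝ)⁻¹) ^ (∑ i ∈ Finset.range (k + 1), ℓ i))

include hpos hsummable hsum ht hL hθ0 hθinf hθfin

lemma theta_nonneg : ∀ x : ℝ, 0 ≤ x → x ≤ 1 → 0 ≤ θ x := by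
  intro x h0 h1
  rcases eq_or_lt_of_le h0 with h | h0'
  · rw [← h, hθ0]
  · obtain ⟨j, hj, hj1, hj2⟩ := digit_exists hpos hsummable hsum ht x h0' h1
    rw [theta_rec hpos hsummable hsum ht hL hθ0 hθinf hθfin hj hj1 hj2]
    have hLm := L_map hpos hsummable ht hL hj hj1 hj2
    have hLb := theta_abs_le hpos hsummable hsum ht hL hθ0 hθinf hθfin (L x)
      hLm.2.1 hLm.2.2.1.le
    have h2 : (0:ℝ) ≤ 2 - θ (L x) := by
      have := abs_le.1 hLb
      linarith [this.2]
    positivity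

lemma theta_le_one : ∀ x : ℝ, 0 ≤ x → x ≤ 1 → θ x ≤ 1 := by
  intro x h0 h1
  rcases eq_or_lt_of_le h0 with h | h0'
  · rw [← h, hθ0]; norm_num
  · obtain ⟨j, hj, hj1, hj2⟩ := digit_exists hpos hsummable hsum ht x h0' h1
    rw [theta_rec hpos hsummable hsum ht hL hθ0 hθinf hθfin hj hj1 hj2]
    have hLm := L_map hpos hsummable ht hL hj hj1 hj2
    have hLnn := theta_nonneg hpos hsummable hsum ht hL hθ0 hθinf hθfin (L x)
      hLm.2.1 hLm.2.2.1.le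
    have hq : ((2:ℝ)⁻¹) ^ j ≤ (2:ℝ)⁻¹ := by
      calc ((2:ℝ)⁻¹) ^ j ≤ ((2:ℝ)⁻¹) ^ 1 :=
        pow_le_pow_of_le_one (by norm_num) (by norm_num) hj
      _ = (2:ℝ)⁻¹ := pow_one _
    calc ((2:ℝ)⁻¹) ^ j * (2 - θ (L x)) ≤ ((2:ℝ)⁻¹) ^ j * 2 := by
          apply mul_le_mul_of_nonneg_left (by linarith) (by positivity)
      _ ≤ (2:ℝ)⁻¹ * 2 := by nlinarith
      _ = 1 := by norm_num

lemma theta_Ioc {x : ℝ} {j : ℕ} (hj : 1 ≤ j) (hx1 : t (j + 1) < x) (hx2 : x ≤ t j) :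
    ((2:ℝ)⁻¹) ^ j ≤ θ x ∧ θ x ≤ 2 * ((2:ℝ)⁻¹) ^ j := by
  rw [theta_rec hpos hsummable hsum ht hL hθ0 hθinf hθfin hj hx1 hx2]
  have hLm := L_map hpos hsummable ht hL hj hx1 hx2
  have hLnn := theta_nonneg hpos hsummable hsum ht hL hθ0 hθinf hθfin (L x)
    hLm.2.1 hLm.2.2.1.le
  have hLle := theta_le_one hpos hsummable hsum ht hL hθ0 hθinf hθfin (L x)
    hLm.2.1 hLm.2.2.1.le
  constructor
  · calc ((2:ℝ)⁻¹) ^ j = ((2:ℝ)⁻¹) ^ j * 1 := by ring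
      _ ≤ ((2:ℝ)⁻¹) ^ j * (2 - θ (L x)) := by
          apply mul_le_mul_of_nonneg_left (by linarith) (by positivity)
  · calc ((2:ℝ)⁻¹) ^ j * (2 - θ (L x)) ≤ ((2:ℝ)⁻¹) ^ j * 2 := by
          apply mul_le_mul_of_nonneg_left (by linarith) (by positivity)
      _ = 2 * ((2:ℝ)⁻¹) ^ j := by ring

lemma theta_t {j : ℕ} (hj : 1 ≤ j) : θ (t j) = 2 * ((2:ℝ)⁻¹) ^ j := by
  have hlt := t_succ_lt hpos hsummable ht j hj
  have hrec := theta_rec hpos hsummable hsum ht hL hθ0 hθinf hθfin hj hlt le_rfl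
  have hLm := L_map hpos hsummable ht hL hj hlt (le_refl (t j))
  have hL0' : L (t j) = 0 := by
    rw [hLm.1]
    simp
  rw [hrec, hL0', hθ0]
  ring

/-- Lemma B : θ is at most `2⁻¹ ^ m` on `[0, t (m+1)]`. -/
lemma lemB (m : ℕ) : ∀ z : ℝ, 0 ≤ z → z ≤ t (m + 1) → θ z ≤ ((2:ℝ)⁻¹) ^ m := by
  intro z h0 h1
  rcases eq_or_lt_of_le h0 with h | h0'
  · rw [← h, hθ0]; positivity
  · have hz1 : z ≤ 1 := h1.trans (t_le_one hpos hsummable hsum ht (m+1) (by omega))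
    obtain ⟨j, hj, hj1, hj2⟩ := digit_exists hpos hsummable hsum ht z h0' hz1
    have hjm : m + 1 ≤ j := by
      by_contra hcon
      push_neg at hcon
      have : t (m + 1) ≤ t (j + 1) :=
        t_anti hpos hsummable ht (j+1) (m+1) (by omega) (by omega)
      linarith
    have := (theta_Ioc hpos hsummable hsum ht hL hθ0 hθinf hθfin hj hj1 hj2).2
    calc θ z ≤ 2 * ((2:ℝ)⁻¹) ^ j := this
      _ ≤ 2 * ((2:ℝ)⁻¹) ^ (m + 1) := by
          apply mul_le_mul_of_nonneg_left
            (pow_le_pow_of_le_one (by norm_num) (by norm_num) hjm) (by norm_num)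
      _ = ((2:ℝ)⁻¹) ^ m := by
          rw [pow_succ]
          ring

end E
section F
variable {a t : ℕ → ℝ} {L θ : ℝ → ℝ} {κ : ℝ}

lemma a_lt_one (hpos : ∀ n ≥ 1, 0 < a n) (hsummable : Summable (fun n => a (n + 1)))
    (hsum : ∑' n, a (n + 1) = 1) : ∀ m, 1 ≤ m → a m < 1 := by
  intro m hm
  have hsub : ∑ k ∈ ({m - 1, m} : Finset ℕ), a (k + 1) ≤ ∑' n, a (n + 1) :=
    Summable.sum_le_tsum _ (fun k _ => (hpos (k+1) (by omega)).le) hsummable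
  rw [Finset.sum_pair (by omega : m - 1 ≠ m), hsum] at hsub
  have h1 : m - 1 + 1 = m := by omega
  rw [h1] at hsub
  have := hpos (m + 1) (by omega)
  linarith

lemma kappa_term_pos (hpos : ∀ n ≥ 1, 0 < a n) (hsummable : Summable (fun n => a (n + 1)))
    (hsum : ∑' n, a (n + 1) = 1) (n : ℕ) :
    0 < -(((n : ℝ) + 1) * Real.log 2) / Real.log (a (n + 1)) := by
  have hlog : Real.log (a (n + 1)) < 0 :=
    Real.log_neg (hpos (n+1) (by omega)) (a_lt_one hpos hsummable hsum (n+1) (by omega))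
  apply div_pos_of_neg_of_neg _ hlog
  have h2 : (0:ℝ) < ((n : ℝ) + 1) * Real.log 2 := by
    apply mul_pos (by positivity) (Real.log_pos (by norm_num))
  linarith

lemma kappa_le (hpos : ∀ n ≥ 1, 0 < a n) (hsummable : Summable (fun n => a (n + 1)))
    (hsum : ∑' n, a (n + 1) = 1)
    (hκ : κ = ⨅ n : ℕ, (-(((n : ℝ) + 1) * Real.log 2) / Real.log (a (n + 1)))) (n : ℕ) :
    κ ≤ -(((n : ℝ) + 1) * Real.log 2) / Real.log (a (n + 1)) := by
  rw [hκ]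
  apply ciInf_le
  exact ⟨0, fun y hy => by
    obtain ⟨i, rfl⟩ := hy
    exact (kappa_term_pos hpos hsummable hsum i).le⟩

lemma a_ge (hpos : ∀ n ≥ 1, 0 < a n) (hsummable : Summable (fun n => a (n + 1)))
    (hsum : ∑' n, a (n + 1) = 1)
    (hκ : κ = ⨅ n : ℕ, (-(((n : ℝ) + 1) * Real.log 2) / Real.log (a (n + 1))))
    (hκpos : 0 < κ) :
    ∀ n : ℕ, 1 ≤ n → (2:ℝ) ^ (-(n:ℝ)/κ) ≤ a n := by
  intro n hn
  obtain ⟨m, rfl⟩ : ∃ m, n = m + 1 := ⟨n - 1, by omega⟩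
  have hle := kappa_le hpos hsummable hsum hκ m
  have hlog : Real.log (a (m + 1)) < 0 :=
    Real.log_neg (hpos (m+1) (by omega)) (a_lt_one hpos hsummable hsum (m+1) (by omega))
  rw [le_div_iff_of_neg hlog] at hle
  -- hle : -((m+1) * log 2) ≤ κ * log (a (m+1))
  have h2 : -(((m:ℝ) + 1) * Real.log 2) / κ ≤ Real.log (a (m + 1)) := by
    rw [div_le_iff₀ hκpos]
    linarith [hle]
  have h3 : (2:ℝ) ^ (-(((m+1:ℕ)):ℝ)/κ) = Real.exp (-(((m:ℝ) + 1) * Real.log 2) / κ) := by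
    rw [Real.rpow_def_of_pos (by norm_num : (0:ℝ) < 2)]
    congr 1
    push_cast
    ring
  rw [h3]
  calc Real.exp (-(((m:ℝ) + 1) * Real.log 2) / κ) ≤ Real.exp (Real.log (a (m + 1))) :=
        Real.exp_le_exp.2 h2
    _ = a (m + 1) := Real.exp_log (hpos (m+1) (by omega))

noncomputable def delta (κ : ℝ) (n : ℕ) : ℝ := (2:ℝ) ^ (-((n:ℝ) + 1)/κ)

lemma delta_pos (κ : ℝ) (n : ℕ) : 0 < delta κ n :=
  Real.rpow_pos_of_pos (by norm_num) _

lemma delta_anti (hκpos : 0 < κ) {m n : ℕ} (h : m ≤ n) : delta κ n ≤ delta κ m := by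
  apply Real.rpow_le_rpow_of_exponent_le (by norm_num)
  rw [div_le_div_iff_of_pos_right hκpos]
  have : (m:ℝ) ≤ n := by exact_mod_cast h
  linarith

lemma delta_le_a (hpos : ∀ n ≥ 1, 0 < a n) (hsummable : Summable (fun n => a (n + 1)))
    (hsum : ∑' n, a (n + 1) = 1)
    (hκ : κ = ⨅ n : ℕ, (-(((n : ℝ) + 1) * Real.log 2) / Real.log (a (n + 1))))
    (hκpos : 0 < κ) {m n : ℕ} (hm : 1 ≤ m) (hmn : m ≤ n + 1) :
    delta κ n ≤ a m := by
  have h1 : delta κ n ≤ (2:ℝ) ^ (-(m:ℝ)/κ) := by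
    apply Real.rpow_le_rpow_of_exponent_le (by norm_num)
    rw [div_le_div_iff_of_pos_right hκpos]
    have : (m:ℝ) ≤ (n:ℝ) + 1 := by exact_mod_cast hmn
    linarith
  exact h1.trans (a_ge hpos hsummable hsum hκ hκpos m hm)

lemma delta_div (hpos : ∀ n ≥ 1, 0 < a n) (hsummable : Summable (fun n => a (n + 1)))
    (hsum : ∑' n, a (n + 1) = 1)
    (hκ : κ = ⨅ n : ℕ, (-(((n : ℝ) + 1) * Real.log 2) / Real.log (a (n + 1))))
    (hκpos : 0 < κ) {j n : ℕ} (hj : 1 ≤ j) (hjn : j ≤ n) :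
    delta κ n / a j ≤ delta κ (n - j) := by
  have haj := hpos j hj
  have hja : (2:ℝ) ^ (-(j:ℝ)/κ) ≤ a j := a_ge hpos hsummable hsum hκ hκpos j hj
  have hposj : (0:ℝ) < (2:ℝ) ^ (-(j:ℝ)/κ) := Real.rpow_pos_of_pos (by norm_num) _
  have h1 : delta κ n / a j ≤ delta κ n / (2:ℝ) ^ (-(j:ℝ)/κ) :=
    div_le_div_of_nonneg_left (delta_pos κ n).le hposj hja
  refine h1.trans ?_
  rw [delta, delta, ← Real.rpow_sub (by norm_num : (0:ℝ) < 2)]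
  apply Real.rpow_le_rpow_of_exponent_le (by norm_num)
  have hc : ((n - j : ℕ) : ℝ) = (n:ℝ) - (j:ℝ) := by
    rw [Nat.cast_sub hjn]
  rw [hc]
  rw [div_sub_div_same]
  rw [div_le_div_iff_of_pos_right hκpos]
  ring_nf
  exact le_rfl

end F
section G
variable {a t : ℕ → ℝ} {L θ : ℝ → ℝ} {κ : ℝ}
variable (hpos : ∀ n ≥ 1, 0 < a n) (hsummable : Summable (fun n => a (n + 1)))
    (hsum : ∑' n, a (n + 1) = 1) (ht : ∀ n, t n = ∑' k, a (n + k))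
    (hL : ∀ n ≥ 1, ∀ y ∈ Set.Ioc (t (n + 1)) (t n), L y = (t n - y) / a n)
    (hθ0 : θ 0 = 0)
    (hθinf : ∀ x ∈ Set.Ioc (0 : ℝ) 1, ∀ ℓ : ℕ → ℕ,
      (∀ j, 1 ≤ ℓ j ∧ L^[j] x ∈ Set.Ioc (t (ℓ j + 1)) (t (ℓ j))) →
      θ x = -2 * ∑' k : ℕ, (-1 : ℝ) ^ (k + 1) *
        ((2 : ℝ)⁻¹) ^ (∑ i ∈ Finset.range (k + 1), ℓ i))
    (hθfin : ∀ x ∈ Set.Ioc (0 : ℝ) 1, ∀ m : ℕ, ∀ ℓ : ℕ → ℕ,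
      (∀ j < m, 1 ≤ ℓ j ∧ L^[j] x ∈ Set.Ioc (t (ℓ j + 1)) (t (ℓ j))) →
      L^[m] x = 0 →
      θ x = -2 * ∑ k ∈ Finset.range m, (-1 : ℝ) ^ (k + 1) *
        ((2 : ℝ)⁻¹) ^ (∑ i ∈ Finset.range (k + 1), ℓ i))
    (hκ : κ = ⨅ n : ℕ, (-(((n : ℝ) + 1) * Real.log 2) / Real.log (a (n + 1))))
    (hκpos : 0 < κ)

include hpos hsummable hsum ht hL hθ0 hθinf hθfin hκ hκpos

/-- Lemma C : near 1, θ is close to 1. -/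
lemma lemC : ∀ m : ℕ, ∀ z : ℝ, 0 ≤ z → z ≤ 1 → 1 - z ≤ delta κ m →
    1 - θ z ≤ ((2:ℝ)⁻¹) ^ m := by
  intro m z h0 h1 hdz
  match m with
  | 0 =>
    have := theta_nonneg hpos hsummable hsum ht hL hθ0 hθinf hθfin z h0 h1
    simpa using by linarith
  | (m' + 1) =>
    have ht1 : t 1 = 1 := t_one hsum ht
    have ht2 : t 2 = 1 - a 1 := by
      have := t_succ hsummable ht 1 le_rfl
      rw [ht1] at this
      linarith
    have hδa : delta κ (m' + 1) < a 1 := by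
      have h1' : delta κ (m' + 1) < (2:ℝ) ^ (-(1:ℝ)/κ) := by
        apply Real.rpow_lt_rpow_of_exponent_lt (by norm_num)
        rw [div_lt_div_iff_of_pos_right hκpos]
        push_cast
        linarith
      have h2' := a_ge hpos hsummable hsum hκ hκpos 1 le_rfl
      calc delta κ (m' + 1) < (2:ℝ) ^ (-(1:ℝ)/κ) := h1'
        _ ≤ a 1 := by simpa using h2'
    have hz2 : t 2 < z := by rw [ht2]; linarith
    have hz1 : z ≤ t 1 := by rw [ht1]; exact h1
    have hrec := theta_rec hpos hsummable hsum ht hL hθ0 hθinf hθfin le_rfl hz2 hz1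
    have hLm := L_map hpos hsummable ht hL le_rfl hz2 hz1
    have ha1 := hpos 1 le_rfl
    have hLz : L z ≤ delta κ m' := by
      have h3 : L z = (1 - z) / a 1 := by rw [hLm.1, ht1]
      have h4 : (1 - z) / a 1 ≤ delta κ (m'+1) / a 1 :=
        (div_le_div_iff_of_pos_right ha1).2 hdz
      have h5 : delta κ (m'+1) / a 1 ≤ delta κ m' := by
        have := delta_div hpos hsummable hsum hκ hκpos (le_refl 1) (by omega : 1 ≤ m' + 1)
        simpa using this
      rw [h3]
      exact h4.trans h5
    have hLt : L z ≤ t (m' + 1) := by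
      refine hLz.trans ?_
      refine (delta_le_a hpos hsummable hsum hκ hκpos (by omega : 1 ≤ m' + 1)
        (by omega : m' + 1 ≤ m' + 1) ).trans ?_
      exact t_ge_a hpos hsummable ht (m' + 1) (by omega)
    have hB := lemB hpos hsummable hsum ht hL hθ0 hθinf hθfin m' (L z) hLm.2.1 hLt
    rw [hrec]
    have : ((2:ℝ)⁻¹) ^ (m' + 1) = ((2:ℝ)⁻¹) ^ m' / 2 := by
      rw [pow_succ]; ring
    rw [this]
    have hexp : (2:ℝ)⁻¹ ^ 1 * (2 - θ (L z)) = 1 - θ (L z) / 2 := by norm_num; ring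
    rw [hexp]
    linarith
end G
section H
variable {a t : ℕ → ℝ} {L θ : ℝ → ℝ} {κ : ℝ}
variable (hpos : ∀ n ≥ 1, 0 < a n) (hsummable : Summable (fun n => a (n + 1)))
    (hsum : ∑' n, a (n + 1) = 1) (ht : ∀ n, t n = ∑' k, a (n + k))
    (hL : ∀ n ≥ 1, ∀ y ∈ Set.Ioc (t (n + 1)) (t n), L y = (t n - y) / a n)
    (hθ0 : θ 0 = 0)
    (hθinf : ∀ x ∈ Set.Ioc (0 : ℝ) 1, ∀ ℓ : ℕ → ℕ,
      (∀ j, 1 ≤ ℓ j ∧ L^[j] x ∈ Set.Ioc (t (ℓ j + 1)) (t (ℓ j))) →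
      θ x = -2 * ∑' k : ℕ, (-1 : ℝ) ^ (k + 1) *
        ((2 : ℝ)⁻¹) ^ (∑ i ∈ Finset.range (k + 1), ℓ i))
    (hθfin : ∀ x ∈ Set.Ioc (0 : ℝ) 1, ∀ m : ℕ, ∀ ℓ : ℕ → ℕ,
      (∀ j < m, 1 ≤ ℓ j ∧ L^[j] x ∈ Set.Ioc (t (ℓ j + 1)) (t (ℓ j))) →
      L^[m] x = 0 →
      θ x = -2 * ∑ k ∈ Finset.range m, (-1 : ℝ) ^ (k + 1) *
        ((2 : ℝ)⁻¹) ^ (∑ i ∈ Finset.range (k + 1), ℓ i))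
    (hκ : κ = ⨅ n : ℕ, (-(((n : ℝ) + 1) * Real.log 2) / Real.log (a (n + 1))))
    (hκpos : 0 < κ)

include hpos hsummable hsum ht hL hθ0 hθinf hθfin hκ hκpos

/-- Main modulus-of-continuity lemma. -/
lemma lemA : ∀ n : ℕ, ∀ x y : ℝ, 0 ≤ x → x ≤ y → y ≤ 1 → y - x ≤ delta κ n →
    |θ x - θ y| ≤ 2 * ((2:ℝ)⁻¹) ^ n := by
  intro n
  induction n using Nat.strong_induction_on with
  | _ n ih =>
  intro x y hx0 hxy hy1 hd
  have hy0 : 0 ≤ y := hx0.trans hxy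
  rcases eq_or_lt_of_le hy0 with hy | hy0'
  · -- y = 0, hence x = 0
    have hx : x = 0 := by linarith
    rw [hx, ← hy, sub_self, abs_zero]
    positivity
  obtain ⟨j, hj, hj1, hj2⟩ := digit_exists hpos hsummable hsum ht y hy0' hy1
  by_cases hcase : n + 1 ≤ j
  · -- both points below t (n+1)
    have hyt : y ≤ t (n + 1) :=
      hj2.trans (t_anti hpos hsummable ht (n+1) j (by omega) hcase)
    have hxt : x ≤ t (n + 1) := hxy.trans hyt
    have hbx := lemB hpos hsummable hsum ht hL hθ0 hθinf hθfin n x hx0 hxt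
    have hby := lemB hpos hsummable hsum ht hL hθ0 hθinf hθfin n y hy0 hyt
    have hnx := theta_nonneg hpos hsummable hsum ht hL hθ0 hθinf hθfin x hx0 (by linarith)
    have hny := theta_nonneg hpos hsummable hsum ht hL hθ0 hθinf hθfin y hy0 hy1
    rw [abs_sub_le_iff]
    constructor <;> linarith [pow_pos (by norm_num : (0:ℝ) < 2⁻¹) n]
  · push_neg at hcase
    have hjn : j ≤ n := by omega
    have hx1 : x ≤ 1 := hxy.trans hy1
    by_cases hxin : t (j + 1) < x
    · -- same fundamental interval
      have hx2 : x ≤ t j := hxy.trans hj2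
      have hrecx := theta_rec hpos hsummable hsum ht hL hθ0 hθinf hθfin hj hxin hx2
      have hrecy := theta_rec hpos hsummable hsum ht hL hθ0 hθinf hθfin hj hj1 hj2
      have hLmx := L_map hpos hsummable ht hL hj hxin hx2
      have hLmy := L_map hpos hsummable ht hL hj hj1 hj2
      have haj := hpos j hj
      have hdiff : L x - L y = (y - x) / a j := by
        rw [hLmx.1, hLmy.1]
        field_simp
        ring
      have hLd : L x - L y ≤ delta κ (n - j) := by
        rw [hdiff]
        calc (y - x) / a j ≤ delta κ n / a j := (div_le_div_iff_of_pos_right haj).2 hd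
          _ ≤ delta κ (n - j) := delta_div hpos hsummable hsum hκ hκpos hj hjn
      have hLyx : L y ≤ L x := by
        have : 0 ≤ (y - x) / a j := div_nonneg (by linarith) haj.le
        linarith [hdiff, this]
      have hih := ih (n - j) (by omega) (L y) (L x) hLmy.2.1 hLyx hLmx.2.2.1.le hLd
      rw [hrecx, hrecy]
      have heq : (2:ℝ)⁻¹ ^ j * (2 - θ (L x)) - (2:ℝ)⁻¹ ^ j * (2 - θ (L y))
          = (2:ℝ)⁻¹ ^ j * (θ (L y) - θ (L x)) := by ring
      rw [heq, abs_mul, abs_of_pos (pow_pos (by norm_num : (0:ℝ) < 2⁻¹) j)]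
      calc (2:ℝ)⁻¹ ^ j * |θ (L y) - θ (L x)| ≤ (2:ℝ)⁻¹ ^ j * (2 * (2:ℝ)⁻¹ ^ (n - j)) := by
            apply mul_le_mul_of_nonneg_left hih (by positivity)
        _ = 2 * ((2:ℝ)⁻¹ ^ j * (2:ℝ)⁻¹ ^ (n - j)) := by ring
        _ = 2 * (2:ℝ)⁻¹ ^ n := by rw [← pow_add, Nat.add_sub_cancel' hjn]
    · -- straddling t (j+1)
      push_neg at hxin
      set p := t (j + 1) with hpdef
      have hpy : p < y := hj1
      have hpx : x ≤ p := hxin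
      have hpyd : y - p ≤ delta κ n := by linarith
      have hpxd : p - x ≤ delta κ n := by linarith
      have hθp : θ p = (2:ℝ)⁻¹ ^ j := by
        have := theta_t hpos hsummable hsum ht hL hθ0 hθinf hθfin (by omega : 1 ≤ j + 1)
        rw [hpdef, this, pow_succ]
        ring
      -- part 1 : |θ y - θ p| ≤ (2⁻¹)^n
      have hpart1 : |θ y - θ p| ≤ (2:ℝ)⁻¹ ^ n := by
        have hrecy := theta_rec hpos hsummable hsum ht hL hθ0 hθinf hθfin hj hj1 hj2
        have hLmy := L_map hpos hsummable ht hL hj hj1 hj2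
        have haj := hpos j hj
        have h1my : 1 - L y = (y - p) / a j := by
          have := hLmy.2.2.2.2
          field_simp at this ⊢
          linarith
        have hLyd : 1 - L y ≤ delta κ (n - j) := by
          rw [h1my]
          calc (y - p) / a j ≤ delta κ n / a j := (div_le_div_iff_of_pos_right haj).2 hpyd
            _ ≤ delta κ (n - j) := delta_div hpos hsummable hsum hκ hκpos hj hjn
        have hC := lemC hpos hsummable hsum ht hL hθ0 hθinf hθfin hκ hκpos (n - j) (L y)
          hLmy.2.1 hLmy.2.2.1.le hLyd
        rw [hrecy, hθp]
        have heq : (2:ℝ)⁻¹ ^ j * (2 - θ (L y)) - (2:ℝ)⁻¹ ^ j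
            = (2:ℝ)⁻¹ ^ j * (1 - θ (L y)) := by ring
        rw [heq, abs_mul, abs_of_pos (pow_pos (by norm_num : (0:ℝ) < 2⁻¹) j)]
        have hnnC : 0 ≤ 1 - θ (L y) :=
          sub_nonneg.2 (theta_le_one hpos hsummable hsum ht hL hθ0 hθinf hθfin (L y)
            hLmy.2.1 hLmy.2.2.1.le)
        rw [abs_of_nonneg hnnC]
        calc (2:ℝ)⁻¹ ^ j * (1 - θ (L y)) ≤ (2:ℝ)⁻¹ ^ j * (2:ℝ)⁻¹ ^ (n - j) :=
              mul_le_mul_of_nonneg_left hC (by positivity)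
          _ = (2:ℝ)⁻¹ ^ n := by rw [← pow_add, Nat.add_sub_cancel' hjn]
      -- part 2 : |θ p - θ x| ≤ (2⁻¹)^n
      have hpart2 : |θ p - θ x| ≤ (2:ℝ)⁻¹ ^ n := by
        rcases eq_or_lt_of_le hx0 with hx | hx0'
        · -- x = 0
          rw [← hx, hθ0, sub_zero, hθp]
          have hpd : p ≤ delta κ n := by linarith
          have hjge : n ≤ j := by
            have hap : (2:ℝ) ^ (-((j:ℝ)+1)/κ) ≤ p := by
              have h1 := a_ge hpos hsummable hsum hκ hκpos (j+1) (by omega)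
              have h2 := t_ge_a hpos hsummable ht (j+1) (by omega)
              have hc : -(((j+1:ℕ)):ℝ)/κ = -((j:ℝ)+1)/κ := by push_cast; ring
              rw [hc] at h1
              exact h1.trans h2
            have : (2:ℝ) ^ (-((j:ℝ)+1)/κ) ≤ (2:ℝ) ^ (-((n:ℝ)+1)/κ) := by
              calc (2:ℝ) ^ (-((j:ℝ)+1)/κ) ≤ p := hap
                _ ≤ delta κ n := hpd
            have h4 := (Real.rpow_le_rpow_left_iff (by norm_num : (1:ℝ) < 2)).1 this
            rw [div_le_div_iff_of_pos_right hκpos] at h4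
            have : (n:ℝ) ≤ (j:ℝ) := by linarith
            exact_mod_cast this
          have : j = n := by omega
          rw [this, abs_of_pos (pow_pos (by norm_num : (0:ℝ) < 2⁻¹) n)]
        · obtain ⟨i, hi, hi1, hi2⟩ := digit_exists hpos hsummable hsum ht x hx0'
            (hxy.trans hy1)
          have hij : j + 1 ≤ i := by
            by_contra hcon
            push_neg at hcon
            have : t (j + 1) ≤ t (i + 1) :=
              t_anti hpos hsummable ht (i+1) (j+1) (by omega) (by omega)
            rw [← hpdef] at this
            linarith
          rcases eq_or_lt_of_le hij with hieq | higt
          · -- i = j + 1 : x in the adjacent interval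
            have hieq' : i = j + 1 := hieq.symm
            subst hieq'
            have hrecx := theta_rec hpos hsummable hsum ht hL hθ0 hθinf hθfin hi hi1 hi2
            have hLmx := L_map hpos hsummable ht hL hi hi1 hi2
            rcases eq_or_lt_of_le hjn with hjeq | hjlt
            · -- j = n
              subst hjeq
              have hbx := lemB hpos hsummable hsum ht hL hθ0 hθinf hθfin j x hx0 hi2
              have hnx := theta_nonneg hpos hsummable hsum ht hL hθ0 hθinf hθfin x hx0
                (hxy.trans hy1)
              rw [hθp, abs_sub_le_iff]
              constructor <;> linarith [pow_pos (by norm_num : (0:ℝ) < 2⁻¹) j]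
            · -- j < n
              have haj1 := hpos (j+1) (by omega)
              have hLxd : L x ≤ delta κ (n - (j + 1)) := by
                have h3 : L x = (p - x) / a (j + 1) := by rw [hLmx.1]
                rw [h3]
                calc (p - x) / a (j+1) ≤ delta κ n / a (j+1) :=
                      (div_le_div_iff_of_pos_right haj1).2 hpxd
                  _ ≤ delta κ (n - (j+1)) :=
                      delta_div hpos hsummable hsum hκ hκpos (by omega) (by omega)
              have hLxt : L x ≤ t (n - (j + 1) + 1) := by
                refine hLxd.trans ?_
                refine (delta_le_a hpos hsummable hsum hκ hκpos
                  (by omega : 1 ≤ n - (j+1) + 1) (by omega)).trans ?_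
                exact t_ge_a hpos hsummable ht _ (by omega)
              have hB := lemB hpos hsummable hsum ht hL hθ0 hθinf hθfin (n - (j+1)) (L x)
                hLmx.2.1 hLxt
              rw [hrecx, hθp]
              have heq : (2:ℝ)⁻¹ ^ j - (2:ℝ)⁻¹ ^ (j+1) * (2 - θ (L x))
                  = (2:ℝ)⁻¹ ^ (j+1) * θ (L x) := by rw [pow_succ]; ring
              rw [heq, abs_mul, abs_of_pos (pow_pos (by norm_num : (0:ℝ) < 2⁻¹) (j+1))]
              have hnnB : 0 ≤ θ (L x) :=
                theta_nonneg hpos hsummable hsum ht hL hθ0 hθinf hθfin (L x)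
                  hLmx.2.1 hLmx.2.2.1.le
              rw [abs_of_nonneg hnnB]
              calc (2:ℝ)⁻¹ ^ (j+1) * θ (L x) ≤ (2:ℝ)⁻¹ ^ (j+1) * (2:ℝ)⁻¹ ^ (n - (j+1)) :=
                    mul_le_mul_of_nonneg_left hB (by positivity)
                _ = (2:ℝ)⁻¹ ^ n := by
                    rw [← pow_add, Nat.add_sub_cancel' (by omega : j + 1 ≤ n)]
          · -- i ≥ j + 2 : gap forces both points tiny
            have him1 : 1 ≤ i - 1 := by omega
            have hts := t_succ hsummable ht (i-1) him1
            have hidx : i - 1 + 1 = i := by omega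
            rw [hidx] at hts
            have hgap : a (i-1) ≤ p - x := by
              have h5 : t i ≤ t (i - 1) - a (i-1) := by linarith
              have h6 : t (i-1) ≤ p := by
                rw [hpdef]
                exact t_anti hpos hsummable ht (j+1) (i-1) (by omega) (by omega)
              linarith [hi2]
            have hain : a (i-1) ≤ delta κ n := hgap.trans hpxd
            have hige : n + 2 ≤ i := by
              have hap : (2:ℝ) ^ (-((i:ℝ)-1)/κ) ≤ a (i-1) := by
                have h1 := a_ge hpos hsummable hsum hκ hκpos (i-1) him1
                have hc : -(((i-1:ℕ)):ℝ)/κ = -((i:ℝ)-1)/κ := by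
                  rw [Nat.cast_sub (by omega : 1 ≤ i)]
                  push_cast
                  ring
                rw [hc] at h1
                exact h1
              have h7 : (2:ℝ) ^ (-((i:ℝ)-1)/κ) ≤ (2:ℝ) ^ (-((n:ℝ)+1)/κ) :=
                hap.trans hain
              have h4 := (Real.rpow_le_rpow_left_iff (by norm_num : (1:ℝ) < 2)).1 h7
              rw [div_le_div_iff_of_pos_right hκpos] at h4
              have : (n:ℝ) + 2 ≤ (i:ℝ) := by linarith
              exact_mod_cast this
            have hxt : x ≤ t (n + 1) := by
              refine hi2.trans ?_
              exact t_anti hpos hsummable ht (n+1) i (by omega) (by omega)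
            have hpt : p ≤ t (n + 1) := by
              have h8 : x ≤ t (n + 2) := by
                refine hi2.trans ?_
                exact t_anti hpos hsummable ht (n+2) i (by omega) (by omega)
              have h9 : delta κ n ≤ a (n+1) :=
                delta_le_a hpos hsummable hsum hκ hκpos (by omega) (by omega)
              have h10 := t_succ hsummable ht (n+1) (by omega)
              linarith
            have hbx := lemB hpos hsummable hsum ht hL hθ0 hθinf hθfin n x hx0 hxt
            have hp0 : (0:ℝ) ≤ p :=
              (t_pos hpos hsummable ht (j+1) (by omega)).le
            have hbp := lemB hpos hsummable hsum ht hL hθ0 hθinf hθfin n p hp0 hpt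
            have hnx := theta_nonneg hpos hsummable hsum ht hL hθ0 hθinf hθfin x hx0
              (hxy.trans hy1)
            have hnp := theta_nonneg hpos hsummable hsum ht hL hθ0 hθinf hθfin p hp0
              (hpt.trans (t_le_one hpos hsummable hsum ht (n+1) (by omega)))
            rw [abs_sub_le_iff]
            constructor <;> linarith [pow_pos (by norm_num : (0:ℝ) < 2⁻¹) n]
      calc |θ x - θ y| ≤ |θ x - θ p| + |θ p - θ y| := abs_sub_le _ _ _
        _ ≤ (2:ℝ)⁻¹ ^ n + (2:ℝ)⁻¹ ^ n := by
            rw [abs_sub_comm (θ x) (θ p), abs_sub_comm (θ p) (θ y)]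
            exact add_le_add hpart2 hpart1
        _ = 2 * (2:ℝ)⁻¹ ^ n := by ring

end H
section I
variable {a t : ℕ → ℝ} {L θ : ℝ → ℝ} {κ : ℝ}
variable (hpos : ∀ n ≥ 1, 0 < a n) (hsummable : Summable (fun n => a (n + 1)))
    (hsum : ∑' n, a (n + 1) = 1) (ht : ∀ n, t n = ∑' k, a (n + k))
    (hL : ∀ n ≥ 1, ∀ y ∈ Set.Ioc (t (n + 1)) (t n), L y = (t n - y) / a n)
    (hθ0 : θ 0 = 0)
    (hθinf : ∀ x ∈ Set.Ioc (0 : ℝ) 1, ∀ ℓ : ℕ → ℕ,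
      (∀ j, 1 ≤ ℓ j ∧ L^[j] x ∈ Set.Ioc (t (ℓ j + 1)) (t (ℓ j))) →
      θ x = -2 * ∑' k : ℕ, (-1 : ℝ) ^ (k + 1) *
        ((2 : ℝ)⁻¹) ^ (∑ i ∈ Finset.range (k + 1), ℓ i))
    (hθfin : ∀ x ∈ Set.Ioc (0 : ℝ) 1, ∀ m : ℕ, ∀ ℓ : ℕ → ℕ,
      (∀ j < m, 1 ≤ ℓ j ∧ L^[j] x ∈ Set.Ioc (t (ℓ j + 1)) (t (ℓ j))) →
      L^[m] x = 0 →
      θ x = -2 * ∑ k ∈ Finset.range m, (-1 : ℝ) ^ (k + 1) *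
        ((2 : ℝ)⁻¹) ^ (∑ i ∈ Finset.range (k + 1), ℓ i))
    (hκ : κ = ⨅ n : ℕ, (-(((n : ℝ) + 1) * Real.log 2) / Real.log (a (n + 1))))
    (hκpos : 0 < κ)

lemma delta_rpow (hκpos : 0 < κ) (m : ℕ) : (delta κ m) ^ κ = ((2:ℝ)⁻¹) ^ (m + 1) := by
  have h1 : delta κ m ^ κ = (2:ℝ) ^ (-((m:ℝ)+1)) := by
    rw [delta, ← Real.rpow_mul (by norm_num : (0:ℝ) ≤ 2),
      div_mul_cancel₀ _ (ne_of_gt hκpos)]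
  have h2 : (2:ℝ) ^ (-((m:ℝ)+1)) = ((2:ℝ)⁻¹) ^ (m + 1 : ℕ) := by
    have hc : ((m:ℝ)+1) = ((m + 1 : ℕ) : ℝ) := by push_cast; ring
    rw [Real.rpow_neg (by norm_num : (0:ℝ) ≤ 2), hc, Real.rpow_natCast, ← inv_pow]
  rw [h1, h2]

include hpos hsummable hsum ht hL hθ0 hθinf hθfin hκ hκpos

lemma holder_le : ∀ x y : ℝ, 0 ≤ x → x ≤ y → y ≤ 1 →
    |θ x - θ y| ≤ 8 * (y - x) ^ κ := by
  intro x y hx0 hxy hy1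
  rcases eq_or_lt_of_le hxy with heq | hlt
  · subst heq
    rw [sub_self, sub_self, abs_zero, Real.zero_rpow (ne_of_gt hκpos)]
    norm_num
  have hd0 : 0 < y - x := by linarith
  have hθbd : |θ x - θ y| ≤ 1 := by
    have h1 := theta_nonneg hpos hsummable hsum ht hL hθ0 hθinf hθfin x hx0 (by linarith)
    have h2 := theta_nonneg hpos hsummable hsum ht hL hθ0 hθinf hθfin y (by linarith) hy1
    have h3 := theta_le_one hpos hsummable hsum ht hL hθ0 hθinf hθfin x hx0 (by linarith)
    have h4 := theta_le_one hpos hsummable hsum ht hL hθ0 hθinf hθfin y (by linarith) hy1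
    rw [abs_sub_le_iff]
    constructor <;> linarith
  by_cases hsmall : delta κ 0 < y - x
  · have h5 : (delta κ 0) ^ κ ≤ (y - x) ^ κ :=
      Real.rpow_le_rpow (delta_pos κ 0).le hsmall.le hκpos.le
    rw [delta_rpow hκpos 0] at h5
    have : (1:ℝ)/2 ≤ (y - x) ^ κ := by
      calc (1:ℝ)/2 = ((2:ℝ)⁻¹) ^ (0 + 1) := by norm_num
        _ ≤ (y - x) ^ κ := h5
    linarith
  · push_neg at hsmall
    have hSne : ∃ m : ℕ, delta κ m < y - x := by
      set q0 : ℝ := (2:ℝ) ^ (-(1:ℝ)/κ) with hq0def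
      have hq0pos : 0 < q0 := Real.rpow_pos_of_pos (by norm_num) _
      have hq0lt : q0 < 1 := by
        rw [hq0def]
        apply Real.rpow_lt_one_of_one_lt_of_neg (by norm_num)
        rw [neg_div]
        have : (0:ℝ) < 1/κ := by positivity
        linarith
      obtain ⟨m, hm⟩ := exists_pow_lt_of_lt_one hd0 hq0lt
      refine ⟨m, lt_of_le_of_lt ?_ hm⟩
      have heq : q0 ^ m = (2:ℝ) ^ (-(m:ℝ)/κ) := by
        rw [hq0def, ← Real.rpow_natCast ((2:ℝ) ^ (-(1:ℝ)/κ)) m,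
          ← Real.rpow_mul (by norm_num : (0:ℝ) ≤ 2)]
        congr 1
        ring
      rw [heq, delta]
      apply Real.rpow_le_rpow_of_exponent_le (by norm_num)
      rw [div_le_div_iff_of_pos_right hκpos]
      linarith
    classical
    set n0 := Nat.find hSne with hn0def
    have hn0 : delta κ n0 < y - x := Nat.find_spec hSne
    have hn0ge : 1 ≤ n0 := by
      by_contra hcon
      have h0 : n0 = 0 := by omega
      rw [h0] at hn0
      linarith
    obtain ⟨n, hn⟩ : ∃ n, n0 = n + 1 := ⟨n0 - 1, by omega⟩
    have hdn : y - x ≤ delta κ n := by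
      have := Nat.find_min hSne (m := n) (by omega)
      push_neg at this
      exact this
    have hA := lemA hpos hsummable hsum ht hL hθ0 hθinf hθfin hκ hκpos n x y hx0 hxy hy1 hdn
    have h6 : (delta κ n0) ^ κ ≤ (y - x) ^ κ :=
      Real.rpow_le_rpow (delta_pos κ n0).le hn0.le hκpos.le
    rw [delta_rpow hκpos n0, hn] at h6
    calc |θ x - θ y| ≤ 2 * ((2:ℝ)⁻¹) ^ n := hA
      _ = 8 * ((2:ℝ)⁻¹) ^ (n + 1 + 1) := by rw [pow_succ, pow_succ]; ring
      _ ≤ 8 * (y - x) ^ κ := by linarith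
end I
/-- Hölder continuity of the conjugacy map `θ_α` with exponent `κ₊ = inf_n κ(n)`,
`κ(n) = -n log 2 / log a_n`; if `κ₊ = 0` then `θ_α` is Hölder of no positive exponent. -/
theorem stmt12 (a t : ℕ → ℝ) (L θ : ℝ → ℝ) (κplus : ℝ)
    (hpos : ∀ n ≥ 1, 0 < a n)
    (hsummable : Summable (fun n => a (n + 1)))
    (hsum : ∑' n, a (n + 1) = 1)
    (ht : ∀ n, t n = ∑' k, a (n + k))
    (hL0 : L 0 = 0)
    (hL : ∀ n ≥ 1, ∀ y ∈ Set.Ioc (t (n + 1)) (t n), L y = (t n - y) / a n)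
    (hθ0 : θ 0 = 0)
    (hθinf : ∀ x ∈ Set.Ioc (0 : ℝ) 1, ∀ ℓ : ℕ → ℕ,
      (∀ j, 1 ≤ ℓ j ∧ L^[j] x ∈ Set.Ioc (t (ℓ j + 1)) (t (ℓ j))) →
      θ x = -2 * ∑' k : ℕ, (-1 : ℝ) ^ (k + 1) *
        ((2 : ℝ)⁻¹) ^ (∑ i ∈ Finset.range (k + 1), ℓ i))
    (hθfin : ∀ x ∈ Set.Ioc (0 : ℝ) 1, ∀ m : ℕ, ∀ ℓ : ℕ → ℕ,
      (∀ j < m, 1 ≤ ℓ j ∧ L^[j] x ∈ Set.Ioc (t (ℓ j + 1)) (t (ℓ j))) →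
      L^[m] x = 0 →
      θ x = -2 * ∑ k ∈ Finset.range m, (-1 : ℝ) ^ (k + 1) *
        ((2 : ℝ)⁻¹) ^ (∑ i ∈ Finset.range (k + 1), ℓ i))
    (hκ : κplus = ⨅ n : ℕ,
      (-(((n : ℝ) + 1) * Real.log 2) / Real.log (a (n + 1)))) :
    (0 < κplus → ∃ c > (0 : ℝ), ∀ x ∈ Set.Icc (0 : ℝ) 1, ∀ y ∈ Set.Icc (0 : ℝ) 1,
      |θ x - θ y| ≤ c * |x - y| ^ κplus) ∧
    (κplus = 0 → ∀ s : ℝ, 0 < s →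
      ¬ ∃ c > (0 : ℝ), ∀ x ∈ Set.Icc (0 : ℝ) 1, ∀ y ∈ Set.Icc (0 : ℝ) 1,
        |θ x - θ y| ≤ c * |x - y| ^ s) := by
  have hκ' : κplus = ⨅ n : ℕ, (-(((n : ℝ) + 1) * Real.log 2) / Real.log (a (n + 1))) := hκ
  constructor
  · -- Hölder continuity when κ₊ > 0
    intro hκpos
    refine ⟨8, by norm_num, ?_⟩
    intro x hx y hy
    rcases le_total x y with h | h
    · have hle := holder_le hpos hsummable hsum ht hL hθ0 hθinf hθfin hκ' hκpos x y hx.1 h hy.2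
      have habs : |x - y| = y - x := by rw [abs_sub_comm, abs_of_nonneg (by linarith)]
      rwa [habs]
    · have hle := holder_le hpos hsummable hsum ht hL hθ0 hθinf hθfin hκ' hκpos y x hy.1 h hx.2
      have habs : |x - y| = x - y := abs_of_nonneg (by linarith)
      rw [habs]
      rwa [abs_sub_comm] at hle
  · -- no Hölder continuity when κ₊ = 0
    intro hκ0 s hs
    rintro ⟨c, hc, hH⟩
    set C := max (Real.log c) 0 with hCdef
    have hlog2 : (0:ℝ) < Real.log 2 := Real.log_pos (by norm_num)
    set K := 1 + C / Real.log 2 with hKdef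
    have hC0 : (0:ℝ) ≤ C := le_max_right _ _
    have hK1 : (1:ℝ) ≤ K := by
      rw [hKdef]
      have : (0:ℝ) ≤ C / Real.log 2 := div_nonneg hC0 hlog2.le
      linarith
    have hKpos : (0:ℝ) < K := by linarith
    have key : ∀ n : ℕ, s / K ≤ -(((n:ℝ)+1) * Real.log 2) / Real.log (a (n+1)) := by
      intro n
      have ha1 := hpos (n+1) (by omega)
      have haL1 := a_lt_one hpos hsummable hsum (n+1) (by omega)
      have hLa : Real.log (a (n+1)) < 0 := Real.log_neg ha1 haL1
      have hx : t (n+2) ∈ Set.Icc (0:ℝ) 1 :=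
        ⟨(t_pos hpos hsummable ht (n+2) (by omega)).le,
         t_le_one hpos hsummable hsum ht (n+2) (by omega)⟩
      have hy : t (n+1) ∈ Set.Icc (0:ℝ) 1 :=
        ⟨(t_pos hpos hsummable ht (n+1) (by omega)).le,
         t_le_one hpos hsummable hsum ht (n+1) (by omega)⟩
      have hHn := hH (t (n+2)) hx (t (n+1)) hy
      have hθ1 := theta_t hpos hsummable hsum ht hL hθ0 hθinf hθfin (by omega : 1 ≤ n+2)
      have hθ2 := theta_t hpos hsummable hsum ht hL hθ0 hθinf hθfin (by omega : 1 ≤ n+1)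
      have hts := t_succ hsummable ht (n+1) (by omega)
      have hdiff : |θ (t (n+2)) - θ (t (n+1))| = ((2:ℝ)⁻¹) ^ (n+1) := by
        rw [hθ1, hθ2]
        have h7 : 2 * ((2:ℝ)⁻¹) ^ (n+2) - 2 * ((2:ℝ)⁻¹) ^ (n+1)
            = -(((2:ℝ)⁻¹) ^ (n+1)) := by
          rw [pow_succ ((2:ℝ)⁻¹) (n+1)]
          ring
        rw [h7, abs_neg, abs_of_nonneg (by positivity)]
      have hsub : |t (n+2) - t (n+1)| = a (n+1) := by
        have h8 : t (n+2) - t (n+1) = -(a (n+1)) := by linarith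
        rw [h8, abs_neg, abs_of_nonneg ha1.le]
      rw [hdiff, hsub] at hHn
      have hlhs : Real.log (((2:ℝ)⁻¹) ^ (n+1)) = -(((n:ℝ)+1) * Real.log 2) := by
        rw [Real.log_pow, Real.log_inv]
        push_cast
        ring
      have hrpos : (0:ℝ) < a (n+1) ^ s := Real.rpow_pos_of_pos ha1 _
      have hlog_le : Real.log (((2:ℝ)⁻¹) ^ (n+1)) ≤ Real.log (c * a (n+1) ^ s) :=
        Real.log_le_log (by positivity) hHn
      rw [hlhs, Real.log_mul (ne_of_gt hc) (ne_of_gt hrpos), Real.log_rpow ha1] at hlog_le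
      have hre : -((((n:ℝ)+1) * Real.log 2)) / Real.log (a (n+1))
          = (((n:ℝ)+1) * Real.log 2) / (-Real.log (a (n+1))) := by
        rw [neg_div, div_neg]
      rw [hre, div_le_div_iff₀ hKpos (by linarith : (0:ℝ) < -Real.log (a (n+1)))]
      have h8 : s * (-Real.log (a (n+1))) ≤ ((n:ℝ)+1) * Real.log 2 + C := by
        have h9 := le_max_left (Real.log c) 0
        nlinarith [hlog_le]
      have h9 : ((n:ℝ)+1) * Real.log 2 + C ≤ (((n:ℝ)+1) * Real.log 2) * K := by
        rw [hKdef]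
        have hid : (((n:ℝ)+1) * Real.log 2) * (C / Real.log 2) = ((n:ℝ)+1) * C := by
          field_simp
        have hn0 : (0:ℝ) ≤ (n:ℝ) := Nat.cast_nonneg n
        nlinarith
      linarith
    have hinf := le_ciInf key
    rw [← hκ', hκ0] at hinf
    have hpos' : (0:ℝ) < s / K := by positivity
    linarith
end
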